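/- arXiv:1911.00613 — 5 statements merged into one kernel-verified Lean document; each statement's English description precedes it below -/
import Mathlib

section
/- Let (𝒞,𝒞⊥) be a cotorsion pair in ℰ. Let p : A → B be an acyclic fibration with A, B ∈ 𝒞⊥, and let f : C → B be any morphism with C ∈ 𝒞⊥. Then the pullback A ×_B C (computed in the ambient abelian category 𝒜) is isomorphic to an object of 𝒞⊥, and the projection A ×_B C → C is an acyclic fibration. -/
open CategoryTheory CategoryTheory.Limits

universe v u

variable {𝒜 : Type u} [Category.{v} 𝒜] [Abelian 𝒜]

/-- `(f, g)` forms a short exact sequence `0 ⟶ X ⟶ Y ⟶ Z ⟶ 0` in the ambient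
abelian category `𝒜`. -/
def IsShortExactSeq {X Y Z : 𝒜} (f : X ⟶ Y) (g : Y ⟶ Z) : Prop :=
  ∃ w : f ≫ g = 0, (ShortComplex.mk f g w).ShortExact

/-- A class of objects is closed under isomorphisms. -/
def IsoClosed (P : 𝒜 → Prop) : Prop := ∀ ⦃X Y : 𝒜⦄, (X ≅ Y) → P X → P Y

/-- `Ext¹(X, Y) = 0` relative to the exact subcategory determined by `E`:
every short exact sequence `0 ⟶ Y ⟶ M ⟶ X ⟶ 0` in `E` splits. -/
def Ext1IsZero (E : 𝒜 → Prop) (X Y : 𝒜) : Prop :=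
  ∀ ⦃M : 𝒜⦄ (f : Y ⟶ M) (g : M ⟶ X), E M → IsShortExactSeq f g →
    ∃ r : M ⟶ Y, f ≫ r = 𝟙 Y

/-- `(C, I)` is a cotorsion pair in the exact subcategory of `𝒜` determined by
the class of objects `E`: the two classes are each other's orthogonal
complement with respect to `Ext¹`. -/
structure IsCotorsionPair (E C I : 𝒜 → Prop) : Prop where
  right_eq : ∀ Y, I Y ↔ (E Y ∧ ∀ ⦃X⦄, C X → Ext1IsZero E X Y)
  left_eq : ∀ X, C X ↔ (E X ∧ ∀ ⦃Y⦄, I Y → Ext1IsZero E X Y)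

/-- The cotorsion pair `(C, I)` in `E` is complete: every object of `E` admits
both kinds of approximation sequences. -/
def IsCompleteCP (E C I : 𝒜 → Prop) : Prop :=
  (∀ A, E A → ∃ (Y P : 𝒜) (f : A ⟶ Y) (g : Y ⟶ P),
      I Y ∧ C P ∧ IsShortExactSeq f g) ∧
  (∀ A, E A → ∃ (Y P : 𝒜) (f : Y ⟶ P) (g : P ⟶ A),
      I Y ∧ C P ∧ IsShortExactSeq f g)

/-- The cotorsion pair is hereditary: `C` is closed under kernels of
admissible epimorphisms in `E`. -/
def IsHereditaryCP (E C : 𝒜 → Prop) : Prop :=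
  ∀ ⦃X Y Z : 𝒜⦄ (f : X ⟶ Y) (g : Y ⟶ Z),
    IsShortExactSeq f g → E X → C Y → C Z → C X

/-- A cofibration: an admissible monomorphism between objects of `C` whose
cokernel lies in `C`. -/
def IsCofib (C : 𝒜 → Prop) {X Y : 𝒜} (f : X ⟶ Y) : Prop :=
  C X ∧ C Y ∧ ∃ (W : 𝒜) (g : Y ⟶ W), C W ∧ IsShortExactSeq f g

/-- An acyclic fibration: an admissible epimorphism in `E` whose kernel lies
in `I`. -/
def IsAcyclicFib (E I : 𝒜 → Prop) {Y Z : 𝒜} (g : Y ⟶ Z) : Prop :=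
  E Y ∧ E Z ∧ ∃ (K : 𝒜) (k : K ⟶ Y), I K ∧ IsShortExactSeq k g

/-- An acyclic cofibration: an admissible monomorphism between objects of `C`
whose cokernel lies in `C ∩ Z`. -/
def IsAcyclicCofib (C Zc : 𝒜 → Prop) {X Y : 𝒜} (f : X ⟶ Y) : Prop :=
  C X ∧ C Y ∧ ∃ (W : 𝒜) (g : Y ⟶ W), C W ∧ Zc W ∧ IsShortExactSeq f g

/-- A weak equivalence: a morphism between objects of `C` that factors as an
acyclic cofibration followed by an acyclic fibration. -/
def IsWeakEquiv (E C I Zc : 𝒜 → Prop) {X Y : 𝒜} (f : X ⟶ Y) : Prop :=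
  C X ∧ C Y ∧ ∃ (M : 𝒜) (i : X ⟶ M) (p : M ⟶ Y),
    IsAcyclicCofib C Zc i ∧ IsAcyclicFib E I p ∧ i ≫ p = f

/-- The standing setup: a complete hereditary cotorsion pair `(Cc, Ip)` in the
exact subcategory of `𝒜` determined by the isomorphism-closed,
extension-closed class `E`, together with an isomorphism-closed class
`Zc ⊆ E` with `Ip ⊆ Zc`, such that `Zc ∩ Cc` is closed under extensions and
under cokernels of admissible monomorphisms in `Cc`. -/
structure CotorsionSetup (E Cc Ip Zc : 𝒜 → Prop) : Prop where
  isoE : IsoClosed E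
  isoC : IsoClosed Cc
  isoI : IsoClosed Ip
  isoZ : IsoClosed Zc
  extClosedE : ∀ ⦃X Y Z : 𝒜⦄ (f : X ⟶ Y) (g : Y ⟶ Z),
    IsShortExactSeq f g → E X → E Z → E Y
  cp : IsCotorsionPair E Cc Ip
  complete : IsCompleteCP E Cc Ip
  hereditary : IsHereditaryCP E Cc
  zSubE : ∀ ⦃X⦄, Zc X → E X
  iSubZ : ∀ ⦃X⦄, Ip X → Zc X
  zcExtClosed : ∀ ⦃X Y Z : 𝒜⦄ (f : X ⟶ Y) (g : Y ⟶ Z), IsShortExactSeq f g →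
    Cc X → Cc Y → Cc Z → Zc X → Zc Z → Zc Y
  zcCokerClosed : ∀ ⦃X Y Z : 𝒜⦄ (f : X ⟶ Y) (g : Y ⟶ Z), IsShortExactSeq f g →
    Cc X → Cc Y → Cc Z → Zc X → Zc Y → Zc Z

section Auxiliary

open CategoryTheory.Abelian
open scoped Pseudoelement

/-- The pullback of a short exact sequence: if `0 ⟶ K ⟶ A ⟶ B ⟶ 0` is short
exact and `f : C₀ ⟶ B`, then `0 ⟶ K ⟶ A ×_B C₀ ⟶ C₀ ⟶ 0` is short exact. -/
lemma pullback_ses {A B C₀ K : 𝒜} (p : A ⟶ B) (f : C₀ ⟶ B) (k : K ⟶ A)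
    (hk : IsShortExactSeq k p) :
    ∃ k₀ : K ⟶ pullback p f, IsShortExactSeq k₀ (pullback.snd p f) := by
  obtain ⟨w, hse⟩ := hk
  haveI := hse.mono_f
  haveI := hse.epi_g
  haveI : Epi p := hse.epi_g
  haveI : Mono k := hse.mono_f
  have hkf : k ≫ p = (0 : K ⟶ C₀) ≫ f := by rw [w, zero_comp]
  have w₀ : pullback.lift k 0 hkf ≫ pullback.snd p f = 0 := pullback.lift_snd _ _ _
  haveI : Mono (pullback.lift k 0 hkf) := mono_of_mono_fac (pullback.lift_fst k 0 hkf)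
  have hlim : IsLimit (KernelFork.ofι (pullback.lift k 0 hkf) w₀) := by
    refine KernelFork.IsLimit.ofι' _ _ (fun {T} m hm => ?_)
    have hm' : (m ≫ pullback.fst p f) ≫ p = 0 := by
      rw [Category.assoc, pullback.condition, ← Category.assoc, hm, zero_comp]
    refine ⟨hse.exact.lift (m ≫ pullback.fst p f) hm', ?_⟩
    apply pullback.hom_ext
    · rw [Category.assoc, pullback.lift_fst]
      exact hse.exact.lift_f _ _
    · rw [Category.assoc, pullback.lift_snd, comp_zero, hm]
  exact ⟨pullback.lift k 0 hkf, w₀,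
    ShortComplex.ShortExact.mk' (ShortComplex.exact_of_f_is_kernel _ hlim)
      inferInstance inferInstance⟩

/-- The pushout of a short exact sequence: if `0 ⟶ P ⟶ M ⟶ X ⟶ 0` is short
exact and `s : P ⟶ C₀`, then `0 ⟶ C₀ ⟶ M ⊔_P C₀ ⟶ X ⟶ 0` is short exact. -/
lemma pushout_ses {P M C₀ X : 𝒜} (i : P ⟶ M) (s : P ⟶ C₀) (q : M ⟶ X)
    (hq : IsShortExactSeq i q) :
    ∃ q' : pushout i s ⟶ X, pushout.inl i s ≫ q' = q ∧
      IsShortExactSeq (pushout.inr i s) q' := by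
  obtain ⟨w, hse⟩ := hq
  haveI : Mono i := hse.mono_f
  haveI : Epi q := hse.epi_g
  have hw : i ≫ q = s ≫ (0 : C₀ ⟶ X) := by rw [w, comp_zero]
  have w' : pushout.inr i s ≫ pushout.desc q 0 hw = 0 := pushout.inr_desc _ _ _
  haveI : Epi (pushout.desc q 0 hw) := epi_of_epi_fac (pushout.inl_desc q 0 hw)
  have hcolim : IsColimit (CokernelCofork.ofπ (pushout.desc q 0 hw) w') := by
    refine CokernelCofork.IsColimit.ofπ' _ _ (fun {T} m hm => ?_)
    have hm' : i ≫ pushout.inl i s ≫ m = 0 := by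
      rw [← Category.assoc, pushout.condition, Category.assoc, hm, comp_zero]
    refine ⟨hse.exact.desc (pushout.inl i s ≫ m) hm', ?_⟩
    apply pushout.hom_ext
    · rw [← Category.assoc, pushout.inl_desc]
      exact hse.exact.g_desc _ _
    · rw [← Category.assoc, pushout.inr_desc, zero_comp, hm]
  exact ⟨pushout.desc q 0 hw, pushout.inl_desc _ _ _, w',
    ShortComplex.ShortExact.mk' (ShortComplex.exact_of_g_is_cokernel _ hcolim)
      inferInstance inferInstance⟩

/-- The right-hand orthogonality class of `Ext¹` is closed under extensions:
if `0 ⟶ K ⟶ P ⟶ C₀ ⟶ 0` is short exact with `Ext¹(X,K) = 0` and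
`Ext¹(X,C₀) = 0`, then `Ext¹(X,P) = 0`. -/
lemma ext1IsZero_of_extension (E : 𝒜 → Prop)
    (hEext : ∀ ⦃X Y Z : 𝒜⦄ (f : X ⟶ Y) (g : Y ⟶ Z),
      IsShortExactSeq f g → E X → E Z → E Y)
    {K P C₀ : 𝒜} (k : K ⟶ P) (s : P ⟶ C₀) (hks : IsShortExactSeq k s)
    {X : 𝒜} (hXK : Ext1IsZero E X K) (hXC : Ext1IsZero E X C₀)
    (hEK : E K) (hEC₀ : E C₀) (hEX : E X) : Ext1IsZero E X P := by
  intro M i q hEM hiq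
  obtain ⟨wks, hseks⟩ := hks
  haveI : Mono k := hseks.mono_f
  haveI : Epi s := hseks.epi_g
  obtain ⟨w, hse⟩ := hiq
  haveI : Mono i := hse.mono_f
  haveI : Epi q := hse.epi_g
  -- Step 1: push out the extension along `s` and split the result to obtain
  -- `t : M ⟶ C₀` extending `s`.
  obtain ⟨q', hinl, hsesN⟩ := pushout_ses i s q ⟨w, hse⟩
  have hEN : E (pushout i s) := hEext _ _ hsesN hEC₀ hEX
  obtain ⟨r₁, hr₁⟩ := hXC (pushout.inr i s) q' hEN hsesN
  have hit : i ≫ (pushout.inl i s ≫ r₁) = s := by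
    rw [← Category.assoc, pushout.condition, Category.assoc, hr₁, Category.comp_id]
  set t : M ⟶ C₀ := pushout.inl i s ≫ r₁ with ht
  haveI : Epi t := epi_of_epi_fac hit
  -- Step 2: the kernel `M₀` of `t` is an extension of `X` by `K`.
  have hki : (k ≫ i) ≫ t = 0 := by rw [Category.assoc, hit, wks]
  have w₀ : kernel.lift t (k ≫ i) hki ≫ kernel.ι t ≫ q = 0 := by
    rw [← Category.assoc, kernel.lift_ι, Category.assoc, w, comp_zero]
  haveI : Mono (k ≫ i) := mono_comp _ _
  haveI : Mono (kernel.lift t (k ≫ i) hki) :=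
    mono_of_mono_fac (kernel.lift_ι t (k ≫ i) hki)
  -- exactness of `K ⟶ M₀ ⟶ X`
  have hlim : IsLimit (KernelFork.ofι (kernel.lift t (k ≫ i) hki) w₀) := by
    refine KernelFork.IsLimit.ofι' _ _ (fun {T} m hm => ?_)
    rw [← Category.assoc] at hm
    have hvi : hse.exact.lift (m ≫ kernel.ι t) hm ≫ i = m ≫ kernel.ι t :=
      hse.exact.lift_f _ _
    have hvs : hse.exact.lift (m ≫ kernel.ι t) hm ≫ s = 0 := by
      rw [← hit, ← Category.assoc, hvi, Category.assoc, kernel.condition, comp_zero]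
    refine ⟨hseks.exact.lift _ hvs, ?_⟩
    have hwk : hseks.exact.lift _ hvs ≫ k = hse.exact.lift (m ≫ kernel.ι t) hm :=
      hseks.exact.lift_f _ _
    rw [← cancel_mono (kernel.ι t), Category.assoc, kernel.lift_ι, ← Category.assoc,
      hwk, hvi]
  have hexact : (ShortComplex.mk _ _ w₀).Exact :=
    ShortComplex.exact_of_f_is_kernel _ hlim
  -- `q₀ = kernel.ι t ≫ q` is epi, by a pseudoelement chase
  haveI hepi : Epi (kernel.ι t ≫ q) := by
    apply Pseudoelement.epi_of_pseudo_surjective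
    intro x
    obtain ⟨m, hm⟩ := Pseudoelement.pseudo_surjective_of_epi q x
    obtain ⟨p', hp'⟩ := Pseudoelement.pseudo_surjective_of_epi s (t m)
    have htip : t m = t (i p') := by
      rw [← Pseudoelement.comp_apply, hit, hp']
    obtain ⟨z, hz0, hz⟩ := Pseudoelement.sub_of_eq_image t m (i p') htip
    have hqip : q (i p') = 0 := by
      rw [← Pseudoelement.comp_apply, w, Pseudoelement.zero_apply]
    have hqz : q z = q m := hz _ q hqip
    have hκexact : (ShortComplex.mk (kernel.ι t) t (kernel.condition t)).Exact :=
      ShortComplex.exact_of_f_is_kernel _ (kernelIsKernel t)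
    obtain ⟨z', hz'⟩ := Pseudoelement.pseudo_exact_of_exact hκexact z hz0
    refine ⟨z', ?_⟩
    rw [Pseudoelement.comp_apply, hz', hqz, hm]
  have hsesM₀ : IsShortExactSeq (kernel.lift t (k ≫ i) hki) (kernel.ι t ≫ q) :=
    ⟨w₀, ShortComplex.ShortExact.mk' hexact inferInstance inferInstance⟩
  have hEM₀ : E (kernel t) := hEext _ _ hsesM₀ hEK hEX
  -- Step 3: split `K ⟶ M₀ ⟶ X` using `Ext¹(X,K) = 0`, getting a section of
  -- `kernel.ι t ≫ q`, hence a section of `q`, hence a retraction of `i`.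
  obtain ⟨ρ, hρ⟩ := hXK (kernel.lift t (k ≫ i) hki) (kernel.ι t ≫ q) hEM₀ hsesM₀
  let split₀ := ShortComplex.Splitting.ofExactOfRetraction
    (ShortComplex.mk _ _ w₀) hexact ρ hρ inferInstance
  have hσ : split₀.s ≫ (kernel.ι t ≫ q) = 𝟙 X := split₀.s_g
  have hτ : (split₀.s ≫ kernel.ι t) ≫ q = 𝟙 X := by rw [Category.assoc]; exact hσ
  let split := ShortComplex.Splitting.ofExactOfSection
    (ShortComplex.mk i q w) hse.exact (split₀.s ≫ kernel.ι t) hτ inferInstance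
  exact ⟨split.r, split.f_r⟩

end Auxiliary

/-- Let `(Cc, Ip)` be a cotorsion pair in `E`.  Let
`p : A ⟶ B` be an acyclic fibration with `A, B ∈ Ip` and let `f : C₀ ⟶ B` be
any morphism with `C₀ ∈ Ip`.  Then the pullback `A ×_B C₀` (computed in the
ambient abelian category `𝒜`) lies in `Ip` (up to isomorphism), and the
projection `A ×_B C₀ ⟶ C₀` is an acyclic fibration. -/
theorem cotorsion_pullback_acyclicFib
    (E Cc Ip : 𝒜 → Prop) (hCP : IsCotorsionPair E Cc Ip)
    (hEiso : IsoClosed E) (hIiso : IsoClosed Ip)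
    (hEext : ∀ ⦃X Y Z : 𝒜⦄ (f : X ⟶ Y) (g : Y ⟶ Z),
      IsShortExactSeq f g → E X → E Z → E Y)
    {A B C₀ : 𝒜} (p : A ⟶ B) (hp : IsAcyclicFib E Ip p)
    (hA : Ip A) (hB : Ip B) (f : C₀ ⟶ B) (hC₀ : Ip C₀) :
    Ip (pullback p f) ∧ IsAcyclicFib E Ip (pullback.snd p f) := by
  obtain ⟨hEA, hEB, K, k, hIK, hkp⟩ := hp
  have hEK : E K := ((hCP.right_eq K).mp hIK).1
  have hEC₀ : E C₀ := ((hCP.right_eq C₀).mp hC₀).1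
  obtain ⟨k₀, hses⟩ := pullback_ses p f k hkp
  have hEP : E (pullback p f) := hEext _ _ hses hEK hEC₀
  have hIpP : Ip (pullback p f) := by
    refine (hCP.right_eq _).mpr ⟨hEP, fun X hX => ?_⟩
    have hEX : E X := ((hCP.left_eq X).mp hX).1
    exact ext1IsZero_of_extension E hEext k₀ (pullback.snd p f) hses
      (((hCP.right_eq K).mp hIK).2 hX) (((hCP.right_eq C₀).mp hC₀).2 hX) hEK hEC₀ hEX
  exact ⟨hIpP, hEP, hEC₀, K, k₀, hIK, hses⟩
end

section
/- Consider a commutative diagram in 𝒞 with rows C ←j– A –i→ B and C′ ←j′– A′ –i′→ B′ and vertical maps γ : C → C′, α : A → A′, β : B → B′, where i and i′ are cofibrations, α, β, γ are acyclic cofibrations, and the induced map cok α → cok β on cokernels is a cofibration. Then the induced map on pushouts φ : B +_A C → B′ +_{A′} C′ is an acyclic cofibration. -/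
open CategoryTheory CategoryTheory.Limits

universe v u

variable {𝒜 : Type u} [Category.{v} 𝒜] [Abelian 𝒜]

namespace IsShortExactSeq

variable {X Y Z : 𝒜} {f : X ⟶ Y} {g : Y ⟶ Z}

lemma zero (h : IsShortExactSeq f g) : f ≫ g = 0 := h.choose

lemma shortExact (h : IsShortExactSeq f g) :
    (ShortComplex.mk f g h.zero).ShortExact := h.choose_spec

lemma mono (h : IsShortExactSeq f g) : Mono f := h.shortExact.mono_f

lemma epi (h : IsShortExactSeq f g) : Epi g := h.shortExact.epi_g

noncomputable def fIsKernel (h : IsShortExactSeq f g) :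
    IsLimit (KernelFork.ofι f h.zero) := h.shortExact.fIsKernel

noncomputable def gIsCokernel (h : IsShortExactSeq f g) :
    IsColimit (CokernelCofork.ofπ g h.zero) := h.shortExact.gIsCokernel

lemma mk' (w : f ≫ g = 0) (hm : Mono f) (he : Epi g)
    (hex : (ShortComplex.mk f g w).Exact) : IsShortExactSeq f g :=
  ⟨w, ShortComplex.ShortExact.mk' hex hm he⟩

/-- a mono together with its cokernel projection is a short exact sequence -/
lemma of_mono (m : X ⟶ Y) [Mono m] : IsShortExactSeq m (cokernel.π m) :=
  mk' (cokernel.condition m) ‹_› inferInstance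
    (ShortComplex.exact_of_g_is_cokernel _ (cokernelIsCokernel m))

lemma cokernelIso (h : IsShortExactSeq f g) : Nonempty (cokernel f ≅ Z) :=
  ⟨IsColimit.coconePointUniqueUpToIso (cokernelIsCokernel f) h.gIsCokernel⟩

end IsShortExactSeq

/-- Pushout of a short exact sequence along an arbitrary map. -/
lemma pushout_ses_s2 {U V W T Q : 𝒜} {m : U ⟶ V} {p : V ⟶ W} (hmp : IsShortExactSeq m p)
    (k : U ⟶ T) {h : V ⟶ Q} {i : T ⟶ Q} (hpo : IsPushout m k h i) :
    ∃ q : Q ⟶ W, h ≫ q = p ∧ i ≫ q = 0 ∧ IsShortExactSeq i q := by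
  have : Mono m := hmp.mono
  have : Epi p := hmp.epi
  have hcond : m ≫ p = k ≫ (0 : T ⟶ W) := by simp [hmp.zero]
  refine ⟨hpo.desc p 0 hcond, hpo.inl_desc _ _ _, hpo.inr_desc _ _ _, ?_⟩
  set q : Q ⟶ W := hpo.desc p 0 hcond with hq
  have hq1 : h ≫ q = p := hpo.inl_desc _ _ _
  have hq2 : i ≫ q = 0 := hpo.inr_desc _ _ _
  have hmi : Mono i := by
    have := Abelian.mono_inr_of_isColimit m k hpo.isColimit
    exact this
  have hepi : Epi q := by
    have : Epi (h ≫ q) := by rw [hq1]; infer_instance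
    exact epi_of_epi h q
  refine IsShortExactSeq.mk' hq2 hmi hepi ?_
  refine ShortComplex.exact_of_g_is_cokernel _ (CokernelCofork.IsColimit.ofπ' q hq2 ?_)
  intro A t ht
  have hmt : m ≫ (h ≫ t) = 0 := by
    rw [← Category.assoc, hpo.w, Category.assoc, ht, comp_zero]
  obtain ⟨l, hl⟩ := CokernelCofork.IsColimit.desc' hmp.gIsCokernel (h ≫ t) hmt
  refine ⟨l, hpo.hom_ext ?_ ?_⟩
  · rw [← Category.assoc, hq1]; exact hl
  · rw [← Category.assoc, hq2, zero_comp, ht]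

/-- Noether-type lemma: short exact sequences compose. -/
lemma ses_comp {X Y Z W₁ W₂ : 𝒜} {f : X ⟶ Y} {c₁ : Y ⟶ W₁} {g : Y ⟶ Z} {c₂ : Z ⟶ W₂}
    (h₁ : IsShortExactSeq f c₁) (h₂ : IsShortExactSeq g c₂) :
    ∃ (W : 𝒜) (c : Z ⟶ W) (a : W₁ ⟶ W) (b : W ⟶ W₂),
      IsShortExactSeq (f ≫ g) c ∧ IsShortExactSeq a b := by
  have : Mono f := h₁.mono
  have : Mono g := h₂.mono
  have : Epi c₁ := h₁.epi
  have : Epi c₂ := h₂.epi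
  have : Mono (f ≫ g) := mono_comp f g
  set π := cokernel.π (f ≫ g) with hπdef
  have hses : IsShortExactSeq (f ≫ g) π := IsShortExactSeq.of_mono _
  have hga : f ≫ (g ≫ π) = 0 := by
    rw [← Category.assoc]; exact cokernel.condition _
  obtain ⟨a, ha⟩ := CokernelCofork.IsColimit.desc' h₁.gIsCokernel _ hga
  simp only [Cofork.π_ofπ] at ha
  replace ha : c₁ ≫ a = g ≫ π := ha
  have hgb : (f ≫ g) ≫ c₂ = 0 := by rw [Category.assoc, h₂.zero, comp_zero]
  set b : cokernel (f ≫ g) ⟶ W₂ := cokernel.desc _ c₂ hgb with hbdef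
  have hb : π ≫ b = c₂ := cokernel.π_desc _ _ _
  have hwab : a ≫ b = 0 := by
    rw [← cancel_epi c₁, ← Category.assoc, ha, Category.assoc, hb, h₂.zero, comp_zero]
  have hmb : Epi b := by
    have : Epi (π ≫ b) := by rw [hb]; infer_instance
    exact epi_of_epi π b
  have hma : Mono a := by
    rw [Preadditive.mono_iff_cancel_zero]
    intro A t ht
    obtain ⟨A', ρ, hρ, x, hx⟩ := surjective_up_to_refinements_of_epi c₁ t
    have hx0 : (x ≫ g) ≫ π = 0 := by
      rw [Category.assoc, ← ha, ← Category.assoc, ← hx, Category.assoc, ht, comp_zero]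
    obtain ⟨w, hw⟩ := KernelFork.IsLimit.lift' hses.fIsKernel (x ≫ g) hx0
    simp only [Fork.ι_ofι] at hw
    replace hw : w ≫ (f ≫ g) = x ≫ g := hw
    have hxf : x = w ≫ f := by
      rw [← cancel_mono g, Category.assoc]; exact hw.symm
    have : ρ ≫ t = 0 := by
      rw [hx, hxf, Category.assoc, h₁.zero, comp_zero]
    rw [← cancel_epi ρ, this, comp_zero]
  refine ⟨cokernel (f ≫ g), π, a, b, hses, IsShortExactSeq.mk' hwab hma hmb ?_⟩
  rw [ShortComplex.exact_iff_exact_up_to_refinements]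
  intro A x hx
  replace hx : x ≫ b = 0 := hx
  obtain ⟨A₁, ρ, hρ, m, hm⟩ := surjective_up_to_refinements_of_epi π x
  have hmc : m ≫ c₂ = 0 := by
    rw [← hb, ← Category.assoc, ← hm, Category.assoc, hx, comp_zero]
  obtain ⟨A₂, ρ₂, hρ₂, n, hn⟩ := h₂.shortExact.exact.exact_up_to_refinements m hmc
  replace hn : ρ₂ ≫ m = n ≫ g := hn
  refine ⟨A₂, ρ₂ ≫ ρ, epi_comp _ _, n ≫ c₁, ?_⟩
  show (ρ₂ ≫ ρ) ≫ x = (n ≫ c₁) ≫ a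
  calc (ρ₂ ≫ ρ) ≫ x = ρ₂ ≫ (m ≫ π) := by rw [Category.assoc, hm]
    _ = (ρ₂ ≫ m) ≫ π := by rw [Category.assoc]
    _ = n ≫ (g ≫ π) := by rw [hn, Category.assoc]
    _ = n ≫ (c₁ ≫ a) := by rw [ha]
    _ = (n ≫ c₁) ≫ a := by rw [Category.assoc]

/-- If `θ` lies over a common subobject with matching cokernel comparison which is itself
an admissible mono, then `θ` is an admissible mono. -/
lemma ses_left {B G B' W₁ W₂ W₃ : 𝒜} {m₁ : B ⟶ G} {c₁ : G ⟶ W₁} {m₂ : B ⟶ B'} {c₂ : B' ⟶ W₂}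
    {θ : G ⟶ B'} {e : W₁ ⟶ W₂} {c₃ : W₂ ⟶ W₃}
    (h₁ : IsShortExactSeq m₁ c₁) (h₂ : IsShortExactSeq m₂ c₂) (h₃ : IsShortExactSeq e c₃)
    (hθ : m₁ ≫ θ = m₂) (he : c₁ ≫ e = θ ≫ c₂) :
    IsShortExactSeq θ (c₂ ≫ c₃) := by
  have : Mono e := h₃.mono
  have : Mono m₂ := h₂.mono
  have : Epi c₂ := h₂.epi
  have : Epi c₃ := h₃.epi
  have : Epi c₁ := h₁.epi
  have hw : θ ≫ c₂ ≫ c₃ = 0 := by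
    rw [← Category.assoc, ← he, Category.assoc, h₃.zero, comp_zero]
  have hmθ : Mono θ := by
    rw [Preadditive.mono_iff_cancel_zero]
    intro A t ht
    have htc : t ≫ c₁ = 0 := by
      rw [← cancel_mono e, Category.assoc, he, ← Category.assoc, ht, zero_comp, zero_comp]
    obtain ⟨w, hw'⟩ := KernelFork.IsLimit.lift' h₁.fIsKernel t htc
    simp only [Fork.ι_ofι] at hw'
    replace hw' : w ≫ m₁ = t := hw'
    have : w ≫ m₂ = 0 := by rw [← hθ, ← Category.assoc, hw', ht]
    have hw0 : w = 0 := by rw [← cancel_mono m₂, zero_comp]; exact this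
    rw [← hw', hw0, zero_comp]
  refine IsShortExactSeq.mk' hw hmθ (epi_comp _ _) ?_
  rw [ShortComplex.exact_iff_exact_up_to_refinements]
  intro A x hx
  replace hx : x ≫ (c₂ ≫ c₃) = 0 := hx
  have hx2 : (x ≫ c₂) ≫ c₃ = 0 := by rwa [Category.assoc]
  obtain ⟨A₁, ρ, hρ, a, ha⟩ := h₃.shortExact.exact.exact_up_to_refinements (x ≫ c₂) hx2
  replace ha : ρ ≫ (x ≫ c₂) = a ≫ e := ha
  obtain ⟨A₂, ρ₂, hρ₂, b, hb⟩ := surjective_up_to_refinements_of_epi c₁ a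
  have hd : (ρ₂ ≫ ρ ≫ x - b ≫ θ) ≫ c₂ = 0 := by
    have e1 : ρ₂ ≫ ρ ≫ x ≫ c₂ = b ≫ c₁ ≫ e := by
      rw [ha, ← Category.assoc, hb, Category.assoc]
    have e2 : b ≫ θ ≫ c₂ = b ≫ c₁ ≫ e := by rw [he]
    simp only [Preadditive.sub_comp, Category.assoc, e1, e2, sub_self]
  obtain ⟨w, hw'⟩ := KernelFork.IsLimit.lift' h₂.fIsKernel _ hd
  simp only [Fork.ι_ofι] at hw'
  replace hw' : w ≫ m₂ = ρ₂ ≫ ρ ≫ x - b ≫ θ := hw'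
  refine ⟨A₂, ρ₂ ≫ ρ, epi_comp _ _, b + w ≫ m₁, ?_⟩
  show (ρ₂ ≫ ρ) ≫ x = (b + w ≫ m₁) ≫ θ
  rw [Preadditive.add_comp, Category.assoc, Category.assoc, hθ, hw']
  abel

/-- Pullback of a short exact sequence along an arbitrary map. -/
lemma pullback_ses_s2 {K M Y X : 𝒜} {k : K ⟶ M} {g : M ⟶ Y} (hkg : IsShortExactSeq k g)
    (u : X ⟶ Y) {k' : K ⟶ pullback g u} (h1 : k' ≫ pullback.fst g u = k)
    (h2 : k' ≫ pullback.snd g u = 0) : IsShortExactSeq k' (pullback.snd g u) := by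
  have : Epi g := hkg.epi
  have hmono : Mono k' := by
    have : Mono (k' ≫ pullback.fst g u) := by rw [h1]; exact hkg.mono
    exact mono_of_mono k' (pullback.fst g u)
  have hepi : Epi (pullback.snd g u) := inferInstance
  refine IsShortExactSeq.mk' h2 hmono hepi ?_
  refine ShortComplex.exact_of_f_is_kernel _ (KernelFork.IsLimit.ofι' k' h2 ?_)
  intro A t ht
  have htg : (t ≫ pullback.fst g u) ≫ g = 0 := by
    rw [Category.assoc, pullback.condition, ← Category.assoc, ht, zero_comp]
  obtain ⟨l, hl⟩ := KernelFork.IsLimit.lift' hkg.fIsKernel _ htg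
  simp only [Fork.ι_ofι] at hl
  replace hl : l ≫ k = t ≫ pullback.fst g u := hl
  refine ⟨l, pullback.hom_ext ?_ ?_⟩
  · rw [Category.assoc, h1, hl]
  · rw [Category.assoc, h2, comp_zero, ht]

/-- The left class of a complete cotorsion pair is closed under extensions. -/
lemma cc_ext {E Cc Ip Zc : 𝒜 → Prop} (S : CotorsionSetup E Cc Ip Zc)
    {X Y Z : 𝒜} {u : X ⟶ Y} {v : Y ⟶ Z} (huv : IsShortExactSeq u v)
    (hX : Cc X) (hZ : Cc Z) : Cc Y := by
  have ccSubE : ∀ {T : 𝒜}, Cc T → E T := fun hT => ((S.cp.left_eq _).1 hT).1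
  have ipSubE : ∀ {T : 𝒜}, Ip T → E T := fun hT => ((S.cp.right_eq _).1 hT).1
  have orth : ∀ {T I : 𝒜}, Cc T → Ip I → Ext1IsZero E T I :=
    fun hT hI => ((S.cp.left_eq _).1 hT).2 hI
  rw [S.cp.left_eq]
  refine ⟨S.extClosedE u v huv (ccSubE hX) (ccSubE hZ), ?_⟩
  intro I hI M f g hEM hfg
  have : Mono u := huv.mono
  have : Epi v := huv.epi
  have : Epi g := hfg.epi
  have hker : f ≫ g = 0 ≫ u := by rw [hfg.zero, zero_comp]
  set k' : I ⟶ pullback g u := pullback.lift f 0 hker with hk'def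
  have h1 : k' ≫ pullback.fst g u = f := pullback.lift_fst _ _ _
  have h2 : k' ≫ pullback.snd g u = 0 := pullback.lift_snd _ _ _
  have SES1 : IsShortExactSeq k' (pullback.snd g u) := pullback_ses_s2 hfg u h1 h2
  have hEN : E (pullback g u) := S.extClosedE k' _ SES1 (ipSubE hI) (ccSubE hX)
  obtain ⟨r, hr⟩ := orth hX hI k' (pullback.snd g u) hEN SES1
  -- split the pulled-back sequence
  set S1 := ShortComplex.mk k' (pullback.snd g u) SES1.zero with hS1def
  have sp : S1.Splitting :=
    ShortComplex.Splitting.ofExactOfRetraction S1 SES1.shortExact.exact r hr SES1.epi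
  set sM : X ⟶ M := sp.s ≫ pullback.fst g u with hsMdef
  have hsMg : sM ≫ g = u := by
    rw [hsMdef, Category.assoc, pullback.condition, ← Category.assoc]
    have hsg : sp.s ≫ pullback.snd g u = 𝟙 X := sp.s_g
    rw [hsg, Category.id_comp]
  set e : (I ⊞ X : 𝒜) ⟶ M := biprod.desc f sM with hedef
  have hinl : biprod.inl ≫ e = f := biprod.inl_desc _ _
  have hinr : biprod.inr ≫ e = sM := biprod.inr_desc _ _
  have hfst : Mono (pullback.fst g u) := inferInstance
  have hmonoe : Mono e := by
    rw [Preadditive.mono_iff_cancel_zero]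
    intro T a ha
    have hdec : a ≫ e = (a ≫ biprod.fst) ≫ f + (a ≫ biprod.snd) ≫ sM := by
      conv_lhs => rw [← Category.comp_id a, ← biprod.total]
      simp only [Preadditive.comp_add, Preadditive.add_comp, Category.assoc,
        hinl, hinr, Preadditive.comp_add]
    rw [hdec] at ha
    have hb : ((a ≫ biprod.fst) ≫ k' + (a ≫ biprod.snd) ≫ sp.s) ≫ pullback.fst g u = 0 := by
      simp only [Preadditive.add_comp, Category.assoc, h1, ← hsMdef]
      simpa only [Category.assoc] using ha
    have hb0 : (a ≫ biprod.fst) ≫ k' + (a ≫ biprod.snd) ≫ sp.s = 0 := by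
      rwa [← cancel_mono (pullback.fst g u), zero_comp]
    have hfr : k' ≫ sp.r = 𝟙 I := sp.f_r
    have ha1 : a ≫ biprod.fst = 0 := by
      have := congrArg (· ≫ sp.r) hb0
      simpa [Preadditive.add_comp, Category.assoc, hfr, sp.s_r] using this
    have ha2 : a ≫ biprod.snd = 0 := by
      have := congrArg (· ≫ pullback.snd g u) hb0
      have hsg : sp.s ≫ pullback.snd g u = 𝟙 X := sp.s_g
      simpa [Preadditive.add_comp, Category.assoc, h2, hsg] using this
    apply biprod.hom_ext <;> simp [ha1, ha2]
  have w_e : e ≫ (g ≫ v) = 0 := by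
    apply biprod.hom_ext'
    · rw [← Category.assoc, hinl, ← Category.assoc, hfg.zero, zero_comp, comp_zero]
    · rw [← Category.assoc, hinr, ← Category.assoc, hsMg, huv.zero, comp_zero]
  have SES2 : IsShortExactSeq e (g ≫ v) := by
    haveI : Epi (g ≫ v) := epi_comp _ _
    refine IsShortExactSeq.mk' w_e hmonoe inferInstance ?_
    refine ShortComplex.exact_of_g_is_cokernel _ (CokernelCofork.IsColimit.ofπ' _ w_e ?_)
    intro T t ht
    have hft : f ≫ t = 0 := by rw [← hinl, Category.assoc, ht, comp_zero]
    have hst : sM ≫ t = 0 := by rw [← hinr, Category.assoc, ht, comp_zero]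
    obtain ⟨w1, hw1⟩ := CokernelCofork.IsColimit.desc' hfg.gIsCokernel t hft
    simp only [Cofork.π_ofπ] at hw1
    replace hw1 : g ≫ w1 = t := hw1
    have huw : u ≫ w1 = 0 := by rw [← hsMg, Category.assoc, hw1, hst]
    obtain ⟨w2, hw2⟩ := CokernelCofork.IsColimit.desc' huv.gIsCokernel w1 huw
    simp only [Cofork.π_ofπ] at hw2
    replace hw2 : v ≫ w2 = w1 := hw2
    exact ⟨w2, by rw [Category.assoc, hw2, hw1]⟩
  -- the quotient M / sM(X) as a pushout
  set π : M ⟶ cokernel sM := cokernel.π sM with hπdef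
  have w_po : e ≫ π = biprod.fst ≫ (f ≫ π) := by
    apply biprod.hom_ext'
    · rw [← Category.assoc, hinl, ← Category.assoc, biprod.inl_fst, Category.id_comp]
    · rw [← Category.assoc, hinr, ← Category.assoc, biprod.inr_fst, zero_comp, hπdef,
        cokernel.condition]
  have hcolim : IsColimit (PushoutCocone.mk π (f ≫ π) w_po) := by
    refine PushoutCocone.IsColimit.mk w_po
      (fun s => cokernel.desc sM s.inl ?_) (fun s => cokernel.π_desc _ _ _)
      (fun s => ?_) (fun s m hm1 hm2 => ?_)
    · rw [← hinr, Category.assoc, s.condition, ← Category.assoc, biprod.inr_fst, zero_comp]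
    · rw [Category.assoc, cokernel.π_desc, ← hinl, Category.assoc,
        s.condition, ← Category.assoc, biprod.inl_fst, Category.id_comp]
    · exact coequalizer.hom_ext (by rw [cokernel.π_desc]; exact hm1)
  have hpo : IsPushout e biprod.fst π (f ≫ π) := by
    have := IsPushout.of_isColimit hcolim
    exact this
  obtain ⟨q, hq1, hq2, SES3⟩ := pushout_ses_s2 SES2 biprod.fst hpo
  have hEcok : E (cokernel sM) := S.extClosedE _ _ SES3 (ipSubE hI) (ccSubE hZ)
  obtain ⟨ρ, hρ⟩ := orth hZ hI (f ≫ π) q hEcok SES3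
  exact ⟨π ≫ ρ, by rw [← Category.assoc]; exact hρ⟩

/-- In the standing setup, consider a commutative diagram in
`Cc` with rows `C₀ ←j– A –i→ B` and `C' ←j'– A' –i'→ B'` and vertical maps
`γ, α, β`, where `i, i'` are cofibrations, `α, β, γ` are acyclic cofibrations,
and the induced map `cok α ⟶ cok β` is a cofibration.  Then the induced map on
pushouts `φ : B +_A C₀ ⟶ B' +_{A'} C'` is an acyclic cofibration. -/
theorem gluing_for_acyclic_cofibrations
    (E Cc Ip Zc : 𝒜 → Prop) (S : CotorsionSetup E Cc Ip Zc)
    {A B C₀ A' B' C' : 𝒜}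
    (i : A ⟶ B) (j : A ⟶ C₀) (i' : A' ⟶ B') (j' : A' ⟶ C')
    (α : A ⟶ A') (β : B ⟶ B') (γ : C₀ ⟶ C')
    (wi : i ≫ β = α ≫ i') (wj : j ≫ γ = α ≫ j')
    (hi : IsCofib Cc i) (hi' : IsCofib Cc i')
    (hα : IsAcyclicCofib Cc Zc α) (hβ : IsAcyclicCofib Cc Zc β)
    (hγ : IsAcyclicCofib Cc Zc γ)
    (hcok : IsCofib Cc (cokernel.map α β i i' wi.symm)) :
    IsAcyclicCofib Cc Zc (pushout.map i j i' j' β γ α wi wj) := by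
  obtain ⟨hCA, hCB, Wi, gi, hCWi, hsesi⟩ := hi
  obtain ⟨hCA', hCB', Wi', gi', hCWi', hsesi'⟩ := hi'
  obtain ⟨-, -, Wa, ga, hCWa, hZWa, hsesa⟩ := hα
  obtain ⟨-, -, Wb, gb, hCWb, hZWb, hsesb⟩ := hβ
  obtain ⟨hCC₀, hCC', Wg, gg, hCWg, hZWg, hsesg⟩ := hγ
  obtain ⟨hCcokα, hCcokβ, Q₃, c₃, hCQ₃, hses₃⟩ := hcok
  have hmα : Mono α := hsesa.mono
  have hmβ : Mono β := hsesb.mono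
  -- Step A : the two pushout corners lie in Cc
  have hCP : Cc (pushout i j) := by
    obtain ⟨qP, -, -, hsesP⟩ := pushout_ses_s2 hsesi j (IsPushout.of_hasPushout i j)
    exact cc_ext S hsesP hCC₀ hCWi
  have hCP' : Cc (pushout i' j') := by
    obtain ⟨qP', -, -, hsesP'⟩ := pushout_ses_s2 hsesi' j' (IsPushout.of_hasPushout i' j')
    exact cc_ext S hsesP' hCC' hCWi'
  -- Step B : factor φ = φ₁ ≫ φ₂ through R = B ⊔_A C'
  have hR : i ≫ (β ≫ pushout.inl i' j') = (j ≫ γ) ≫ pushout.inr i' j' := by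
    rw [← Category.assoc, wi, Category.assoc, pushout.condition, wj, Category.assoc]
  set φ₁ : pushout i j ⟶ pushout i (j ≫ γ) :=
    pushout.map i j i (j ≫ γ) (𝟙 B) γ (𝟙 A) (by simp) (by simp) with hφ₁def
  set φ₂ : pushout i (j ≫ γ) ⟶ pushout i' j' :=
    pushout.desc (β ≫ pushout.inl i' j') (pushout.inr i' j') hR with hφ₂def
  have hinlφ₁ : pushout.inl i j ≫ φ₁ = pushout.inl i (j ≫ γ) := by
    rw [hφ₁def]; rw [pushout.inl_desc, Category.id_comp]
  have hinrφ₁ : pushout.inr i j ≫ φ₁ = γ ≫ pushout.inr i (j ≫ γ) := by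
    rw [hφ₁def]; exact pushout.inr_desc _ _ _
  have hinlφ₂ : pushout.inl i (j ≫ γ) ≫ φ₂ = β ≫ pushout.inl i' j' := by
    rw [hφ₂def]; exact pushout.inl_desc _ _ _
  have hinrφ₂ : pushout.inr i (j ≫ γ) ≫ φ₂ = pushout.inr i' j' := by
    rw [hφ₂def]; exact pushout.inr_desc _ _ _
  have hφ : pushout.map i j i' j' β γ α wi wj = φ₁ ≫ φ₂ := by
    apply pushout.hom_ext
    · rw [← Category.assoc, hinlφ₁, hinlφ₂]; exact pushout.inl_desc _ _ _
    · rw [← Category.assoc, hinrφ₁, Category.assoc, hinrφ₂]; exact pushout.inr_desc _ _ _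
  -- Step C : φ₁ is a pushout of γ
  have hpo₁ : IsPushout γ (pushout.inr i j) (pushout.inr i (j ≫ γ)) φ₁ := by
    have hcsq : γ ≫ pushout.inr i (j ≫ γ) = pushout.inr i j ≫ φ₁ := hinrφ₁.symm
    have hcolim : IsColimit (PushoutCocone.mk (pushout.inr i (j ≫ γ)) φ₁ hcsq) := by
      refine PushoutCocone.IsColimit.mk hcsq
        (fun s => pushout.desc (pushout.inl i j ≫ s.inr) s.inl ?_)
        (fun s => pushout.inr_desc _ _ _) (fun s => ?_) (fun s m hm1 hm2 => ?_)
      · rw [← Category.assoc, pushout.condition, Category.assoc, ← s.condition,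
          ← Category.assoc]
      · apply pushout.hom_ext
        · rw [← Category.assoc, hinlφ₁, pushout.inl_desc]
        · rw [← Category.assoc, hinrφ₁, Category.assoc, pushout.inr_desc, s.condition]
      · apply pushout.hom_ext
        · rw [pushout.inl_desc, ← hinlφ₁, Category.assoc, hm2]
        · rw [pushout.inr_desc]; exact hm1
    exact IsPushout.of_isColimit hcolim
  obtain ⟨q₁, hq₁, -, hses₁⟩ := pushout_ses_s2 hsesg (pushout.inr i j) hpo₁
  -- Step D : the comparison map θ : B ⊔_A A' ⟶ B' is an admissible mono with cokernel Q₃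
  set θ : pushout i α ⟶ B' := pushout.desc β i' wi with hθdef
  have hinlθ : pushout.inl i α ≫ θ = β := pushout.inl_desc _ _ _
  have hinrθ : pushout.inr i α ≫ θ = i' := pushout.inr_desc _ _ _
  obtain ⟨cα, hcα1, hcα2, hsesG⟩ :=
    pushout_ses_s2 (IsShortExactSeq.of_mono α) i ((IsPushout.of_hasPushout i α).flip)
  have hsesβπ : IsShortExactSeq β (cokernel.π β) := IsShortExactSeq.of_mono β
  have hecomm : cα ≫ cokernel.map α β i i' wi.symm = θ ≫ cokernel.π β := by
    apply pushout.hom_ext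
    · simp only [← Category.assoc, hcα2, hinlθ]
      rw [zero_comp, cokernel.condition]
    · simp only [← Category.assoc, hcα1, hinrθ]
      rw [cokernel.π_desc]
  have hsesθ : IsShortExactSeq θ (cokernel.π β ≫ c₃) :=
    ses_left hsesG hsesβπ hses₃ hinlθ hecomm
  -- Step E : φ₂ is a pushout of θ
  have hζw : i ≫ pushout.inl i (j ≫ γ) = α ≫ (j' ≫ pushout.inr i (j ≫ γ)) := by
    rw [pushout.condition, ← Category.assoc, ← wj, Category.assoc]
  set ζ : pushout i α ⟶ pushout i (j ≫ γ) :=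
    pushout.desc (pushout.inl i (j ≫ γ)) (j' ≫ pushout.inr i (j ≫ γ)) hζw with hζdef
  have hinlζ : pushout.inl i α ≫ ζ = pushout.inl i (j ≫ γ) := pushout.inl_desc _ _ _
  have hinrζ : pushout.inr i α ≫ ζ = j' ≫ pushout.inr i (j ≫ γ) := pushout.inr_desc _ _ _
  have hpo₂ : IsPushout θ ζ (pushout.inl i' j') φ₂ := by
    have hcsq : θ ≫ pushout.inl i' j' = ζ ≫ φ₂ := by
      apply pushout.hom_ext
      · rw [← Category.assoc, hinlθ, ← Category.assoc, hinlζ, hinlφ₂]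
      · rw [← Category.assoc, hinrθ, ← Category.assoc, hinrζ, Category.assoc, hinrφ₂,
          pushout.condition]
    have hcolim : IsColimit (PushoutCocone.mk (pushout.inl i' j') φ₂ hcsq) := by
      refine PushoutCocone.IsColimit.mk hcsq
        (fun s => pushout.desc s.inl (pushout.inr i (j ≫ γ) ≫ s.inr) ?_)
        (fun s => pushout.inl_desc _ _ _) (fun s => ?_) (fun s m hm1 hm2 => ?_)
      · rw [← hinrθ, Category.assoc, s.condition, ← Category.assoc, hinrζ, Category.assoc]
      · apply pushout.hom_ext
        · rw [← Category.assoc, hinlφ₂, Category.assoc, pushout.inl_desc, ← hinlθ,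
            Category.assoc, s.condition, ← Category.assoc, hinlζ]
        · rw [← Category.assoc, hinrφ₂, pushout.inr_desc]
      · apply pushout.hom_ext
        · rw [pushout.inl_desc]; exact hm1
        · rw [pushout.inr_desc, ← hinrφ₂, Category.assoc, hm2]
    exact IsPushout.of_isColimit hcolim
  obtain ⟨q₂, hq₂, -, hses₂⟩ := pushout_ses_s2 hsesθ ζ hpo₂
  -- Step F : compose the two short exact sequences and identify the classes
  obtain ⟨Wφ, c, a, b, hsesφ', hsesW⟩ := ses_comp hses₁ hses₂
  have hsesφ : IsShortExactSeq (pushout.map i j i' j' β γ α wi wj) c := by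
    rw [hφ]; exact hsesφ'
  obtain ⟨eα⟩ := hsesa.cokernelIso
  obtain ⟨eβ⟩ := hsesb.cokernelIso
  have hZcokα : Zc (cokernel α) := S.isoZ eα.symm hZWa
  have hZcokβ : Zc (cokernel β) := S.isoZ eβ.symm hZWb
  have hZQ₃ : Zc Q₃ :=
    S.zcCokerClosed _ _ hses₃ hCcokα hCcokβ hCQ₃ hZcokα hZcokβ
  have hCWφ : Cc Wφ := cc_ext S hsesW hCWg hCQ₃
  have hZWφ : Zc Wφ := S.zcExtClosed a b hsesW hCWg hCWφ hCQ₃ hZWg hZQ₃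
  exact ⟨hCP, hCP', Wφ, c, hCWφ, hZWφ, hsesφ⟩
end

section
/- (Left and right properness) Weak equivalences are stable under pushout along cofibrations and under pullback along admissible epimorphisms: (i) if i : A → B is a cofibration and a : A → A′ is a weak equivalence with A′ ∈ 𝒞, then the induced map B → A′ +_A B into the pushout is a weak equivalence; (ii) dually, if p : B → A is an admissible epimorphism between objects of 𝒞 and a : A′ → A is a weak equivalence with A′ ∈ 𝒞, then the induced map A′ ×_A B → B from the pullback is a weak equivalence. -/
open CategoryTheory CategoryTheory.Limits

universe v u

variable {𝒜 : Type u} [Category.{v} 𝒜] [Abelian 𝒜]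

section ProofHelpers

open Category

lemma ses_w {X Y Z : 𝒜} {f : X ⟶ Y} {g : Y ⟶ Z} (h : IsShortExactSeq f g) :
    f ≫ g = 0 := h.choose

lemma ses_mono {X Y Z : 𝒜} {f : X ⟶ Y} {g : Y ⟶ Z} (h : IsShortExactSeq f g) :
    Mono f := by obtain ⟨w, hw⟩ := h; exact hw.mono_f

lemma ses_epi {X Y Z : 𝒜} {f : X ⟶ Y} {g : Y ⟶ Z} (h : IsShortExactSeq f g) :
    Epi g := by obtain ⟨w, hw⟩ := h; exact hw.epi_g

lemma ses_desc {X Y Z : 𝒜} {f : X ⟶ Y} {g : Y ⟶ Z} (h : IsShortExactSeq f g)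
    {V : 𝒜} (u : Y ⟶ V) (hu : f ≫ u = 0) : ∃ d : Z ⟶ V, g ≫ d = u := by
  obtain ⟨w, hw⟩ := h
  haveI := hw.epi_g
  exact hw.exact.desc' u hu

lemma ses_lift {X Y Z : 𝒜} {f : X ⟶ Y} {g : Y ⟶ Z} (h : IsShortExactSeq f g)
    {V : 𝒜} (u : V ⟶ Y) (hu : u ≫ g = 0) : ∃ l : V ⟶ X, l ≫ f = u := by
  obtain ⟨w, hw⟩ := h
  haveI := hw.mono_f
  exact hw.exact.lift' u hu

lemma ses_of_coker {X Y Z : 𝒜} (f : X ⟶ Y) (g : Y ⟶ Z) (w : f ≫ g = 0)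
    (hm : Mono f) (he : Epi g)
    (hd : ∀ {V : 𝒜} (u : Y ⟶ V), f ≫ u = 0 → ∃ d : Z ⟶ V, g ≫ d = u) :
    IsShortExactSeq f g := by
  refine ⟨w, ?_⟩
  haveI := hm; haveI := he
  have hex : (ShortComplex.mk f g w).Exact :=
    ShortComplex.exact_of_g_is_cokernel _ (CokernelCofork.IsColimit.ofπ' g w
      (fun k hk => ⟨(hd k hk).choose, (hd k hk).choose_spec⟩))
  exact { exact := hex }

lemma ses_of_ker {X Y Z : 𝒜} (f : X ⟶ Y) (g : Y ⟶ Z) (w : f ≫ g = 0)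
    (hm : Mono f) (he : Epi g)
    (hl : ∀ {V : 𝒜} (u : V ⟶ Y), u ≫ g = 0 → ∃ l : V ⟶ X, l ≫ f = u) :
    IsShortExactSeq f g := by
  refine ⟨w, ?_⟩
  haveI := hm; haveI := he
  have hex : (ShortComplex.mk f g w).Exact :=
    ShortComplex.exact_of_f_is_kernel _ (KernelFork.IsLimit.ofι' f w
      (fun k hk => ⟨(hl k hk).choose, (hl k hk).choose_spec⟩))
  exact { exact := hex }

/-- Pushout of a short exact sequence along `t`, `inr` version. -/
lemma poSES {X Y Z T : 𝒜} {f : X ⟶ Y} {g : Y ⟶ Z} (h : IsShortExactSeq f g) (t : X ⟶ T)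
    (w : f ≫ g = t ≫ 0) :
    IsShortExactSeq (pushout.inr f t) (pushout.desc g 0 w) := by
  haveI : Mono f := ses_mono h
  haveI : Epi g := ses_epi h
  haveI : Epi (pushout.inl f t ≫ pushout.desc g 0 w) := by
    rw [pushout.inl_desc]; infer_instance
  refine ses_of_coker _ _ (pushout.inr_desc _ _ _) inferInstance (epi_of_epi (pushout.inl f t) _)
    (fun {V} u hu => ?_)
  obtain ⟨d, hd⟩ := ses_desc h (pushout.inl f t ≫ u) (by
    rw [← Category.assoc, pushout.condition, Category.assoc, hu, comp_zero])
  refine ⟨d, pushout.hom_ext ?_ ?_⟩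
  · rw [← Category.assoc, pushout.inl_desc]; exact hd
  · rw [← Category.assoc, pushout.inr_desc, zero_comp, hu]

/-- Pushout of a short exact sequence along `t`, `inl` version. -/
lemma poSES' {X Y Z T : 𝒜} {f : X ⟶ Y} {g : Y ⟶ Z} (h : IsShortExactSeq f g) (t : X ⟶ T)
    (w : t ≫ 0 = f ≫ g) :
    IsShortExactSeq (pushout.inl t f) (pushout.desc 0 g w) := by
  haveI : Mono f := ses_mono h
  haveI : Epi g := ses_epi h
  haveI : Epi (pushout.inr t f ≫ pushout.desc 0 g w) := by
    rw [pushout.inr_desc]; infer_instance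
  refine ses_of_coker _ _ (pushout.inl_desc _ _ _) inferInstance (epi_of_epi (pushout.inr t f) _)
    (fun {V} u hu => ?_)
  obtain ⟨d, hd⟩ := ses_desc h (pushout.inr t f ≫ u) (by
    rw [← Category.assoc, ← pushout.condition, Category.assoc, hu, comp_zero])
  refine ⟨d, pushout.hom_ext ?_ ?_⟩
  · rw [← Category.assoc, pushout.inl_desc, zero_comp, hu]
  · rw [← Category.assoc, pushout.inr_desc]; exact hd

/-- Pullback of a short exact sequence along `t`, `snd` version. -/
lemma pbSES {X Y Z T : 𝒜} {f : X ⟶ Y} {g : Y ⟶ Z} (h : IsShortExactSeq f g) (t : T ⟶ Z)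
    (w : f ≫ g = 0 ≫ t) :
    IsShortExactSeq (pullback.lift f 0 w) (pullback.snd g t) := by
  haveI : Mono f := ses_mono h
  haveI : Epi g := ses_epi h
  haveI : Mono (pullback.lift f 0 w ≫ pullback.fst g t) := by
    rw [pullback.lift_fst]; infer_instance
  refine ses_of_ker _ _ (pullback.lift_snd _ _ _) (mono_of_mono _ (pullback.fst g t))
    inferInstance (fun {V} u hu => ?_)
  obtain ⟨l, hl⟩ := ses_lift h (u ≫ pullback.fst g t) (by
    rw [Category.assoc, pullback.condition, ← Category.assoc, hu, zero_comp])
  refine ⟨l, pullback.hom_ext ?_ ?_⟩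
  · rw [Category.assoc, pullback.lift_fst]; exact hl
  · rw [Category.assoc, pullback.lift_snd, comp_zero, hu]

/-- Pullback of a short exact sequence along `t`, `fst` version. -/
lemma pbSES' {X Y Z T : 𝒜} {f : X ⟶ Y} {g : Y ⟶ Z} (h : IsShortExactSeq f g) (t : T ⟶ Z)
    (w : 0 ≫ t = f ≫ g) :
    IsShortExactSeq (pullback.lift 0 f w) (pullback.fst t g) := by
  haveI : Mono f := ses_mono h
  haveI : Epi g := ses_epi h
  haveI : Mono (pullback.lift 0 f w ≫ pullback.snd t g) := by
    rw [pullback.lift_snd]; infer_instance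
  refine ses_of_ker _ _ (pullback.lift_fst _ _ _) (mono_of_mono _ (pullback.snd t g))
    inferInstance (fun {V} u hu => ?_)
  obtain ⟨l, hl⟩ := ses_lift h (u ≫ pullback.snd t g) (by
    rw [Category.assoc, ← pullback.condition, ← Category.assoc, hu, zero_comp])
  refine ⟨l, pullback.hom_ext ?_ ?_⟩
  · rw [Category.assoc, pullback.lift_fst, comp_zero, hu]
  · rw [Category.assoc, pullback.lift_snd]; exact hl

/-- A pushout-like square transfers an admissible epi with its kernel. -/
lemma sesPO {K M A Q R : 𝒜} {k : K ⟶ M} {q : M ⟶ A} (h : IsShortExactSeq k q)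
    (f : M ⟶ Q) (α : A ⟶ R) (φ : Q ⟶ R) (comm : q ≫ α = f ≫ φ)
    (hm : Mono (k ≫ f))
    (hdesc : ∀ {V : 𝒜} (y : A ⟶ V) (u : Q ⟶ V), q ≫ y = f ≫ u →
      ∃ m : R ⟶ V, α ≫ m = y ∧ φ ≫ m = u)
    (hext : ∀ {V : 𝒜} (x y : R ⟶ V), α ≫ x = α ≫ y → φ ≫ x = φ ≫ y → x = y) :
    IsShortExactSeq (k ≫ f) φ := by
  haveI : Epi q := ses_epi h
  have hw : (k ≫ f) ≫ φ = 0 := by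
    rw [Category.assoc, ← comm, ← Category.assoc, ses_w h, zero_comp]
  have hφ : Epi φ := by
    constructor
    intro V x y hxy
    refine hext x y ?_ hxy
    rw [← cancel_epi q, ← Category.assoc, comm, Category.assoc, hxy, ← Category.assoc, ← comm,
      Category.assoc]
  refine ses_of_coker _ _ hw hm hφ (fun {V} u hu => ?_)
  obtain ⟨v, hv⟩ := ses_desc h (f ≫ u) (by rw [← Category.assoc]; exact hu)
  obtain ⟨m, -, hm2⟩ := hdesc v u hv
  exact ⟨m, hm2⟩

/-- A pullback-like square transfers an admissible mono with its cokernel. -/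
lemma sesPB {A M Z P Q : 𝒜} {j : A ⟶ M} {z : M ⟶ Z} (h : IsShortExactSeq j z)
    (f : Q ⟶ M) (β : P ⟶ A) (ψ : P ⟶ Q) (comm : β ≫ j = ψ ≫ f)
    (he : Epi (f ≫ z))
    (hlift : ∀ {V : 𝒜} (y : V ⟶ A) (u : V ⟶ Q), y ≫ j = u ≫ f →
      ∃ m : V ⟶ P, m ≫ β = y ∧ m ≫ ψ = u)
    (hext : ∀ {V : 𝒜} (x y : V ⟶ P), x ≫ β = y ≫ β → x ≫ ψ = y ≫ ψ → x = y) :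
    IsShortExactSeq ψ (f ≫ z) := by
  haveI : Mono j := ses_mono h
  have hw : ψ ≫ f ≫ z = 0 := by
    rw [← Category.assoc, ← comm, Category.assoc, ses_w h, comp_zero]
  have hψ : Mono ψ := by
    constructor
    intro V x y hxy
    refine hext x y ?_ hxy
    rw [← cancel_mono j, Category.assoc, comm, ← Category.assoc, hxy, Category.assoc, ← comm,
      ← Category.assoc]
  refine ses_of_ker _ _ hw hψ he (fun {V} u hu => ?_)
  obtain ⟨y, hy⟩ := ses_lift h (u ≫ f) (by rw [Category.assoc]; exact hu)
  obtain ⟨m, -, hm2⟩ := hlift y u hy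
  exact ⟨m, hm2⟩

/-- From a retraction of the mono, produce a section of the epi. -/
lemma ses_section {X Y Z : 𝒜} {f : X ⟶ Y} {g : Y ⟶ Z} (h : IsShortExactSeq f g)
    (r : Y ⟶ X) (hr : f ≫ r = 𝟙 X) : ∃ s : Z ⟶ Y, s ≫ g = 𝟙 Z := by
  haveI : Epi g := ses_epi h
  obtain ⟨s, hs⟩ := ses_desc h (𝟙 Y - r ≫ f) (by
    rw [Preadditive.comp_sub, Category.comp_id, ← Category.assoc, hr, Category.id_comp, sub_self])
  refine ⟨s, ?_⟩
  rw [← cancel_epi g, ← Category.assoc, hs, Preadditive.sub_comp, Category.id_comp,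
    Category.assoc, ses_w h, comp_zero, sub_zero, Category.comp_id]

lemma ccSubE {E Cc Ip Zc : 𝒜 → Prop} (S : CotorsionSetup E Cc Ip Zc) {X : 𝒜} (h : Cc X) : E X :=
  ((S.cp.left_eq X).mp h).1

lemma ipSubE {E Cc Ip Zc : 𝒜 → Prop} (S : CotorsionSetup E Cc Ip Zc) {X : 𝒜} (h : Ip X) : E X :=
  ((S.cp.right_eq X).mp h).1

/-- The left class of the cotorsion pair is closed under extensions. -/
lemma ccExt {E Cc Ip Zc : 𝒜 → Prop} (S : CotorsionSetup E Cc Ip Zc) {X Y Z : 𝒜}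
    {f : X ⟶ Y} {g : Y ⟶ Z} (h : IsShortExactSeq f g) (hX : Cc X) (hZ : Cc Z) : Cc Y := by
  rw [S.cp.left_eq]
  refine ⟨S.extClosedE f g h (ccSubE S hX) (ccSubE S hZ), fun I hI => ?_⟩
  intro N u v hN hseq
  haveI : Mono f := ses_mono h
  haveI : Mono u := ses_mono hseq
  haveI : Epi g := ses_epi h
  -- pull back `0 → I → N → Y → 0` along `f : X ⟶ Y`
  have h1 : IsShortExactSeq
      (pullback.lift u 0 (by rw [ses_w hseq, zero_comp]) : I ⟶ pullback v f)
      (pullback.snd v f) := pbSES hseq f (by rw [ses_w hseq, zero_comp])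
  have hEP : E (pullback v f) := S.extClosedE _ _ h1 (ipSubE S hI) (ccSubE S hX)
  obtain ⟨r₀, hr₀⟩ := ((S.cp.left_eq X).mp hX).2 hI _ _ hEP h1
  obtain ⟨s₀, hs₀⟩ := ses_section h1 r₀ hr₀
  set t : X ⟶ N := s₀ ≫ pullback.fst v f with ht
  have htv : t ≫ v = f := by
    rw [ht, Category.assoc, pullback.condition, ← Category.assoc, hs₀, Category.id_comp]
  haveI : Mono (t ≫ v) := by rw [htv]; infer_instance
  haveI : Mono t := mono_of_mono t v
  -- the quotient `N₁ = N / X`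
  have h2 : IsShortExactSeq t (cokernel.π t) :=
    ses_of_coker _ _ (cokernel.condition t) inferInstance inferInstance
      (fun {V} u' hu' => ⟨cokernel.desc t u' hu', cokernel.π_desc _ _ _⟩)
  set v₁ : cokernel t ⟶ Z := cokernel.desc t (v ≫ g) (by
    rw [← Category.assoc, htv, ses_w h]) with hv₁
  -- `0 → I → N₁ → Z → 0`
  have h3 : IsShortExactSeq (u ≫ cokernel.π t) v₁ := by
    refine sesPO hseq (cokernel.π t) g v₁ (cokernel.π_desc _ _ _).symm ?_ ?_ ?_
    · refine Preadditive.mono_of_cancel_zero _ (fun {V} c hc => ?_)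
      obtain ⟨e, he⟩ := ses_lift h2 (c ≫ u) (by rw [Category.assoc]; exact hc)
      have he0 : e = 0 := by
        rw [← cancel_mono f, zero_comp, ← htv, ← Category.assoc, he, Category.assoc,
          ses_w hseq, comp_zero]
      rw [← cancel_mono u, zero_comp, ← he, he0, zero_comp]
    · intro V y u' hyu
      have hfy : f ≫ y = 0 := by
        rw [← htv, Category.assoc, hyu, ← Category.assoc, cokernel.condition, zero_comp]
      obtain ⟨m, hm⟩ := ses_desc h y hfy
      refine ⟨m, hm, ?_⟩
      rw [← cancel_epi (cokernel.π t), ← Category.assoc, cokernel.π_desc, Category.assoc, hm,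
        hyu]
    · intro V x y h1' _
      exact (cancel_epi g).mp h1'
  have hEN₁ : E (cokernel t) := S.extClosedE _ _ h3 (ipSubE S hI) (ccSubE S hZ)
  obtain ⟨r₁, hr₁⟩ := ((S.cp.left_eq Z).mp hZ).2 hI _ _ hEN₁ h3
  exact ⟨cokernel.π t ≫ r₁, by rw [← Category.assoc]; exact hr₁⟩

end ProofHelpers

/-- **Left and right properness.** In the standing setup, weak
equivalences are stable under pushout along cofibrations and under pullback
along admissible epimorphisms:
(i) if `i : A ⟶ B` is a cofibration and `a : A ⟶ A'` is a weak equivalence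
with `A' ∈ Cc`, then the induced map `B ⟶ A' +_A B` into the pushout is a
weak equivalence;
(ii) dually, if `p : B ⟶ A` is an admissible epimorphism between objects of
`Cc` and `a : A' ⟶ A` is a weak equivalence with `A' ∈ Cc`, then the induced
map `A' ×_A B ⟶ B` from the pullback is a weak equivalence. -/
theorem properness
    (E Cc Ip Zc : 𝒜 → Prop) (S : CotorsionSetup E Cc Ip Zc) :
    (∀ {A B A' : 𝒜} (i : A ⟶ B) (a : A ⟶ A'),
      IsCofib Cc i → IsWeakEquiv E Cc Ip Zc a → Cc A' →
        IsWeakEquiv E Cc Ip Zc (pushout.inr a i)) ∧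
    (∀ {A B A' : 𝒜} (p : B ⟶ A) (a : A' ⟶ A),
      Cc B → Cc A →
      (∃ (K : 𝒜) (k : K ⟶ B), Cc K ∧ IsShortExactSeq k p) →
      IsWeakEquiv E Cc Ip Zc a → Cc A' →
        IsWeakEquiv E Cc Ip Zc (pullback.snd a p)) := by
  constructor
  · -- Left properness
    intro A B A' i a hci hwa hA'
    obtain ⟨hA, hB, W, iw, hW, hiw⟩ := hci
    obtain ⟨-, -, M, j, q, ⟨-, hM, Zo, z, hZc, hZz, hjz⟩, ⟨hEM, hEA', K, k, hK, hkq⟩, hjq⟩ := hwa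
    haveI : Mono i := ses_mono hiw
    haveI : Mono j := ses_mono hjz
    haveI : Mono k := ses_mono hkq
    -- the acyclic cofibration `B ⟶ Q := pushout j i`
    have h1 : IsShortExactSeq (pushout.inr j i)
        (pushout.desc z 0 (by rw [ses_w hjz, comp_zero]) : pushout j i ⟶ Zo) :=
      poSES hjz i _
    have hCcQ : Cc (pushout j i) := ccExt S h1 hB hZc
    -- the target `R := pushout a i` is in `Cc`
    have h2 : IsShortExactSeq (pushout.inl a i)
        (pushout.desc 0 iw (by rw [ses_w hiw, comp_zero]) : pushout a i ⟶ W) :=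
      poSES' hiw a _
    have hCcR : Cc (pushout a i) := ccExt S h2 hA' hW
    -- the comparison map `φ : Q ⟶ R`
    set φ : pushout j i ⟶ pushout a i :=
      pushout.desc (q ≫ pushout.inl a i) (pushout.inr a i)
        (by rw [← Category.assoc, hjq, pushout.condition]) with hφdef
    have hcomm : q ≫ pushout.inl a i = pushout.inl j i ≫ φ := (pushout.inl_desc _ _ _).symm
    have hinrφ : pushout.inr j i ≫ φ = pushout.inr a i := pushout.inr_desc _ _ _
    have h3 : IsShortExactSeq (k ≫ pushout.inl j i) φ := by
      refine sesPO hkq (pushout.inl j i) (pushout.inl a i) φ hcomm ?_ ?_ ?_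
      · exact mono_comp _ _
      · intro V y u hyu
        refine ⟨pushout.desc y (pushout.inr j i ≫ u) ?_, pushout.inl_desc _ _ _, ?_⟩
        · rw [← hjq, Category.assoc, hyu, ← Category.assoc, pushout.condition, Category.assoc]
        · apply pushout.hom_ext
          · rw [← Category.assoc, ← hcomm, Category.assoc, pushout.inl_desc, hyu]
          · rw [← Category.assoc, hinrφ, pushout.inr_desc]
      · intro V x y h1' h2'
        apply pushout.hom_ext
        · exact h1'
        · rw [← hinrφ, Category.assoc, Category.assoc, h2']
    exact ⟨hB, hCcR, pushout j i, pushout.inr j i, φ,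
      ⟨hB, hCcQ, Zo, _, hZc, hZz, h1⟩,
      ⟨ccSubE S hCcQ, ccSubE S hCcR, K, k ≫ pushout.inl j i, hK, h3⟩, hinrφ⟩
  · -- Right properness
    intro A B A' p a hB hA hker hwa hA'
    obtain ⟨K, k, hK, hkp⟩ := hker
    obtain ⟨-, -, M, j, q, ⟨-, hM, Zo, z, hZc, hZz, hjz⟩, ⟨hEM, hEA, K', k', hK', hk'q⟩, hjq⟩ := hwa
    haveI : Mono j := ses_mono hjz
    -- `P := pullback a p` is in `Cc`
    have h4 : IsShortExactSeq
        (pullback.lift 0 k (by rw [ses_w hkp, zero_comp]) : K ⟶ pullback a p)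
        (pullback.fst a p) := pbSES' hkp a _
    have hCcP : Cc (pullback a p) := ccExt S h4 hK hA'
    -- the acyclic fibration `P₁ := pullback q p ⟶ B`
    have h5 : IsShortExactSeq
        (pullback.lift k' 0 (by rw [ses_w hk'q, zero_comp]) : K' ⟶ pullback q p)
        (pullback.snd q p) := pbSES hk'q p _
    have h6 : IsShortExactSeq
        (pullback.lift 0 k (by rw [ses_w hkp, zero_comp]) : K ⟶ pullback q p)
        (pullback.fst q p) := pbSES' hkp q _
    have hez : Epi (pullback.fst q p ≫ z) := by
      haveI := ses_epi h6; haveI := ses_epi hjz; exact epi_comp _ _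
    -- the comparison map `ψ : P ⟶ P₁`
    set ψ : pullback a p ⟶ pullback q p :=
      pullback.lift (pullback.fst a p ≫ j) (pullback.snd a p)
        (by rw [Category.assoc, hjq, pullback.condition]) with hψdef
    have hψfst : ψ ≫ pullback.fst q p = pullback.fst a p ≫ j := pullback.lift_fst _ _ _
    have hψsnd : ψ ≫ pullback.snd q p = pullback.snd a p := pullback.lift_snd _ _ _
    have h7 : IsShortExactSeq ψ (pullback.fst q p ≫ z) := by
      refine sesPB hjz (pullback.fst q p) (pullback.fst a p) ψ hψfst.symm hez ?_ ?_
      · intro V y u hyu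
        refine ⟨pullback.lift y (u ≫ pullback.snd q p) ?_, pullback.lift_fst _ _ _, ?_⟩
        · rw [← hjq, ← Category.assoc, hyu, Category.assoc, pullback.condition, ← Category.assoc]
        · apply pullback.hom_ext
          · rw [Category.assoc, hψfst, ← Category.assoc, pullback.lift_fst, hyu]
          · rw [Category.assoc, hψsnd, pullback.lift_snd]
      · intro V x y h1' h2'
        apply pullback.hom_ext
        · exact h1'
        · rw [← hψsnd, ← Category.assoc, ← Category.assoc, h2']
    have hCcP₁ : Cc (pullback q p) := ccExt S h7 hCcP hZc
    exact ⟨hCcP, hB, pullback q p, ψ, pullback.snd q p,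
      ⟨hCcP, hCcP₁, Zo, pullback.fst q p ≫ z, hZc, hZz, h7⟩,
      ⟨ccSubE S hCcP₁, ccSubE S hB, K', pullback.lift k' 0 _, hK', h5⟩, hψsnd⟩
end

section
/- (Extension axiom) Given a morphism of short exact sequences in 𝒞, i.e. a commutative diagram with exact rows 0 → A → B → C → 0 and 0 → A′ → B′ → C′ → 0 and vertical maps a : A → A′, b : B → B′, c : C → C′, if a and c are weak equivalences then b is a weak equivalence. -/
open CategoryTheory CategoryTheory.Limits

universe v u

variable {𝒜 : Type u} [Category.{v} 𝒜] [Abelian 𝒜]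

attribute [simp] pullback.lift_fst pullback.lift_fst_assoc pullback.lift_snd pullback.lift_snd_assoc pushout.inl_desc pushout.inl_desc_assoc pushout.inr_desc pushout.inr_desc_assoc

section SESBasics

variable {A B C D : 𝒜}

lemma sesMk {f : A ⟶ B} {g : B ⟶ C} (w : f ≫ g = 0) (hm : Mono f) (he : Epi g)
    (hex : (ShortComplex.mk f g w).Exact) : IsShortExactSeq f g :=
  ⟨w, ShortComplex.ShortExact.mk' hex hm he⟩

lemma sesW {f : A ⟶ B} {g : B ⟶ C} (h : IsShortExactSeq f g) : f ≫ g = 0 := h.choose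

lemma sesSE {f : A ⟶ B} {g : B ⟶ C} (h : IsShortExactSeq f g) (w : f ≫ g = 0) :
    (ShortComplex.mk f g w).ShortExact := by obtain ⟨w', hw⟩ := h; exact hw

lemma sesMono {f : A ⟶ B} {g : B ⟶ C} (h : IsShortExactSeq f g) : Mono f :=
  (sesSE h (sesW h)).mono_f

lemma sesEpi {f : A ⟶ B} {g : B ⟶ C} (h : IsShortExactSeq f g) : Epi g :=
  (sesSE h (sesW h)).epi_g

lemma sesExact {f : A ⟶ B} {g : B ⟶ C} (h : IsShortExactSeq f g) (w : f ≫ g = 0) :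
    (ShortComplex.mk f g w).Exact := (sesSE h w).exact

/-- refinement-style exactness -/
lemma sesRefine {f : A ⟶ B} {g : B ⟶ C} (h : IsShortExactSeq f g) {T : 𝒜} (x : T ⟶ B)
    (hx : x ≫ g = 0) :
    ∃ (T' : 𝒜) (π : T' ⟶ T) (_ : Epi π) (y : T' ⟶ A), π ≫ x = y ≫ f :=
  (sesExact h (sesW h)).exact_up_to_refinements x hx

lemma sesLift {f : A ⟶ B} {g : B ⟶ C} (h : IsShortExactSeq f g) {T : 𝒜} (x : T ⟶ B)
    (hx : x ≫ g = 0) : ∃ y : T ⟶ A, y ≫ f = x := by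
  haveI := sesMono h
  exact (sesExact h (sesW h)).lift' x hx

lemma sesDesc {f : A ⟶ B} {g : B ⟶ C} (h : IsShortExactSeq f g) {T : 𝒜} (x : B ⟶ T)
    (hx : f ≫ x = 0) : ∃ y : C ⟶ T, g ≫ y = x := by
  haveI := sesEpi h
  exact (sesExact h (sesW h)).desc' x hx

lemma sesCokernel {f : A ⟶ B} (hm : Mono f) : IsShortExactSeq f (cokernel.π f) :=
  sesMk (cokernel.condition f) hm inferInstance
    (ShortComplex.exact_of_g_is_cokernel _ (cokernelIsCokernel f))

lemma sesKernel {g : B ⟶ C} (he : Epi g) : IsShortExactSeq (kernel.ι g) g :=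
  sesMk (kernel.condition g) inferInstance he
    (ShortComplex.exact_of_f_is_kernel _ (kernelIsKernel g))

lemma sesIsoMid {B' : 𝒜} {f : A ⟶ B} {g : B ⟶ C} (h : IsShortExactSeq f g) (e : B ≅ B') :
    IsShortExactSeq (f ≫ e.hom) (e.inv ≫ g) := by
  haveI := sesMono h
  haveI := sesEpi h
  refine sesMk (by simp [reassoc_of% (sesW h), sesW h]) inferInstance inferInstance ?_
  rw [ShortComplex.exact_iff_exact_up_to_refinements]
  intro T x₂ hx₂
  obtain ⟨T', π, hπ, y, hy⟩ := sesRefine h (x₂ ≫ e.inv)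
    (by simpa [Category.assoc] using hx₂)
  refine ⟨T', π, hπ, y, ?_⟩
  have := hy =≫ e.hom
  simpa [Category.assoc] using this

end SESBasics

section PbPo
variable {A B C D I P : 𝒜}

lemma sesPullback {f : A ⟶ B} {g : B ⟶ C} (h : IsShortExactSeq f g) (t : D ⟶ C) :
    IsShortExactSeq (pullback.lift f 0 (by rw [sesW h, zero_comp]) : A ⟶ pullback g t)
      (pullback.snd g t) := by
  haveI := sesMono h
  haveI := sesEpi h
  refine sesMk (pullback.lift_snd _ _ _) (mono_of_mono_fac (pullback.lift_fst _ _ _)) inferInstance ?_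
  rw [ShortComplex.exact_iff_exact_up_to_refinements]
  intro T x₂ hx₂
  have hx₂' : x₂ ≫ pullback.snd g t = 0 := hx₂
  obtain ⟨T', π, hπ, y, hy⟩ := sesRefine h (x₂ ≫ pullback.fst g t)
    (by rw [Category.assoc, pullback.condition, ← Category.assoc, hx₂', zero_comp])
  refine ⟨T', π, hπ, y, ?_⟩
  apply pullback.hom_ext
  · simpa [Category.assoc] using hy
  · simp [Category.assoc, hx₂']

lemma sesPushoutInr {k : A ⟶ B} {p : B ⟶ C} (h : IsShortExactSeq k p) (u : A ⟶ I) :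
    IsShortExactSeq (pushout.inr k u)
      (pushout.desc p 0 (by rw [sesW h, comp_zero])) := by
  haveI := sesMono h
  haveI := sesEpi h
  have hβ : Epi (biprod.desc (pushout.inl k u) (pushout.inr k u)) := by
    constructor
    intro T a b hab
    apply pushout.hom_ext
    · simpa using biprod.inl ≫= hab
    · simpa using biprod.inr ≫= hab
  refine sesMk (pushout.inr_desc _ _ _) inferInstance
    (epi_of_epi_fac (pushout.inl_desc _ _ _)) ?_
  rw [ShortComplex.exact_iff_exact_up_to_refinements]
  intro T x₂ hx₂
  have hx₂' : x₂ ≫ pushout.desc p 0 (by rw [sesW h, comp_zero]) = 0 := hx₂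
  obtain ⟨T₁, π₁, hπ₁, x, hx⟩ := surjective_up_to_refinements_of_epi
    (biprod.desc (pushout.inl k u) (pushout.inr k u)) x₂
  have hdec : π₁ ≫ x₂ = (x ≫ biprod.fst) ≫ pushout.inl k u
      + (x ≫ biprod.snd) ≫ pushout.inr k u := by
    rw [hx, biprod.desc_eq, Preadditive.comp_add, ← Category.assoc, ← Category.assoc]
  have hMp : (x ≫ biprod.fst) ≫ p = 0 := by
    have := hdec =≫ pushout.desc p 0 (by rw [sesW h, comp_zero])
    simpa [Category.assoc, hx₂', Preadditive.add_comp] using this.symm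
  obtain ⟨T₂, π₂, hπ₂, y, hy⟩ := sesRefine h (x ≫ biprod.fst) hMp
  refine ⟨T₂, π₂ ≫ π₁, epi_comp _ _, y ≫ u + π₂ ≫ x ≫ biprod.snd, ?_⟩
  rw [Category.assoc, hdec, Preadditive.comp_add, Preadditive.add_comp]
  simp only [← Category.assoc]
  simp only [← Category.assoc] at hy
  rw [hy, show (y ≫ k) ≫ pushout.inl k u = (y ≫ u) ≫ pushout.inr k u by
    rw [Category.assoc, pushout.condition, ← Category.assoc]]

lemma sesPushoutInl {u : A ⟶ I} {q : I ⟶ P} (h : IsShortExactSeq u q) (k : A ⟶ B) :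
    IsShortExactSeq (pushout.inl k u)
      (pushout.desc 0 q (by rw [comp_zero, sesW h])) := by
  haveI := sesMono h
  haveI := sesEpi h
  have hβ : Epi (biprod.desc (pushout.inl k u) (pushout.inr k u)) := by
    constructor
    intro T a b hab
    apply pushout.hom_ext
    · simpa using biprod.inl ≫= hab
    · simpa using biprod.inr ≫= hab
  refine sesMk (pushout.inl_desc _ _ _) inferInstance
    (epi_of_epi_fac (pushout.inr_desc _ _ _)) ?_
  rw [ShortComplex.exact_iff_exact_up_to_refinements]
  intro T x₂ hx₂
  have hx₂' : x₂ ≫ pushout.desc 0 q (by rw [comp_zero, sesW h]) = 0 := hx₂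
  obtain ⟨T₁, π₁, hπ₁, x, hx⟩ := surjective_up_to_refinements_of_epi
    (biprod.desc (pushout.inl k u) (pushout.inr k u)) x₂
  have hdec : π₁ ≫ x₂ = (x ≫ biprod.fst) ≫ pushout.inl k u
      + (x ≫ biprod.snd) ≫ pushout.inr k u := by
    rw [hx, biprod.desc_eq, Preadditive.comp_add, ← Category.assoc, ← Category.assoc]
  have hIq : (x ≫ biprod.snd) ≫ q = 0 := by
    have := hdec =≫ pushout.desc 0 q (by rw [comp_zero, sesW h])
    simpa [Category.assoc, hx₂', Preadditive.add_comp] using this.symm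
  obtain ⟨T₂, π₂, hπ₂, y, hy⟩ := sesRefine h (x ≫ biprod.snd) hIq
  refine ⟨T₂, π₂ ≫ π₁, epi_comp _ _, y ≫ k + π₂ ≫ x ≫ biprod.fst, ?_⟩
  rw [Category.assoc, hdec, Preadditive.comp_add, Preadditive.add_comp]
  simp only [← Category.assoc]
  simp only [← Category.assoc] at hy
  rw [hy, show (y ≫ u) ≫ pushout.inr k u = (y ≫ k) ≫ pushout.inl k u by
    rw [Category.assoc, ← pushout.condition, ← Category.assoc], add_comm]

end PbPo

section Biprod
variable {N M I : 𝒜}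

lemma sesBiprodFst (M I : 𝒜) :
    IsShortExactSeq (biprod.inr : I ⟶ M ⊞ I) (biprod.fst : M ⊞ I ⟶ M) := by
  refine sesMk biprod.inr_fst (mono_of_mono_fac biprod.inr_snd)
    (epi_of_epi_fac biprod.inl_fst) ?_
  rw [ShortComplex.exact_iff_exact_up_to_refinements]
  intro T x₂ hx₂
  have hx₂' : x₂ ≫ (biprod.fst : M ⊞ I ⟶ M) = 0 := hx₂
  refine ⟨T, 𝟙 T, inferInstance, x₂ ≫ biprod.snd, ?_⟩
  rw [Category.id_comp]
  conv_lhs => rw [← Category.comp_id x₂, ← biprod.total]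
  rw [Preadditive.comp_add, ← Category.assoc, ← Category.assoc, hx₂', zero_comp, zero_add]

lemma sesBiprodPushout (h : N ⟶ M) {ι : N ⟶ I} (hι : Mono ι) :
    IsShortExactSeq (biprod.lift h (-ι))
      (biprod.desc (pushout.inl h ι) (pushout.inr h ι)) := by
  have w : biprod.lift h (-ι) ≫ biprod.desc (pushout.inl h ι) (pushout.inr h ι) = 0 := by
    rw [biprod.lift_desc, Preadditive.neg_comp, pushout.condition, add_neg_cancel]
  refine sesMk w ?_ ?_ (ShortComplex.exact_of_g_is_cokernel _
    (Abelian.BiproductToPushoutIsCokernel.isColimitBiproductToPushout h ι)) 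
  · apply Preadditive.mono_of_cancel_zero
    intro T z hz
    have := hz =≫ biprod.snd
    simp only [Category.assoc, biprod.lift_snd, zero_comp, Preadditive.comp_neg,
      neg_eq_zero] at this
    exact zero_of_comp_mono ι this
  · constructor
    intro T a b hab
    apply pushout.hom_ext
    · simpa using biprod.inl ≫= hab
    · simpa using biprod.inr ≫= hab

end Biprod
section DiagramVariants
variable {A B C A' B' C' K W : 𝒜}

/-- morphism of SES `(α,β,𝟙)`, `α` admissible epi with kernel `k` ⇒ `β` admissible
epi with kernel `k ≫ f`. -/
lemma sesD1 {f : A ⟶ B} {g : B ⟶ C} {f' : A' ⟶ B'} {g' : B' ⟶ C}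
    {α : A ⟶ A'} {β : B ⟶ B'} {k : K ⟶ A}
    (hr : IsShortExactSeq f g) (hr' : IsShortExactSeq f' g')
    (hk : IsShortExactSeq k α)
    (c1 : f ≫ β = α ≫ f') (c2 : β ≫ g' = g) :
    IsShortExactSeq (k ≫ f) β := by
  haveI := sesMono hr; haveI := sesEpi hr; haveI := sesMono hr'; haveI := sesEpi hr'
  haveI := sesMono hk; haveI := sesEpi hk
  have w : (k ≫ f) ≫ β = 0 := by
    rw [Category.assoc, c1, ← Category.assoc, sesW hk, zero_comp]
  refine sesMk w (mono_comp _ _) ?_ ?_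
  · rw [epi_iff_surjective_up_to_refinements]
    intro T b'
    obtain ⟨T₁, π₁, hπ₁, x, hx⟩ := surjective_up_to_refinements_of_epi g (b' ≫ g')
    have hd : (π₁ ≫ b' - x ≫ β) ≫ g' = 0 := by
      rw [Preadditive.sub_comp, Category.assoc, Category.assoc, c2, hx, sub_self]
    obtain ⟨T₂, π₂, hπ₂, a', ha'⟩ := sesRefine hr' _ hd
    obtain ⟨T₃, π₃, hπ₃, a, ha⟩ := surjective_up_to_refinements_of_epi α a'
    rw [Preadditive.comp_sub] at ha'
    have key : π₂ ≫ π₁ ≫ b' = a' ≫ f' + π₂ ≫ x ≫ β := by rw [← ha']; abel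
    refine ⟨T₃, π₃ ≫ π₂ ≫ π₁, epi_comp _ _, π₃ ≫ π₂ ≫ x + a ≫ f, ?_⟩
    calc (π₃ ≫ π₂ ≫ π₁) ≫ b' = π₃ ≫ (π₂ ≫ π₁ ≫ b') := by simp only [Category.assoc]
      _ = π₃ ≫ (a' ≫ f') + π₃ ≫ (π₂ ≫ x ≫ β) := by rw [key, Preadditive.comp_add]
      _ = (π₃ ≫ π₂ ≫ x + a ≫ f) ≫ β := by
          rw [← Category.assoc π₃ a' f', ha, Category.assoc, ← c1, Preadditive.add_comp]
          simp only [Category.assoc]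
          rw [add_comm]
  · rw [ShortComplex.exact_iff_exact_up_to_refinements]
    intro T x₂ hx₂
    have hx₂' : x₂ ≫ β = 0 := hx₂
    have hg : x₂ ≫ g = 0 := by rw [← c2, ← Category.assoc, hx₂', zero_comp]
    obtain ⟨T₁, π₁, hπ₁, a, ha⟩ := sesRefine hr x₂ hg
    have hα : (a ≫ α) ≫ f' = 0 := by
      rw [Category.assoc, ← c1, ← Category.assoc, ← ha, Category.assoc, hx₂', comp_zero]
    obtain ⟨T₂, π₂, hπ₂, z, hz⟩ := sesRefine hk a (zero_of_comp_mono f' hα)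
    exact ⟨T₂, π₂ ≫ π₁, epi_comp _ _, z, by
      rw [Category.assoc, ha, ← Category.assoc, hz, Category.assoc]⟩

/-- morphism of SES `(α,β,𝟙)`, `α` admissible mono with cokernel `w` ⇒ `β` admissible
mono with cokernel `θ`. -/
lemma sesD1m {f : A ⟶ B} {g : B ⟶ C} {f' : A' ⟶ B'} {g' : B' ⟶ C}
    {α : A ⟶ A'} {β : B ⟶ B'} {w : A' ⟶ W} {θ : B' ⟶ W}
    (hr : IsShortExactSeq f g) (hr' : IsShortExactSeq f' g')
    (hα : IsShortExactSeq α w)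
    (c1 : f ≫ β = α ≫ f') (c2 : β ≫ g' = g) (c3 : f' ≫ θ = w) (c4 : β ≫ θ = 0) :
    IsShortExactSeq β θ := by
  haveI := sesMono hr; haveI := sesEpi hr; haveI := sesMono hr'; haveI := sesEpi hr'
  haveI := sesMono hα; haveI := sesEpi hα
  refine sesMk c4 ?_ (epi_of_epi_fac c3) ?_
  · apply Preadditive.mono_of_cancel_zero
    intro T x hx
    have hg : x ≫ g = 0 := by rw [← c2, ← Category.assoc, hx, zero_comp]
    obtain ⟨T₁, π₁, hπ₁, y, hy⟩ := sesRefine hr x hg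
    have h0 : (y ≫ α) ≫ f' = 0 := by
      rw [Category.assoc, ← c1, ← Category.assoc, ← hy, Category.assoc, hx, comp_zero]
    have hy0 : y = 0 := zero_of_comp_mono α (zero_of_comp_mono f' h0)
    exact zero_of_epi_comp π₁ (by rw [hy, hy0, zero_comp])
  · rw [ShortComplex.exact_iff_exact_up_to_refinements]
    intro T x₂ hx₂
    have hx₂' : x₂ ≫ θ = 0 := hx₂
    obtain ⟨T₁, π₁, hπ₁, x, hx⟩ := surjective_up_to_refinements_of_epi g (x₂ ≫ g')
    have hd : (π₁ ≫ x₂ - x ≫ β) ≫ g' = 0 := by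
      rw [Preadditive.sub_comp, Category.assoc, Category.assoc, c2, hx, sub_self]
    obtain ⟨T₂, π₂, hπ₂, a', ha'⟩ := sesRefine hr' _ hd
    have hw : a' ≫ w = 0 := by
      rw [← c3, ← Category.assoc, ← ha', Category.assoc, Preadditive.sub_comp,
        Category.assoc, hx₂', comp_zero, Category.assoc, c4, comp_zero, sub_self,
        comp_zero]
    obtain ⟨T₃, π₃, hπ₃, z, hz⟩ := sesRefine hα a' hw
    rw [Preadditive.comp_sub] at ha'
    have key : π₂ ≫ π₁ ≫ x₂ = a' ≫ f' + π₂ ≫ x ≫ β := by rw [← ha']; abel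
    refine ⟨T₃, π₃ ≫ π₂ ≫ π₁, epi_comp _ _, z ≫ f + π₃ ≫ π₂ ≫ x, ?_⟩
    calc (π₃ ≫ π₂ ≫ π₁) ≫ x₂ = π₃ ≫ (π₂ ≫ π₁ ≫ x₂) := by simp only [Category.assoc]
      _ = π₃ ≫ (a' ≫ f') + π₃ ≫ (π₂ ≫ x ≫ β) := by rw [key, Preadditive.comp_add]
      _ = (z ≫ f + π₃ ≫ π₂ ≫ x) ≫ β := by
          rw [← Category.assoc π₃ a' f', hz, Category.assoc, ← c1, Preadditive.add_comp]
          simp only [Category.assoc]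

/-- morphism of SES `(𝟙,β,γ)`, `γ` admissible mono with cokernel `w` ⇒ `β` admissible
mono with cokernel `g' ≫ w`. -/
lemma sesD1' {f : A ⟶ B} {g : B ⟶ C} {f' : A ⟶ B'} {g' : B' ⟶ C'}
    {β : B ⟶ B'} {γ : C ⟶ C'} {w : C' ⟶ W}
    (hr : IsShortExactSeq f g) (hr' : IsShortExactSeq f' g')
    (hγ : IsShortExactSeq γ w)
    (c1 : f ≫ β = f') (c2 : β ≫ g' = g ≫ γ) :
    IsShortExactSeq β (g' ≫ w) := by
  haveI := sesMono hr; haveI := sesEpi hr; haveI := sesMono hr'; haveI := sesEpi hr'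
  haveI := sesMono hγ; haveI := sesEpi hγ
  have wz : β ≫ g' ≫ w = 0 := by
    rw [← Category.assoc, c2, Category.assoc, sesW hγ, comp_zero]
  refine sesMk wz ?_ (epi_comp _ _) ?_
  · apply Preadditive.mono_of_cancel_zero
    intro T x hx
    have hg : x ≫ g = 0 := by
      have : (x ≫ g) ≫ γ = 0 := by
        rw [Category.assoc, ← c2, ← Category.assoc, hx, zero_comp]
      exact zero_of_comp_mono γ this
    obtain ⟨T₁, π₁, hπ₁, y, hy⟩ := sesRefine hr x hg
    have h0 : y ≫ f' = 0 := by
      rw [← c1, ← Category.assoc, ← hy, Category.assoc, hx, comp_zero]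
    have hy0 : y = 0 := zero_of_comp_mono f' h0
    exact zero_of_epi_comp π₁ (by rw [hy, hy0, zero_comp])
  · rw [ShortComplex.exact_iff_exact_up_to_refinements]
    intro T x₂ hx₂
    have hx₂' : x₂ ≫ g' ≫ w = 0 := hx₂
    obtain ⟨T₁, π₁, hπ₁, cc, hcc⟩ := sesRefine hγ (x₂ ≫ g')
      (by rw [Category.assoc]; exact hx₂')
    obtain ⟨T₂, π₂, hπ₂, x, hx⟩ := surjective_up_to_refinements_of_epi g cc
    have hd : (π₂ ≫ π₁ ≫ x₂ - x ≫ β) ≫ g' = 0 := by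
      rw [Preadditive.sub_comp, Category.assoc, Category.assoc, Category.assoc, c2, hcc,
        ← Category.assoc, hx, Category.assoc, sub_self]
    obtain ⟨T₃, π₃, hπ₃, a, ha⟩ := sesRefine hr' _ hd
    rw [Preadditive.comp_sub] at ha
    have key : π₃ ≫ π₂ ≫ π₁ ≫ x₂ = a ≫ f' + π₃ ≫ x ≫ β := by rw [← ha]; abel
    refine ⟨T₃, π₃ ≫ π₂ ≫ π₁, epi_comp _ _, a ≫ f + π₃ ≫ x, ?_⟩
    calc (π₃ ≫ π₂ ≫ π₁) ≫ x₂ = π₃ ≫ π₂ ≫ π₁ ≫ x₂ := by simp only [Category.assoc]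
      _ = a ≫ f' + π₃ ≫ x ≫ β := key
      _ = (a ≫ f + π₃ ≫ x) ≫ β := by
          rw [← c1, Preadditive.add_comp]
          simp only [Category.assoc]

/-- morphism of SES `(𝟙,β,γ)`, `β` admissible epi with kernel `k` ⇒ `γ` admissible
epi with kernel `k ≫ g`. -/
lemma sesD2 {f : A ⟶ B} {g : B ⟶ C} {f' : A ⟶ B'} {g' : B' ⟶ C'}
    {β : B ⟶ B'} {γ : C ⟶ C'} {k : K ⟶ B}
    (hr : IsShortExactSeq f g) (hr' : IsShortExactSeq f' g')
    (hβ : IsShortExactSeq k β)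
    (c1 : f ≫ β = f') (c2 : β ≫ g' = g ≫ γ) :
    IsShortExactSeq (k ≫ g) γ := by
  haveI := sesMono hr; haveI := sesEpi hr; haveI := sesMono hr'; haveI := sesEpi hr'
  haveI := sesMono hβ; haveI := sesEpi hβ
  have w : (k ≫ g) ≫ γ = 0 := by
    rw [Category.assoc, ← c2, ← Category.assoc, sesW hβ, zero_comp]
  refine sesMk w ?_ ?_ ?_
  · apply Preadditive.mono_of_cancel_zero
    intro T x hx
    rw [← Category.assoc] at hx
    obtain ⟨T₁, π₁, hπ₁, y, hy⟩ := sesRefine hr (x ≫ k) hx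
    have h0 : y ≫ f' = 0 := by
      rw [← c1, ← Category.assoc, ← hy, Category.assoc, Category.assoc, sesW hβ,
        comp_zero, comp_zero]
    have hy0 : y = 0 := zero_of_comp_mono f' h0
    have : π₁ ≫ x = 0 := zero_of_comp_mono k (by rw [Category.assoc, hy, hy0, zero_comp])
    exact zero_of_epi_comp π₁ this
  · rw [epi_iff_surjective_up_to_refinements]
    intro T c'
    obtain ⟨T₁, π₁, hπ₁, b', hb'⟩ := surjective_up_to_refinements_of_epi g' c'
    obtain ⟨T₂, π₂, hπ₂, b, hb⟩ := surjective_up_to_refinements_of_epi β b'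
    refine ⟨T₂, π₂ ≫ π₁, epi_comp _ _, b ≫ g, ?_⟩
    rw [Category.assoc, Category.assoc, hb', ← Category.assoc, hb, Category.assoc, c2,
      ← Category.assoc]
  · rw [ShortComplex.exact_iff_exact_up_to_refinements]
    intro T x₂ hx₂
    have hx₂' : x₂ ≫ γ = 0 := hx₂
    obtain ⟨T₁, π₁, hπ₁, b, hb⟩ := surjective_up_to_refinements_of_epi g x₂
    have hbg : (b ≫ β) ≫ g' = 0 := by
      rw [Category.assoc, c2, ← Category.assoc, ← hb, Category.assoc, hx₂', comp_zero]
    obtain ⟨T₂, π₂, hπ₂, a, ha⟩ := sesRefine hr' _ hbg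
    have hd : (π₂ ≫ b - a ≫ f) ≫ β = 0 := by
      rw [Preadditive.sub_comp, Category.assoc, Category.assoc, c1, ha, sub_self]
    obtain ⟨T₃, π₃, hπ₃, z, hz⟩ := sesRefine hβ _ hd
    rw [Preadditive.comp_sub] at hz
    refine ⟨T₃, π₃ ≫ π₂ ≫ π₁, epi_comp _ _, z, ?_⟩
    have key : π₃ ≫ π₂ ≫ b = z ≫ k + π₃ ≫ a ≫ f := by rw [← hz]; abel
    calc (π₃ ≫ π₂ ≫ π₁) ≫ x₂ = π₃ ≫ π₂ ≫ π₁ ≫ x₂ := by simp only [Category.assoc]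
      _ = (π₃ ≫ π₂ ≫ b) ≫ g := by rw [hb]; simp only [Category.assoc]
      _ = (z ≫ k) ≫ g + π₃ ≫ a ≫ f ≫ g := by
          rw [key, Preadditive.add_comp]; simp only [Category.assoc]
      _ = z ≫ k ≫ g := by rw [sesW hr]; simp
  
/-- morphism of SES `(𝟙,β,γ)`, `β` admissible mono with cokernel `w` ⇒ `γ` admissible
mono with cokernel `θ`. -/
lemma sesD2m {f : A ⟶ B} {g : B ⟶ C} {f' : A ⟶ B'} {g' : B' ⟶ C'}
    {β : B ⟶ B'} {γ : C ⟶ C'} {w : B' ⟶ W} {θ : C' ⟶ W}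
    (hr : IsShortExactSeq f g) (hr' : IsShortExactSeq f' g')
    (hβ : IsShortExactSeq β w)
    (c1 : f ≫ β = f') (c2 : β ≫ g' = g ≫ γ) (c3 : g' ≫ θ = w) :
    IsShortExactSeq γ θ := by
  haveI := sesMono hr; haveI := sesEpi hr; haveI := sesMono hr'; haveI := sesEpi hr'
  haveI := sesMono hβ; haveI := sesEpi hβ
  have wz : γ ≫ θ = 0 := by
    have : g ≫ γ ≫ θ = 0 := by
      rw [← Category.assoc, ← c2, Category.assoc, c3, sesW hβ]
    exact zero_of_epi_comp g this
  refine sesMk wz ?_ (epi_of_epi_fac c3) ?_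
  · apply Preadditive.mono_of_cancel_zero
    intro T x hx
    obtain ⟨T₁, π₁, hπ₁, b, hb⟩ := surjective_up_to_refinements_of_epi g x
    have hbg : (b ≫ β) ≫ g' = 0 := by
      rw [Category.assoc, c2, ← Category.assoc, ← hb, Category.assoc, hx, comp_zero]
    obtain ⟨T₂, π₂, hπ₂, a, ha⟩ := sesRefine hr' _ hbg
    have hd : (π₂ ≫ b - a ≫ f) ≫ β = 0 := by
      rw [Preadditive.sub_comp, Category.assoc, Category.assoc, c1, ha, sub_self]
    have he : π₂ ≫ b = a ≫ f := by
      have := zero_of_comp_mono β hd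
      rwa [sub_eq_zero] at this
    have : (π₂ ≫ π₁) ≫ x = 0 := by
      rw [Category.assoc, hb, ← Category.assoc, he, Category.assoc, sesW hr, comp_zero]
    exact zero_of_epi_comp (π₂ ≫ π₁) this
  · rw [ShortComplex.exact_iff_exact_up_to_refinements]
    intro T x₂ hx₂
    have hx₂' : x₂ ≫ θ = 0 := hx₂
    obtain ⟨T₁, π₁, hπ₁, b', hb'⟩ := surjective_up_to_refinements_of_epi g' x₂
    have hw : b' ≫ w = 0 := by
      rw [← c3, ← Category.assoc, ← hb', Category.assoc, hx₂', comp_zero]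
    obtain ⟨T₂, π₂, hπ₂, b, hb⟩ := sesRefine hβ b' hw
    refine ⟨T₂, π₂ ≫ π₁, epi_comp _ _, b ≫ g, ?_⟩
    rw [Category.assoc, Category.assoc, hb', ← Category.assoc, hb, Category.assoc, c2,
      ← Category.assoc]

/-- morphism of SES `(α,β,𝟙)`, `β` admissible epi with kernel `k` ⇒ `α` admissible
epi with kernel `κ` (the lift of `k` along `f`). -/
lemma sesD3 {f : A ⟶ B} {g : B ⟶ C} {f' : A' ⟶ B'} {g' : B' ⟶ C}
    {α : A ⟶ A'} {β : B ⟶ B'} {k : K ⟶ B} {κ : K ⟶ A}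
    (hr : IsShortExactSeq f g) (hr' : IsShortExactSeq f' g')
    (hβ : IsShortExactSeq k β)
    (c1 : f ≫ β = α ≫ f') (c2 : β ≫ g' = g) (c5 : κ ≫ f = k) :
    IsShortExactSeq κ α := by
  haveI := sesMono hr; haveI := sesEpi hr; haveI := sesMono hr'; haveI := sesEpi hr'
  haveI := sesMono hβ; haveI := sesEpi hβ
  have wz : κ ≫ α = 0 := by
    have : (κ ≫ α) ≫ f' = 0 := by
      rw [Category.assoc, ← c1, ← Category.assoc, c5, sesW hβ]
    exact zero_of_comp_mono f' this
  refine sesMk wz (mono_of_mono_fac c5) ?_ ?_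
  · rw [epi_iff_surjective_up_to_refinements]
    intro T a'
    obtain ⟨T₁, π₁, hπ₁, b, hb⟩ := surjective_up_to_refinements_of_epi β (a' ≫ f')
    have hbg : b ≫ g = 0 := by
      rw [← c2, ← Category.assoc, ← hb]
      rw [Category.assoc, Category.assoc, sesW hr', comp_zero, comp_zero]
    obtain ⟨T₂, π₂, hπ₂, a, ha⟩ := sesRefine hr b hbg
    refine ⟨T₂, π₂ ≫ π₁, epi_comp _ _, a, ?_⟩
    have h1 : ((π₂ ≫ π₁) ≫ a') ≫ f' = (a ≫ α) ≫ f' := by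
      rw [Category.assoc, Category.assoc, hb, ← Category.assoc, ha, Category.assoc, c1,
        ← Category.assoc]
    exact (cancel_mono f').1 h1
  · rw [ShortComplex.exact_iff_exact_up_to_refinements]
    intro T x₂ hx₂
    have hx₂' : x₂ ≫ α = 0 := hx₂
    have h0 : (x₂ ≫ f) ≫ β = 0 := by
      rw [Category.assoc, c1, ← Category.assoc, hx₂', zero_comp]
    obtain ⟨T₁, π₁, hπ₁, z, hz⟩ := sesRefine hβ _ h0
    refine ⟨T₁, π₁, hπ₁, z, ?_⟩
    have : (π₁ ≫ x₂) ≫ f = (z ≫ κ) ≫ f := by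
      rw [Category.assoc, hz, ← c5, ← Category.assoc]
    exact (cancel_mono f).1 this

end DiagramVariants


section CotorsionLayer

variable {E Cc Ip Zc : 𝒜 → Prop}

lemma eOfC (S : CotorsionSetup E Cc Ip Zc) {X : 𝒜} (h : Cc X) : E X :=
  ((S.cp.left_eq X).1 h).1

lemma eOfI (S : CotorsionSetup E Cc Ip Zc) {X : 𝒜} (h : Ip X) : E X :=
  ((S.cp.right_eq X).1 h).1

lemma ext1 (S : CotorsionSetup E Cc Ip Zc) {X Y : 𝒜} (hX : Cc X) (hY : Ip Y) :
    Ext1IsZero E X Y := ((S.cp.left_eq X).1 hX).2 hY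

/-- `Cc` is closed under extensions. -/
lemma ccExt_s7 (S : CotorsionSetup E Cc Ip Zc)
    {X₁ X X₂ : 𝒜} {m : X₁ ⟶ X} {e : X ⟶ X₂} (hs : IsShortExactSeq m e)
    (h1 : Cc X₁) (h2 : Cc X₂) : Cc X := by
  rw [S.cp.left_eq]
  refine ⟨S.extClosedE m e hs (eOfC S h1) (eOfC S h2), ?_⟩
  intro Y hY M f g hM hfg
  haveI := sesMono hs; haveI := sesEpi hs
  haveI := sesMono hfg; haveI := sesEpi hfg
  have hP := sesPullback hfg m
  have hEP : E (pullback g m) := S.extClosedE _ _ hP (eOfI S hY) (eOfC S h1)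
  obtain ⟨r₁, hr₁⟩ := ext1 S h1 hY _ _ hEP hP
  have spl : (ShortComplex.mk _ _ (sesW hP)).Splitting :=
    ShortComplex.Splitting.ofExactOfRetraction _ (sesExact hP (sesW hP)) r₁ hr₁ (sesEpi hP)
  have hσ' : spl.s ≫ pullback.snd g m = 𝟙 X₁ := spl.s_g
  have hσg : (spl.s ≫ pullback.fst g m) ≫ g = m := by
    rw [Category.assoc, pullback.condition, ← Category.assoc, hσ', Category.id_comp]
  have hσmono : Mono (spl.s ≫ pullback.fst g m) := mono_of_mono_fac hσg
  have hses1 := sesCokernel hσmono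
  obtain ⟨gbar, hgbar⟩ := sesDesc hses1 (g ≫ e)
    (by rw [← Category.assoc, hσg, sesW hs])
  have hses2 : IsShortExactSeq (f ≫ cokernel.π (spl.s ≫ pullback.fst g m)) gbar :=
    sesD2 hses1 hs hfg hσg hgbar.symm
  have hEC : E (cokernel (spl.s ≫ pullback.fst g m)) :=
    S.extClosedE _ _ hses2 (eOfI S hY) (eOfC S h2)
  obtain ⟨r₂, hr₂⟩ := ext1 S h2 hY _ _ hEC hses2
  exact ⟨cokernel.π _ ≫ r₂, by rw [← Category.assoc]; exact hr₂⟩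

/-- Step A: an admissible epi with kernel in `Cc ∩ Zc` factors as an acyclic
cofibration followed by an admissible epi with kernel in `Cc ∩ Ip`. -/
lemma stepA (S : CotorsionSetup E Cc Ip Zc)
    {M Y K : 𝒜} {p : M ⟶ Y} {k : K ⟶ M}
    (hM : Cc M) (hK : Cc K) (hKz : Zc K) (hks : IsShortExactSeq k p) :
    ∃ (N : 𝒜) (j : M ⟶ N) (q : N ⟶ Y), Cc N ∧ j ≫ q = p ∧
      (∃ (W : 𝒜) (w : N ⟶ W), Cc W ∧ Zc W ∧ IsShortExactSeq j w) ∧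
      (∃ (I : 𝒜) (i : I ⟶ N), Ip I ∧ Cc I ∧ IsShortExactSeq i q) := by
  obtain ⟨I, P, u, π, hI, hP, hup⟩ := S.complete.1 K (eOfC S hK)
  have hIc : Cc I := ccExt_s7 S hup hK hP
  have hPz : Zc P := S.zcCokerClosed u π hup hK hIc hP hKz (S.iSubZ hI)
  have hinl := sesPushoutInl hup k
  have hinr := sesPushoutInr hks u
  refine ⟨pushout k u, pushout.inl k u, pushout.desc p 0 (by rw [sesW hks, comp_zero]),
    ccExt_s7 S hinl hM hP, pushout.inl_desc _ _ _, ⟨P, _, hP, hPz, hinl⟩,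
    ⟨I, pushout.inr k u, hI, hIc, hinr⟩⟩

/-- Composition of admissible monos with `Cc ∩ Zc` cokernels. -/
lemma monoComp (S : CotorsionSetup E Cc Ip Zc)
    {X M N W₁ W₂ : 𝒜} {i : X ⟶ M} {j : M ⟶ N} {w₁ : M ⟶ W₁} {w₂ : N ⟶ W₂}
    (h₁ : IsShortExactSeq i w₁) (h₂ : IsShortExactSeq j w₂)
    (hW₁ : Cc W₁) (hW₁z : Zc W₁) (hW₂ : Cc W₂) (hW₂z : Zc W₂) :
    ∃ (V : 𝒜) (v : N ⟶ V), Cc V ∧ Zc V ∧ IsShortExactSeq (i ≫ j) v := by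
  haveI := sesMono h₁; haveI := sesMono h₂
  have hm : Mono (i ≫ j) := mono_comp _ _
  have hses0 := sesCokernel hm
  obtain ⟨γ, hγ⟩ := sesDesc h₁ (j ≫ cokernel.π (i ≫ j))
    (by rw [← Category.assoc, cokernel.condition])
  obtain ⟨θ, hθ⟩ := sesDesc hses0 w₂ (by rw [Category.assoc, sesW h₂, comp_zero])
  have hses2 : IsShortExactSeq γ θ := sesD2m h₁ hses0 h₂ rfl hγ.symm hθ
  have hV : Cc (cokernel (i ≫ j)) := ccExt_s7 S hses2 hW₁ hW₂
  exact ⟨_, cokernel.π _, hV,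
    S.zcExtClosed γ θ hses2 hW₁ hV hW₂ hW₁z hW₂z, hses0⟩

/-- Composition of admissible epis with `Cc ∩ Zc` kernels. -/
lemma epiComp (S : CotorsionSetup E Cc Ip Zc)
    {N Y Z K₁ K₂ : 𝒜} {q : N ⟶ Y} {p : Y ⟶ Z} {k₁ : K₁ ⟶ N} {k₂ : K₂ ⟶ Y}
    (h₁ : IsShortExactSeq k₁ q) (h₂ : IsShortExactSeq k₂ p)
    (hK₁ : Cc K₁) (hK₁z : Zc K₁) (hK₂ : Cc K₂) (hK₂z : Zc K₂) :
    ∃ (T : 𝒜) (t : T ⟶ N), Cc T ∧ Zc T ∧ IsShortExactSeq t (q ≫ p) := by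
  haveI := sesEpi h₁; haveI := sesEpi h₂
  have he : Epi (q ≫ p) := epi_comp _ _
  have hses0 := sesKernel he
  obtain ⟨τ, hτ⟩ := sesLift h₂ (kernel.ι (q ≫ p) ≫ q)
    (by rw [Category.assoc, kernel.condition])
  obtain ⟨κ, hκ⟩ := sesLift hses0 k₁ (by rw [← Category.assoc, sesW h₁, zero_comp])
  have hses2 : IsShortExactSeq κ τ := sesD3 hses0 h₂ h₁ hτ.symm rfl hκ
  have hT : Cc (kernel (q ≫ p)) := ccExt_s7 S hses2 hK₁ hK₂
  exact ⟨_, kernel.ι _, hT, S.zcExtClosed κ τ hses2 hK₁ hT hK₂ hK₁z hK₂z, hses0⟩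

end CotorsionLayer


section Factorizations

variable {E Cc Ip Zc : 𝒜 → Prop}

/-- Step B: swap an admissible epi with `Cc ∩ Ip` kernel past an acyclic
cofibration (up to replacing both). -/
lemma stepB (S : CotorsionSetup E Cc Ip Zc)
    {N₂ Q' Nn Wc Iq : 𝒜} {q : N₂ ⟶ Q'} {ψ : Q' ⟶ Nn} {kq : Iq ⟶ N₂} {wψ : Nn ⟶ Wc}
    (hq : IsShortExactSeq kq q) (hIqc : Cc Iq) (hIqi : Ip Iq)
    (hN₂ : Cc N₂) (hQ' : Cc Q') (hNn : Cc Nn)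
    (hψ : IsShortExactSeq ψ wψ) (hWc : Cc Wc) (hWz : Zc Wc) :
    ∃ (Mid : 𝒜) (m : N₂ ⟶ Mid) (pr : Mid ⟶ Nn), m ≫ pr = q ≫ ψ ∧ Cc Mid ∧
      (∃ (G : 𝒜) (gc : Mid ⟶ G), Cc G ∧ Zc G ∧ IsShortExactSeq m gc) ∧
      (∃ (J : 𝒜) (jm : J ⟶ Mid), Ip J ∧ Cc J ∧ IsShortExactSeq jm pr) := by
  obtain ⟨IN, PN, ι, π', hIN, hPN, hιπ⟩ := S.complete.1 N₂ (eOfC S hN₂)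
  haveI := sesMono hιπ
  have hINc : Cc IN := ccExt_s7 S hιπ hN₂ hPN
  have hbp := sesBiprodPushout (q ≫ ψ) (sesMono hιπ)
  have hbf := sesBiprodFst Nn IN
  have hinlG := sesPushoutInl hιπ (q ≫ ψ)
  have hCG : Cc (pushout (q ≫ ψ) ι) := ccExt_s7 S hinlG hNn hPN
  have hinlG₁ := sesPushoutInl hιπ q
  have hCG₁ : Cc (pushout q ι) := ccExt_s7 S hinlG₁ hQ' hPN
  have hinr₁ : IsShortExactSeq (kq ≫ ι) (pushout.inr q ι) :=
    sesD1 hιπ hinlG₁ hq pushout.condition.symm (pushout.inr_desc _ _ _)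
  have hZG₁ : Zc (pushout q ι) :=
    S.zcCokerClosed (kq ≫ ι) _ hinr₁ hIqc hINc hCG₁ (S.iSubZ hIqi) (S.iSubZ hIN)
  have hφcond : q ≫ ψ ≫ pushout.inl (q ≫ ψ) ι = ι ≫ pushout.inr (q ≫ ψ) ι := by
    rw [← Category.assoc]; exact pushout.condition
  have hθcond : (q ≫ ψ) ≫ wψ = ι ≫ (0 : IN ⟶ Wc) := by
    rw [Category.assoc, sesW hψ, comp_zero, comp_zero]
  have hsφ : IsShortExactSeq (pushout.desc (ψ ≫ pushout.inl (q ≫ ψ) ι)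
      (pushout.inr (q ≫ ψ) ι) hφcond) (pushout.desc wψ 0 hθcond) := by
    refine sesD1m hinlG₁ hinlG hψ (pushout.inl_desc _ _ _) ?_
      (pushout.inl_desc _ _ _) ?_
    · apply pushout.hom_ext <;> simp
    · apply pushout.hom_ext <;> simp [sesW hψ]
  have hZG : Zc (pushout (q ≫ ψ) ι) :=
    S.zcExtClosed _ _ hsφ hCG₁ hCG hWc hZG₁ hWz
  exact ⟨Nn ⊞ IN, biprod.lift (q ≫ ψ) (-ι), biprod.fst, biprod.lift_fst _ _,
    ccExt_s7 S hbf hINc hNn, ⟨pushout (q ≫ ψ) ι, _, hCG, hZG, hbp⟩,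
    ⟨IN, biprod.inr, hIN, hINc, hbf⟩⟩

/-- A map factoring as an admissible mono with `Cc ∩ Zc` cokernel followed by an
admissible epi with `Cc ∩ Zc` kernel (all objects in `Cc`) is a weak equivalence. -/
lemma isWE_of_factor (S : CotorsionSetup E Cc Ip Zc)
    {X M Y K : 𝒜} {i : X ⟶ M} {p : M ⟶ Y} {k : K ⟶ M}
    (hX : Cc X) (hM : Cc M) (hY : Cc Y)
    (hi : ∃ (W : 𝒜) (w : M ⟶ W), Cc W ∧ Zc W ∧ IsShortExactSeq i w)
    (hK : Cc K) (hKz : Zc K) (hks : IsShortExactSeq k p) :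
    IsWeakEquiv E Cc Ip Zc (i ≫ p) := by
  obtain ⟨N, j, qq, hN, hjq, ⟨W₂, w₂, hW₂, hW₂z, hjses⟩, ⟨I, ii, hIi, hIc, hiq⟩⟩ :=
    stepA S hM hK hKz hks
  obtain ⟨W, w, hW, hWz, hiw⟩ := hi
  obtain ⟨V, v, hV, hVz, hvses⟩ := monoComp S hiw hjses hW hWz hW₂ hW₂z
  exact ⟨hX, hY, N, i ≫ j, qq, ⟨hX, hN, V, v, hV, hVz, hvses⟩,
    ⟨eOfC S hN, eOfC S hY, I, ii, hIi, hiq⟩, by rw [Category.assoc, hjq]⟩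

/-- Composition of two maps, each factored as acyclic-cofibration-like mono
followed by admissible epi with `Cc ∩ Zc` kernel, is a weak equivalence. -/
lemma weComp (S : CotorsionSetup E Cc Ip Zc)
    {B Q' B' M₁ M₂ : 𝒜} {i₁ : B ⟶ M₁} {p₁ : M₁ ⟶ Q'} {i₂ : Q' ⟶ M₂} {p₂ : M₂ ⟶ B'}
    (hB : Cc B) (hQ' : Cc Q') (hB' : Cc B') (hM₁ : Cc M₁) (hM₂ : Cc M₂)
    (hi₁ : ∃ (W : 𝒜) (w : M₁ ⟶ W), Cc W ∧ Zc W ∧ IsShortExactSeq i₁ w)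
    (hp₁ : ∃ (K : 𝒜) (k : K ⟶ M₁), Cc K ∧ Zc K ∧ IsShortExactSeq k p₁)
    (hi₂ : ∃ (W : 𝒜) (w : M₂ ⟶ W), Cc W ∧ Zc W ∧ IsShortExactSeq i₂ w)
    (hp₂ : ∃ (K : 𝒜) (k : K ⟶ M₂), Cc K ∧ Zc K ∧ IsShortExactSeq k p₂) :
    IsWeakEquiv E Cc Ip Zc ((i₁ ≫ p₁) ≫ (i₂ ≫ p₂)) := by
  obtain ⟨K₁, k₁, hK₁, hK₁z, hk₁⟩ := hp₁
  obtain ⟨N, j, qq, hN, hjq, ⟨P, wP, hP, hPz, hjses⟩, ⟨I, iI, hIi, hIc, hiq⟩⟩ :=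
    stepA S hM₁ hK₁ hK₁z hk₁
  obtain ⟨W₂, w₂, hW₂, hW₂z, hi₂ses⟩ := hi₂
  obtain ⟨Mid, m, pr, hmpr, hMid, ⟨G, gc, hG, hGz, hmses⟩, ⟨J, jm, hJi, hJc, hjmses⟩⟩ :=
    stepB S hiq hIc hIi hN hQ' hM₂ hi₂ses hW₂ hW₂z
  obtain ⟨W₁, w₁, hW₁, hW₁z, hi₁ses⟩ := hi₁
  obtain ⟨V₁, v₁, hV₁, hV₁z, hv₁⟩ := monoComp S hi₁ses hjses hW₁ hW₁z hP hPz
  obtain ⟨V₂, v₂, hV₂, hV₂z, hv₂⟩ := monoComp S hv₁ hmses hV₁ hV₁z hG hGz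
  obtain ⟨K₂, k₂, hK₂, hK₂z, hk₂⟩ := hp₂
  obtain ⟨T, tt, hT, hTz, htses⟩ := epiComp S hjmses hk₂ hJc (S.iSubZ hJi) hK₂ hK₂z
  have hwe := isWE_of_factor S hB hMid hB' ⟨V₂, v₂, hV₂, hV₂z, hv₂⟩ hT hTz htses
  have heq : ((i₁ ≫ j) ≫ m) ≫ (pr ≫ p₂) = (i₁ ≫ p₁) ≫ (i₂ ≫ p₂) := by
    simp only [Category.assoc]
    rw [reassoc_of% hmpr, reassoc_of% hjq]
  rwa [heq] at hwe

end Factorizations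


/-- **Extension axiom.** In the standing setup, given a morphism
of short exact sequences in `Cc`, i.e. a commutative diagram with exact rows
`0 → A → B → C₀ → 0` and `0 → A' → B' → C' → 0` and vertical maps
`a : A ⟶ A'`, `b : B ⟶ B'`, `c : C₀ ⟶ C'`, if `a` and `c` are weak
equivalences then so is `b`. -/
theorem extension_axiom
    (E Cc Ip Zc : 𝒜 → Prop) (S : CotorsionSetup E Cc Ip Zc)
    {A B C₀ A' B' C' : 𝒜}
    (f : A ⟶ B) (g : B ⟶ C₀) (f' : A' ⟶ B') (g' : B' ⟶ C')
    (a : A ⟶ A') (b : B ⟶ B') (c : C₀ ⟶ C')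
    (hA : Cc A) (hB : Cc B) (hC : Cc C₀)
    (hA' : Cc A') (hB' : Cc B') (hC' : Cc C')
    (hrow : IsShortExactSeq f g) (hrow' : IsShortExactSeq f' g')
    (wf : f ≫ b = a ≫ f') (wg : g ≫ c = b ≫ g')
    (ha : IsWeakEquiv E Cc Ip Zc a) (hc : IsWeakEquiv E Cc Ip Zc c) :
    IsWeakEquiv E Cc Ip Zc b := by
  obtain ⟨_, _, MA, iA, pA, hACa, hAFa, hfa⟩ := ha
  obtain ⟨_, hMA, WA, wA, hWAc, hWAz, hiAses⟩ := hACa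
  obtain ⟨_, _, KA, kA, hKAi, hkAses⟩ := hAFa
  have hKAc : Cc KA := S.hereditary kA pA hkAses (eOfI S hKAi) hMA hA'
  obtain ⟨_, _, MC, iC, pC, hACc, hAFc, hfc⟩ := hc
  obtain ⟨_, hMC, WC, wC, hWCc, hWCz, hiCses⟩ := hACc
  obtain ⟨_, _, KC, kC, hKCi, hkCses⟩ := hAFc
  have hKCc : Cc KC := S.hereditary kC pC hkCses (eOfI S hKCi) hMC hC'
  -- middle object Q' := pushout f a with b = pushout.inl ≫ pushout.desc b f' wf
  have hQses := sesPushoutInr hrow a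
  have hQ'c : Cc (pushout f a) := ccExt_s7 S hQses hA' hC
  have hts : pushout.inl f a ≫ pushout.desc b f' wf = b := pushout.inl_desc _ _ _
  -- factor pushout.inl f a through Q₁ := pushout f iA
  have hQ₁inl := sesPushoutInl hiAses f
  have hQ₁inr := sesPushoutInr hrow iA
  have hQ₁c : Cc (pushout f iA) := ccExt_s7 S hQ₁inr hMA hC
  have hvcond : f ≫ pushout.inl f a = iA ≫ pA ≫ pushout.inr f a := by
    rw [pushout.condition, ← hfa, Category.assoc]
  have htv : pushout.inl f iA ≫
      pushout.desc (pushout.inl f a) (pA ≫ pushout.inr f a) hvcond = pushout.inl f a :=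
    pushout.inl_desc _ _ _
  have hv : IsShortExactSeq (kA ≫ pushout.inr f iA)
      (pushout.desc (pushout.inl f a) (pA ≫ pushout.inr f a) hvcond) := by
    refine sesD1 hQ₁inr hQses hkAses (pushout.inr_desc _ _ _) ?_
    apply pushout.hom_ext <;> simp
  -- factor pushout.desc b f' wf through N := pullback g' pC
  have hNses := sesPullback hrow' pC
  have hNc : Cc (pullback g' pC) := ccExt_s7 S hNses hA' hMC
  have hN' := sesPullback hkCses g'
  have hfstses := sesIsoMid hN' (pullbackSymmetry pC g')
  rw [pullbackSymmetry_inv_comp_snd] at hfstses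
  have hψcond : pushout.desc b f' wf ≫ g' =
      (pushout.desc g 0 (by rw [sesW hrow, comp_zero]) ≫ iC) ≫ pC := by
    rw [Category.assoc, hfc]
    apply pushout.hom_ext
    · simpa using wg.symm
    · simp [sesW hrow']
  have hψfst : pullback.lift (pushout.desc b f' wf)
      (pushout.desc g 0 (by rw [sesW hrow, comp_zero]) ≫ iC) hψcond ≫
      pullback.fst g' pC = pushout.desc b f' wf := pullback.lift_fst _ _ _
  have hψses : IsShortExactSeq
      (pullback.lift (pushout.desc b f' wf)
        (pushout.desc g 0 (by rw [sesW hrow, comp_zero]) ≫ iC) hψcond)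
      (pullback.snd g' pC ≫ wC) := by
    refine sesD1' hQses hNses hiCses ?_ (pullback.lift_snd _ _ _)
    apply pullback.hom_ext <;> simp [sesW hrow']
  have hwe := weComp S hB hQ'c hB' hQ₁c hNc
    ⟨WA, _, hWAc, hWAz, hQ₁inl⟩
    ⟨KA, _, hKAc, S.iSubZ hKAi, hv⟩
    ⟨WC, _, hWCc, hWCz, hψses⟩
    ⟨KC, _, hKCc, S.iSubZ hKCi, hfstses⟩
  have hfin : (pushout.inl f iA ≫
      pushout.desc (pushout.inl f a) (pA ≫ pushout.inr f a) hvcond) ≫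
      (pullback.lift (pushout.desc b f' wf)
        (pushout.desc g 0 (by rw [sesW hrow, comp_zero]) ≫ iC) hψcond ≫
        pullback.fst g' pC) = b := by
    rw [htv, hψfst, hts]
  rwa [hfin] at hwe
end

section
/- (Saturation) The class of weak equivalences satisfies the saturation axiom (for composable morphisms f and g in 𝒞, whenever two of f, g, and gf are weak equivalences, so is the third) if and only if 𝒵 ∩ 𝒞 has the 2-out-of-3 property for short exact sequences in 𝒞 (whenever two of the three terms of a short exact sequence in 𝒞 lie in 𝒵 ∩ 𝒞, so does the third). -/
open CategoryTheory CategoryTheory.Limits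

universe v u

variable {𝒜 : Type u} [Category.{v} 𝒜] [Abelian 𝒜]

namespace Tool

variable {X Y Z K W : 𝒜}


variable {X Y Z X' Y' Z' : 𝒜}

theorem ses_zero {f : X ⟶ Y} {g : Y ⟶ Z} (h : IsShortExactSeq f g) : f ≫ g = 0 := h.1

theorem ses_mono {f : X ⟶ Y} {g : Y ⟶ Z} (h : IsShortExactSeq f g) : Mono f :=
  h.2.mono_f

theorem ses_epi {f : X ⟶ Y} {g : Y ⟶ Z} (h : IsShortExactSeq f g) : Epi g :=
  h.2.epi_g

/-- kernel universal property -/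
theorem ses_lift {f : X ⟶ Y} {g : Y ⟶ Z} (h : IsShortExactSeq f g) {T : 𝒜}
    (t : T ⟶ Y) (ht : t ≫ g = 0) : ∃ u : T ⟶ X, u ≫ f = t := by
  obtain ⟨w, hse⟩ := h
  have : Mono f := hse.mono_f
  have hlim : IsLimit (KernelFork.ofι (ShortComplex.mk f g w).f (ShortComplex.mk f g w).zero) :=
    hse.exact.fIsKernel
  exact ⟨hlim.lift (KernelFork.ofι t ht), hlim.fac (KernelFork.ofι t ht) WalkingParallelPair.zero⟩

/-- cokernel universal property -/
theorem ses_desc {f : X ⟶ Y} {g : Y ⟶ Z} (h : IsShortExactSeq f g) {T : 𝒜}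
    (t : Y ⟶ T) (ht : f ≫ t = 0) : ∃ u : Z ⟶ T, g ≫ u = t := by
  obtain ⟨w, hse⟩ := h
  have : Epi g := hse.epi_g
  have hco : IsColimit (CokernelCofork.ofπ (ShortComplex.mk f g w).g (ShortComplex.mk f g w).zero) :=
    hse.exact.gIsCokernel
  exact ⟨hco.desc (CokernelCofork.ofπ t ht),
    hco.fac (CokernelCofork.ofπ t ht) WalkingParallelPair.one⟩

/-- the kernel-fork workhorse -/
theorem ses_of_ker {f : X ⟶ Y} {g : Y ⟶ Z} (w : f ≫ g = 0) (hm : Mono f) (he : Epi g)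
    (H : ∀ {T : 𝒜} (t : T ⟶ Y), t ≫ g = 0 → ∃ u : T ⟶ X, u ≫ f = t) :
    IsShortExactSeq f g := by
  refine ⟨w, ?_⟩
  have hlim : IsLimit (KernelFork.ofι f w) :=
    KernelFork.IsLimit.ofι f w (fun {T} t ht => (H t ht).choose)
      (fun {T} t ht => (H t ht).choose_spec)
      (fun {T} t ht m hm' => by
        have := (H t ht).choose_spec
        rw [← this] at hm'
        exact (cancel_mono f).1 hm')
  exact ShortComplex.ShortExact.mk' ((ShortComplex.mk f g w).exact_of_f_is_kernel hlim) hm he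

/-- the cokernel-cofork workhorse -/
theorem ses_of_coker {f : X ⟶ Y} {g : Y ⟶ Z} (w : f ≫ g = 0) (hm : Mono f) (he : Epi g)
    (H : ∀ {T : 𝒜} (t : Y ⟶ T), f ≫ t = 0 → ∃ u : Z ⟶ T, g ≫ u = t) :
    IsShortExactSeq f g := by
  refine ⟨w, ?_⟩
  have hco : IsColimit (CokernelCofork.ofπ g w) :=
    CokernelCofork.IsColimit.ofπ g w (fun {T} t ht => (H t ht).choose)
      (fun {T} t ht => (H t ht).choose_spec)
      (fun {T} t ht m hm' => by
        have := (H t ht).choose_spec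
        rw [← this] at hm'
        exact (cancel_epi g).1 hm')
  exact ShortComplex.ShortExact.mk' ((ShortComplex.mk f g w).exact_of_g_is_cokernel hco) hm he

/-- mono gives ses with its cokernel -/
theorem ses_coker_pi {f : X ⟶ Y} (hm : Mono f) : IsShortExactSeq f (cokernel.π f) := by
  refine ses_of_coker (cokernel.condition f) hm inferInstance ?_
  intro T t ht
  exact ⟨cokernel.desc f t ht, cokernel.π_desc f t ht⟩

theorem ses_midcomp {f : X ⟶ Y} {g : Y ⟶ Z} (h : IsShortExactSeq f g)
    (α : Y ⟶ Y') (β : Y' ⟶ Y) (h1 : α ≫ β = 𝟙 Y) (h2 : β ≫ α = 𝟙 Y') :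
    IsShortExactSeq (f ≫ α) (β ≫ g) := by
  have hm := ses_mono h
  have he := ses_epi h
  refine ses_of_ker ?_ ?_ ?_ ?_
  · rw [Category.assoc, ← Category.assoc α, h1, Category.id_comp, ses_zero h]
  · exact Preadditive.mono_of_cancel_zero _ (fun u hu => by
      have : u ≫ f = 0 := by
        have := congrArg (fun p => p ≫ β) hu
        simpa [Category.assoc, h1] using this
      exact zero_of_comp_mono f this)
  · exact Preadditive.epi_of_cancel_zero _ (fun u hu => by
      have : g ≫ u = 0 := by
        have := congrArg (fun p => α ≫ p) hu
        simpa [← Category.assoc, h1] using this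
      exact zero_of_epi_comp g this)
  · intro T t ht
    obtain ⟨u, hu⟩ := ses_lift h (t ≫ β) (by simpa [Category.assoc] using ht)
    refine ⟨u, ?_⟩
    have := congrArg (fun p => p ≫ α) hu
    simpa [Category.assoc, h2] using this

theorem ses_precomp {f : X ⟶ Y} {g : Y ⟶ Z} (h : IsShortExactSeq f g)
    (α : X' ⟶ X) (β : X ⟶ X') (h1 : α ≫ β = 𝟙 X') (h2 : β ≫ α = 𝟙 X) :
    IsShortExactSeq (α ≫ f) g := by
  have hm := ses_mono h
  refine ses_of_ker (by rw [Category.assoc, ses_zero h, comp_zero]) ?_ (ses_epi h) ?_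
  · exact Preadditive.mono_of_cancel_zero _ (fun u hu => by
      have hu' : (u ≫ α) ≫ f = 0 := by simpa [Category.assoc] using hu
      have : u ≫ α = 0 := zero_of_comp_mono f hu'
      have := congrArg (fun p => p ≫ β) this
      simpa [Category.assoc, h1] using this)
  · intro T t ht
    obtain ⟨u, hu⟩ := ses_lift h t ht
    exact ⟨u ≫ β, by rw [Category.assoc, ← Category.assoc β, h2, Category.id_comp, hu]⟩


variable {X Y Z X' Y' Z' K : 𝒜}

theorem ses_inr_fst (Y K : 𝒜) :
    IsShortExactSeq (biprod.inr : K ⟶ Y ⊞ K) (biprod.fst : Y ⊞ K ⟶ Y) := by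
  refine ses_of_ker (by simp) inferInstance inferInstance ?_
  intro T t ht
  refine ⟨t ≫ biprod.snd, ?_⟩
  apply biprod.hom_ext <;> simp [ht]

theorem ses_inl_snd (Y K : 𝒜) :
    IsShortExactSeq (biprod.inl : Y ⟶ Y ⊞ K) (biprod.snd : Y ⊞ K ⟶ K) := by
  refine ses_of_ker (by simp) inferInstance inferInstance ?_
  intro T t ht
  refine ⟨t ≫ biprod.fst, ?_⟩
  apply biprod.hom_ext <;> simp [ht]

/-- graph of τ : B ⟶ K, with identity in the first slot -/
theorem ses_graph (B : 𝒜) (τ : B ⟶ K) :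
    IsShortExactSeq (biprod.lift (𝟙 B) τ) (biprod.desc (-τ) (𝟙 K)) := by
  refine ses_of_ker (by simp) ?_ ?_ ?_
  · exact Preadditive.mono_of_cancel_zero _ (fun u hu => by
      have := congrArg (fun p => p ≫ biprod.fst) hu
      simpa using this)
  · exact Preadditive.epi_of_cancel_zero _ (fun u hu => by
      have := congrArg (fun p => biprod.inr ≫ p) hu
      simpa using this)
  · intro T t ht
    refine ⟨t ≫ biprod.fst, ?_⟩
    apply biprod.hom_ext
    · simp
    · have : t ≫ biprod.fst ≫ (-τ) + t ≫ biprod.snd = 0 := by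
        rw [← Preadditive.comp_add]
        simpa [biprod.desc_eq] using ht
      simp only [Preadditive.comp_neg] at this
      have h2 : t ≫ biprod.snd = t ≫ biprod.fst ≫ τ := by
        rw [← sub_eq_zero]; rw [sub_eq_add_neg, add_comm]; simpa [Preadditive.comp_neg] using this
      simp [h2]

theorem ses_map_fst {f : X ⟶ Y} {g : Y ⟶ Z} (h : IsShortExactSeq f g) (K : 𝒜) :
    IsShortExactSeq (biprod.map f (𝟙 K)) (biprod.fst ≫ g) := by
  have hm : Mono f := h.2.mono_f
  have he : Epi g := h.2.epi_g
  refine ses_of_ker ?_ ?_ ?_ ?_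
  · apply biprod.hom_ext' <;> simp [reassoc_of% h.1, h.1]
  · exact Preadditive.mono_of_cancel_zero _ (fun u hu => by
      have h1 : (u ≫ biprod.fst) ≫ f = 0 := by
        have := congrArg (fun p => p ≫ biprod.fst) hu; simpa using this
      have h2 : u ≫ biprod.snd = 0 := by
        have := congrArg (fun p => p ≫ biprod.snd) hu; simpa using this
      have h1' : u ≫ biprod.fst = 0 := zero_of_comp_mono f h1
      apply biprod.hom_ext <;> simp [h1', h2])
  · have : Epi (biprod.fst : Y ⊞ K ⟶ Y) := inferInstance
    exact epi_comp _ _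
  · intro T t ht
    obtain ⟨u, hu⟩ := ses_lift h (t ≫ biprod.fst) (by simpa using ht)
    refine ⟨biprod.lift u (t ≫ biprod.snd), ?_⟩
    apply biprod.hom_ext <;> simp [hu]

theorem ses_map_snd {f : X ⟶ Y} {g : Y ⟶ Z} (h : IsShortExactSeq f g) (K : 𝒜) :
    IsShortExactSeq (biprod.map (𝟙 K) f) (biprod.snd ≫ g) := by
  have hm : Mono f := h.2.mono_f
  have he : Epi g := h.2.epi_g
  refine ses_of_ker ?_ ?_ ?_ ?_
  · apply biprod.hom_ext' <;> simp [reassoc_of% h.1, h.1]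
  · exact Preadditive.mono_of_cancel_zero _ (fun u hu => by
      have h1 : (u ≫ biprod.snd) ≫ f = 0 := by
        have := congrArg (fun p => p ≫ biprod.snd) hu; simpa using this
      have h2 : u ≫ biprod.fst = 0 := by
        have := congrArg (fun p => p ≫ biprod.fst) hu; simpa using this
      have h1' : u ≫ biprod.snd = 0 := zero_of_comp_mono f h1
      apply biprod.hom_ext <;> simp [h1', h2])
  · have : Epi (biprod.snd : K ⊞ Y ⟶ Y) := inferInstance
    exact epi_comp _ _
  · intro T t ht
    obtain ⟨u, hu⟩ := ses_lift h (t ≫ biprod.snd) (by simpa using ht)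
    refine ⟨biprod.lift (t ≫ biprod.fst) u, ?_⟩
    apply biprod.hom_ext <;> simp [hu]

theorem ses_pullback {f : X ⟶ Y} {g : Y ⟶ Z} (h : IsShortExactSeq f g)
    {A : 𝒜} (a : A ⟶ Z) (w' : f ≫ g = 0 ≫ a) :
    IsShortExactSeq (pullback.lift f 0 w' : X ⟶ pullback g a)
      (pullback.snd g a) := by
  have hm : Mono f := h.2.mono_f
  have he : Epi g := h.2.epi_g
  refine ses_of_ker (by rw [pullback.lift_snd]) ?_ ?_ ?_
  · exact Preadditive.mono_of_cancel_zero _ (fun u hu => by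
      have h1 : u ≫ f = 0 := by
        have := congrArg (fun p => p ≫ pullback.fst g a) hu
        simp only [Category.assoc, zero_comp] at this; rwa [pullback.lift_fst] at this
      exact zero_of_comp_mono f h1)
  · exact inferInstance
  · intro T t ht
    have h0 : (t ≫ pullback.fst g a) ≫ g = 0 := by
      rw [Category.assoc, pullback.condition, ← Category.assoc, ht, zero_comp]
    obtain ⟨u, hu⟩ := ses_lift h _ h0
    refine ⟨u, ?_⟩
    apply pullback.hom_ext
    · rw [Category.assoc, pullback.lift_fst, hu]
    · rw [Category.assoc, pullback.lift_snd, comp_zero, ht]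



variable {X Y Z X' Y' Z' K : 𝒜}

/-- Noether: quotient short exact sequence of a composition of admissible monos -/
theorem ses_noether {X M1 M2 W1 W2 W : 𝒜} {i1 : X ⟶ M1} {q1 : M1 ⟶ W1}
    {i2 : M1 ⟶ M2} {q2 : M2 ⟶ W2} {q : M2 ⟶ W}
    (h1 : IsShortExactSeq i1 q1) (h2 : IsShortExactSeq i2 q2)
    (h3 : IsShortExactSeq (i1 ≫ i2) q) :
    ∃ (w1 : W1 ⟶ W) (w2 : W ⟶ W2),
      q1 ≫ w1 = i2 ≫ q ∧ q ≫ w2 = q2 ∧ IsShortExactSeq w1 w2 := by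
  have e1 : Epi q1 := h1.2.epi_g
  have e2 : Epi q2 := h2.2.epi_g
  have eq : Epi q := h3.2.epi_g
  have m2 : Mono i2 := h2.2.mono_f
  obtain ⟨w1, hw1⟩ := ses_desc h1 (i2 ≫ q) (by rw [← Category.assoc, h3.1])
  obtain ⟨w2, hw2⟩ := ses_desc h3 q2 (by rw [Category.assoc, h2.1, comp_zero])
  refine ⟨w1, w2, hw1, hw2, ?_⟩
  have hzero : w1 ≫ w2 = 0 := by
    have : q1 ≫ w1 ≫ w2 = 0 := by
      rw [← Category.assoc, hw1, Category.assoc, hw2, h2.1]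
    exact zero_of_epi_comp q1 this
  refine ses_of_coker hzero ?_ ?_ ?_
  · -- mono w1, via pullback-of-epi trick
    refine Preadditive.mono_of_cancel_zero _ (fun {T} u hu => ?_)
    have hsnd : Epi (pullback.snd q1 u) := inferInstance
    have h5 : (pullback.fst q1 u ≫ i2) ≫ q = 0 := by
      rw [Category.assoc, ← hw1, ← Category.assoc, pullback.condition, Category.assoc, hu,
        comp_zero]
    obtain ⟨v, hv⟩ := ses_lift h3 (pullback.fst q1 u ≫ i2) h5
    have hfst : pullback.fst q1 u = v ≫ i1 := by
      have : (v ≫ i1) ≫ i2 = pullback.fst q1 u ≫ i2 := by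
        rw [Category.assoc]; exact hv
      exact ((cancel_mono i2).1 this).symm
    have : pullback.snd q1 u ≫ u = 0 := by
      rw [← pullback.condition, hfst, Category.assoc, h1.1, comp_zero]
    exact zero_of_epi_comp _ this
  · -- epi w2
    exact Preadditive.epi_of_cancel_zero _ (fun u hu => by
      have : q2 ≫ u = 0 := by rw [← hw2, Category.assoc, hu, comp_zero]
      exact zero_of_epi_comp q2 this)
  · intro T t ht
    have h6 : i2 ≫ q ≫ t = 0 := by
      rw [← Category.assoc, ← hw1, Category.assoc, ht, comp_zero]
    obtain ⟨u, hu⟩ := ses_desc h2 (q ≫ t) h6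
    refine ⟨u, ?_⟩
    have : q ≫ w2 ≫ u = q ≫ t := by rw [← Category.assoc, hw2, hu]
    exact (cancel_epi q).1 this

/-- Pushout of an admissible mono along an arbitrary map. -/
theorem ses_pushout {W : 𝒜} {j : X ⟶ Y} {c : Y ⟶ W} (h : IsShortExactSeq j c)
    (v : X ⟶ K) :
    ∃ (Q : 𝒜) (ι : K ⟶ Q) (m : Y ⟶ Q) (w : Q ⟶ W),
      IsShortExactSeq ι w ∧ j ≫ m = v ≫ ι ∧ m ≫ w = c := by
  have hmj : Mono j := h.2.mono_f
  have hec : Epi c := h.2.epi_g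
  set a : X ⟶ K ⊞ Y := biprod.lift v (-j) with ha
  have hma : Mono a := Preadditive.mono_of_cancel_zero _ (fun u hu => by
    have : u ≫ (-j) = 0 := by
      have := congrArg (fun p => p ≫ biprod.snd) hu; simpa [ha] using this
    have : u ≫ j = 0 := by simpa [Preadditive.comp_neg, neg_eq_zero] using this
    exact zero_of_comp_mono j this)
  have hsa : IsShortExactSeq a (cokernel.π a) := ses_coker_pi hma
  set e := cokernel.π a
  set ι : K ⟶ cokernel a := biprod.inl ≫ e with hι
  set m : Y ⟶ cokernel a := biprod.inr ≫ e with hm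
  have hdesc : a ≫ biprod.desc (0 : K ⟶ W) c = 0 := by
    simp [ha, biprod.lift_desc, Preadditive.neg_comp, h.1]
  obtain ⟨w, hw⟩ := ses_desc hsa (biprod.desc (0 : K ⟶ W) c) hdesc
  have hjm : j ≫ m = v ≫ ι := by
    have h0 : a ≫ e = 0 := hsa.1
    have hsub : v ≫ ι - j ≫ m = 0 := by
      rw [hι, hm, ← Category.assoc, ← Category.assoc, ← Preadditive.sub_comp]
      have ha2 : v ≫ biprod.inl - j ≫ biprod.inr = a := by
        rw [ha, biprod.lift_eq, Preadditive.neg_comp, sub_eq_add_neg]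
      rw [ha2, h0]
    have := sub_eq_zero.1 hsub
    exact this.symm
  have hmw : m ≫ w = c := by
    rw [hm, Category.assoc, hw]; simp
  have hιw : ι ≫ w = 0 := by rw [hι, Category.assoc, hw]; simp
  refine ⟨cokernel a, ι, m, w, ?_, hjm, hmw⟩
  refine ses_of_coker hιw ?_ ?_ ?_
  · refine Preadditive.mono_of_cancel_zero _ (fun {T} u hu => ?_)
    have : (u ≫ biprod.inl) ≫ e = 0 := by rw [Category.assoc]; exact hu
    obtain ⟨u', hu'⟩ := ses_lift hsa (u ≫ biprod.inl) this
    have hsnd : u' ≫ (-j) = 0 := by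
      have := congrArg (fun p => p ≫ biprod.snd) hu'
      simpa [ha] using this
    have hu0 : u' = 0 := by
      have : u' ≫ j = 0 := by simpa [Preadditive.comp_neg, neg_eq_zero] using hsnd
      exact zero_of_comp_mono j this
    have h7 : u ≫ (biprod.inl : K ⟶ K ⊞ Y) = 0 := by rw [← hu', hu0, zero_comp]
    have := congrArg (fun p => p ≫ (biprod.fst : K ⊞ Y ⟶ K)) h7
    simpa using this
  · exact Preadditive.epi_of_cancel_zero _ (fun u hu => by
      have : c ≫ u = 0 := by rw [← hmw, Category.assoc, hu, comp_zero]
      exact zero_of_epi_comp c this)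
  · intro T t ht
    -- e ≫ t kills inl, so e ≫ t = snd ≫ t' with t' = inr ≫ e ≫ t = m ≫ t
    have hinl : biprod.inl ≫ e ≫ t = 0 := by rw [← Category.assoc]; exact ht
    have hdec : e ≫ t = biprod.snd ≫ (m ≫ t) := by
      apply biprod.hom_ext'
      · simpa using hinl
      · have h9 : (biprod.inr : Y ⟶ K ⊞ Y) ≫ biprod.snd ≫ (m ≫ t) = m ≫ t := by simp
        rw [h9, hm, Category.assoc]
    have hjt : j ≫ m ≫ t = 0 := by
      have h0 : a ≫ e ≫ t = 0 := by rw [← Category.assoc, hsa.1, zero_comp]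
      rw [hdec] at h0
      have : (v ≫ biprod.inl + (-j) ≫ biprod.inr) ≫ biprod.snd ≫ m ≫ t = 0 := by
        rw [← biprod.lift_eq]; exact h0
      simpa [Preadditive.add_comp, Preadditive.neg_comp, Category.assoc] using this
    obtain ⟨u, hu⟩ := ses_desc h (m ≫ t) hjt
    refine ⟨u, ?_⟩
    have heq : e ≫ w ≫ u = e ≫ t := by
      rw [← Category.assoc, hw]
      apply biprod.hom_ext'
      · rw [← Category.assoc, biprod.inl_desc, zero_comp]
        exact hinl.symm
      · rw [← Category.assoc, biprod.inr_desc, hu, hm, Category.assoc]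
    exact (cancel_epi e).1 heq

/-- from a retraction of the kernel map, a section of the quotient map -/
theorem section_of_retraction {k : K ⟶ Y} {p : Y ⟶ Z} (h : IsShortExactSeq k p)
    {r : Y ⟶ K} (hr : k ≫ r = 𝟙 K) : ∃ s : Z ⟶ Y, s ≫ p = 𝟙 Z ∧ p ≫ s = 𝟙 Y - r ≫ k := by
  have he : Epi p := h.2.epi_g
  have h0 : k ≫ (𝟙 Y - r ≫ k) = 0 := by
    rw [Preadditive.comp_sub, Category.comp_id, ← Category.assoc, hr, Category.id_comp, sub_self]
  obtain ⟨s, hs⟩ := ses_desc h _ h0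
  refine ⟨s, ?_, hs⟩
  have : p ≫ s ≫ p = p ≫ 𝟙 Z := by
    rw [← Category.assoc, hs, Preadditive.sub_comp, Category.id_comp, Category.comp_id,
      Category.assoc, h.1, comp_zero, sub_zero]
  exact (cancel_epi p).1 this

theorem retraction_of_section {f : X ⟶ Y} {g : Y ⟶ Z} (h : IsShortExactSeq f g)
    {t : Z ⟶ Y} (ht : t ≫ g = 𝟙 Z) : ∃ r : Y ⟶ X, f ≫ r = 𝟙 X := by
  have hm : Mono f := h.2.mono_f
  have h0 : (𝟙 Y - g ≫ t) ≫ g = 0 := by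
    rw [Preadditive.sub_comp, Category.id_comp, Category.assoc, ht, Category.comp_id, sub_self]
  obtain ⟨r, hr⟩ := ses_lift h _ h0
  refine ⟨r, ?_⟩
  have : (f ≫ r) ≫ f = 𝟙 X ≫ f := by
    rw [Category.assoc, hr, Preadditive.comp_sub, Category.comp_id, ← Category.assoc, h.1,
      zero_comp, sub_zero, Category.id_comp]
  exact (cancel_mono f).1 this

/-- splitting iso from a retraction -/
theorem split_iso {k : K ⟶ Y} {p : Y ⟶ Z} (h : IsShortExactSeq k p)
    {r : Y ⟶ K} (hr : k ≫ r = 𝟙 K) :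
    ∃ (α : Y ⟶ Z ⊞ K) (β : Z ⊞ K ⟶ Y),
      α ≫ β = 𝟙 Y ∧ β ≫ α = 𝟙 (Z ⊞ K) ∧ k ≫ α = biprod.inr ∧ α ≫ biprod.fst = p := by
  obtain ⟨s, hs, hps⟩ := section_of_retraction h hr
  set s' : Z ⟶ Y := s ≫ (𝟙 Y - r ≫ k) with hs'
  have hs'p : s' ≫ p = 𝟙 Z := by
    rw [hs', Category.assoc, Preadditive.sub_comp, Category.id_comp, Category.assoc, h.1,
      comp_zero, sub_zero, hs]
  have hs'r : s' ≫ r = 0 := by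
    have : s' ≫ r = s ≫ r - s ≫ r ≫ k ≫ r := by
      simp [hs', Preadditive.sub_comp, Preadditive.comp_sub]
    rw [this, hr, Category.comp_id, sub_self]
  set α : Y ⟶ Z ⊞ K := biprod.lift p r with hα
  set β : Z ⊞ K ⟶ Y := biprod.desc s' k with hβ
  have h1 : α ≫ β = 𝟙 Y := by
    rw [hα, hβ, biprod.lift_desc]
    have hps' : p ≫ s' = 𝟙 Y - r ≫ k := by
      rw [hs', ← Category.assoc, hps]
      have hh : r ≫ k ≫ r ≫ k = r ≫ k := by rw [reassoc_of% hr]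
      simp only [Preadditive.sub_comp, Preadditive.comp_sub, Category.id_comp, Category.comp_id]
      rw [Category.assoc, hh]
      abel
    rw [hps']; abel
  have h2 : β ≫ α = 𝟙 (Z ⊞ K) := by
    apply biprod.hom_ext'
    · apply biprod.hom_ext <;> simp [hα, hβ, hs'p, hs'r]
    · apply biprod.hom_ext <;> simp [hα, hβ, h.1, hr]
  refine ⟨α, β, h1, h2, ?_, by simp [hα]⟩
  apply biprod.hom_ext <;> simp [hα, h.1, hr]


variable {X Y Z K W : 𝒜}

theorem ses_pullback_fst {A B C P : 𝒜} {φ : A ⟶ B} {ψ : B ⟶ C} {q : P ⟶ B}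
    (hAB : IsShortExactSeq φ ψ) (hq : Epi q) :
    IsShortExactSeq (pullback.fst q φ) (q ≫ ψ) := by
  have hmφ : Mono φ := hAB.2.mono_f
  have heψ : Epi ψ := hAB.2.epi_g
  refine ses_of_ker ?_ inferInstance (epi_comp q ψ) ?_
  · rw [← Category.assoc, pullback.condition, Category.assoc, hAB.1, comp_zero]
  · intro T t ht
    obtain ⟨u, hu⟩ := ses_lift hAB (t ≫ q) (by rw [Category.assoc]; exact ht)
    exact ⟨pullback.lift t u hu.symm, pullback.lift_fst _ _ _⟩

/-- G-chase: given a lift `i` (through an admissible epi `q`) of an admissible mono `j`,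
the cokernel `V` of `i` is an extension of `W = coker j` by `K = ker q`. -/
theorem ses_G_chase {P M V : 𝒜} {κ : K ⟶ P} {q : P ⟶ M}
    {j : X ⟶ M} {c : M ⟶ W} {i : X ⟶ P} {π : P ⟶ V}
    (hκq : IsShortExactSeq κ q) (hjc : IsShortExactSeq j c)
    (hiq : i ≫ q = j) (hiπ : IsShortExactSeq i π) :
    ∃ v : V ⟶ W, π ≫ v = q ≫ c ∧ IsShortExactSeq (κ ≫ π) v := by
  have hmj : Mono j := hjc.2.mono_f
  have hec : Epi c := hjc.2.epi_g
  have heq : Epi q := hκq.2.epi_g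
  have hmκ : Mono κ := hκq.2.mono_f
  have heπ : Epi π := hiπ.2.epi_g
  have h0 : i ≫ q ≫ c = 0 := by rw [← Category.assoc, hiq, hjc.1]
  obtain ⟨v, hv⟩ := ses_desc hiπ (q ≫ c) h0
  refine ⟨v, hv, ?_⟩
  have hz : (κ ≫ π) ≫ v = 0 := by
    rw [Category.assoc, hv, ← Category.assoc, hκq.1, zero_comp]
  refine ses_of_coker hz ?_ ?_ ?_
  · refine Preadditive.mono_of_cancel_zero _ (fun {T} u hu => ?_)
    obtain ⟨u', hu'⟩ := ses_lift hiπ (u ≫ κ) (by rw [Category.assoc]; exact hu)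
    have : u' ≫ j = 0 := by
      rw [← hiq, ← Category.assoc, hu', Category.assoc, hκq.1, comp_zero]
    have hu'0 : u' = 0 := zero_of_comp_mono j this
    have : u ≫ κ = 0 := by rw [← hu', hu'0, zero_comp]
    exact zero_of_comp_mono κ this
  · refine Preadditive.epi_of_cancel_zero _ (fun {T} t ht => ?_)
    have : q ≫ c ≫ t = 0 := by
      rw [← Category.assoc, ← hv, Category.assoc, ht, comp_zero]
    have : c ≫ t = 0 := zero_of_epi_comp q this
    exact zero_of_epi_comp c this
  · intro T t ht
    have hκt : κ ≫ π ≫ t = 0 := by rwa [← Category.assoc]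
    obtain ⟨u, hu⟩ := ses_desc hκq (π ≫ t) hκt
    have hju : j ≫ u = 0 := by
      rw [← hiq, Category.assoc, hu, ← Category.assoc, hiπ.1, zero_comp]
    obtain ⟨u', hu'⟩ := ses_desc hjc u hju
    refine ⟨u', ?_⟩
    have : π ≫ v ≫ u' = π ≫ t := by
      rw [← Category.assoc, hv, Category.assoc, hu', hu]
    exact (cancel_epi π).1 this

/-- chase for a mono into a biproduct whose fst component is an admissible mono -/
theorem ses_chase_fst {A B D Q : 𝒜} {ℓ : X ⟶ A ⊞ B} {e : A ⊞ B ⟶ Q}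
    {d : X ⟶ A} {cd : A ⟶ D}
    (hℓ : IsShortExactSeq ℓ e) (hd : IsShortExactSeq d cd)
    (hfst : ℓ ≫ biprod.fst = d) :
    ∃ w : Q ⟶ D, e ≫ w = biprod.fst ≫ cd ∧ IsShortExactSeq (biprod.inr ≫ e) w := by
  have hmd : Mono d := hd.2.mono_f
  have hecd : Epi cd := hd.2.epi_g
  have hee : Epi e := hℓ.2.epi_g
  have h0 : ℓ ≫ biprod.fst ≫ cd = 0 := by rw [← Category.assoc, hfst, hd.1]
  obtain ⟨w, hw⟩ := ses_desc hℓ _ h0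
  refine ⟨w, hw, ?_⟩
  have hz : (biprod.inr ≫ e) ≫ w = 0 := by
    rw [Category.assoc, hw, ← Category.assoc, biprod.inr_fst, zero_comp]
  refine ses_of_coker hz ?_ ?_ ?_
  · refine Preadditive.mono_of_cancel_zero _ (fun {T} u hu => ?_)
    obtain ⟨u', hu'⟩ := ses_lift hℓ (u ≫ biprod.inr) (by rw [Category.assoc]; exact hu)
    have : u' ≫ d = 0 := by
      rw [← hfst, ← Category.assoc, hu', Category.assoc, biprod.inr_fst, comp_zero]
    have hu'0 : u' = 0 := zero_of_comp_mono d this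
    have h7 : u ≫ (biprod.inr : B ⟶ A ⊞ B) = 0 := by rw [← hu', hu'0, zero_comp]
    have := congrArg (fun p => p ≫ (biprod.snd : A ⊞ B ⟶ B)) h7
    simpa using this
  · refine Preadditive.epi_of_cancel_zero _ (fun {T} t ht => ?_)
    have h8 : (biprod.fst : A ⊞ B ⟶ A) ≫ cd ≫ t = 0 := by
      rw [← Category.assoc, ← hw, Category.assoc, ht, comp_zero]
    have : cd ≫ t = 0 := by
      have := congrArg (fun p => (biprod.inl : A ⟶ A ⊞ B) ≫ p) h8
      simpa using this
    exact zero_of_epi_comp cd this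
  · intro T t ht
    have hinr : biprod.inr ≫ e ≫ t = 0 := by rwa [← Category.assoc]
    have hdec : e ≫ t = biprod.fst ≫ (biprod.inl ≫ e ≫ t) := by
      apply biprod.hom_ext'
      · simp
      · simpa using hinr
    have hdu : d ≫ (biprod.inl ≫ e ≫ t) = 0 := by
      rw [← hfst, Category.assoc, ← hdec, ← Category.assoc, hℓ.1, zero_comp]
    obtain ⟨u', hu'⟩ := ses_desc hd _ hdu
    refine ⟨u', ?_⟩
    have : e ≫ w ≫ u' = e ≫ t := by
      rw [← Category.assoc, hw, Category.assoc, hu', ← hdec]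
    exact (cancel_epi e).1 this

/-- chase for a mono into a biproduct whose snd component is an admissible mono -/
theorem ses_chase_snd {A B D Q : 𝒜} {ℓ : X ⟶ A ⊞ B} {e : A ⊞ B ⟶ Q}
    {d : X ⟶ B} {cd : B ⟶ D}
    (hℓ : IsShortExactSeq ℓ e) (hd : IsShortExactSeq d cd)
    (hsnd : ℓ ≫ biprod.snd = d) :
    ∃ w : Q ⟶ D, e ≫ w = biprod.snd ≫ cd ∧ IsShortExactSeq (biprod.inl ≫ e) w := by
  have hmd : Mono d := hd.2.mono_f
  have hecd : Epi cd := hd.2.epi_g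
  have hee : Epi e := hℓ.2.epi_g
  have h0 : ℓ ≫ biprod.snd ≫ cd = 0 := by rw [← Category.assoc, hsnd, hd.1]
  obtain ⟨w, hw⟩ := ses_desc hℓ _ h0
  refine ⟨w, hw, ?_⟩
  have hz : (biprod.inl ≫ e) ≫ w = 0 := by
    rw [Category.assoc, hw, ← Category.assoc, biprod.inl_snd, zero_comp]
  refine ses_of_coker hz ?_ ?_ ?_
  · refine Preadditive.mono_of_cancel_zero _ (fun {T} u hu => ?_)
    obtain ⟨u', hu'⟩ := ses_lift hℓ (u ≫ biprod.inl) (by rw [Category.assoc]; exact hu)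
    have : u' ≫ d = 0 := by
      rw [← hsnd, ← Category.assoc, hu', Category.assoc, biprod.inl_snd, comp_zero]
    have hu'0 : u' = 0 := zero_of_comp_mono d this
    have h7 : u ≫ (biprod.inl : A ⟶ A ⊞ B) = 0 := by rw [← hu', hu'0, zero_comp]
    have := congrArg (fun p => p ≫ (biprod.fst : A ⊞ B ⟶ A)) h7
    simpa using this
  · refine Preadditive.epi_of_cancel_zero _ (fun {T} t ht => ?_)
    have h8 : (biprod.snd : A ⊞ B ⟶ B) ≫ cd ≫ t = 0 := by
      rw [← Category.assoc, ← hw, Category.assoc, ht, comp_zero]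
    have : cd ≫ t = 0 := by
      have := congrArg (fun p => (biprod.inr : B ⟶ A ⊞ B) ≫ p) h8
      simpa using this
    exact zero_of_epi_comp cd this
  · intro T t ht
    have hinl : biprod.inl ≫ e ≫ t = 0 := by rwa [← Category.assoc]
    have hdec : e ≫ t = biprod.snd ≫ (biprod.inr ≫ e ≫ t) := by
      apply biprod.hom_ext'
      · simpa using hinl
      · simp
    have hdu : d ≫ (biprod.inr ≫ e ≫ t) = 0 := by
      rw [← hsnd, Category.assoc, ← hdec, ← Category.assoc, hℓ.1, zero_comp]
    obtain ⟨u', hu'⟩ := ses_desc hd _ hdu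
    refine ⟨u', ?_⟩
    have : e ≫ w ≫ u' = e ≫ t := by
      rw [← Category.assoc, hw, Category.assoc, hu', ← hdec]
    exact (cancel_epi e).1 this

/-- the middle row of a pushout along an admissible epi -/
theorem ses_pushout_ker {A0 Q : 𝒜} {j : X ⟶ Y} {c : Y ⟶ W} {v : X ⟶ Z}
    {ι : Z ⟶ Q} {m : Y ⟶ Q} {w : Q ⟶ W} {a0 : A0 ⟶ X}
    (hjc : IsShortExactSeq j c) (hιw : IsShortExactSeq ι w)
    (hjm : j ≫ m = v ≫ ι) (hmw : m ≫ w = c)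
    (ha0 : IsShortExactSeq a0 v) :
    IsShortExactSeq (a0 ≫ j) m := by
  have hmj : Mono j := hjc.2.mono_f
  have hec : Epi c := hjc.2.epi_g
  have hma0 : Mono a0 := ha0.2.mono_f
  have hev : Epi v := ha0.2.epi_g
  have hmι : Mono ι := hιw.2.mono_f
  have hz : (a0 ≫ j) ≫ m = 0 := by
    rw [Category.assoc, hjm, ← Category.assoc, ha0.1, zero_comp]
  have hem : Epi m := Preadditive.epi_of_cancel_zero _ (fun {T} t ht => by
    have h1 : v ≫ ι ≫ t = 0 := by rw [← Category.assoc, ← hjm, Category.assoc, ht, comp_zero]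
    have h2 : ι ≫ t = 0 := zero_of_epi_comp v h1
    obtain ⟨t', ht'⟩ := ses_desc hιw t h2
    have h3 : c ≫ t' = 0 := by rw [← hmw, Category.assoc, ht', ht]
    have h4 : t' = 0 := zero_of_epi_comp c h3
    rw [← ht', h4, comp_zero])
  refine ses_of_ker hz (mono_comp a0 j) hem ?_
  intro T t ht
  have h5 : t ≫ c = 0 := by rw [← hmw, ← Category.assoc, ht, zero_comp]
  obtain ⟨u, hu⟩ := ses_lift hjc t h5
  have h6 : (u ≫ v) ≫ ι = 0 := by
    rw [Category.assoc, ← hjm, ← Category.assoc, hu, ht]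
  have h7 : u ≫ v = 0 := zero_of_comp_mono ι h6
  obtain ⟨u', hu'⟩ := ses_lift ha0 u h7
  exact ⟨u', by rw [← Category.assoc, hu', hu]⟩



/-- second-slot graph embedding `A ⊞ B ⟶ (A ⊞ K) ⊞ B` along `τ' : A ⊞ B ⟶ K` -/
theorem ses_graph2 {A B : 𝒜} (τ' : A ⊞ B ⟶ K) :
    IsShortExactSeq
      (biprod.lift (biprod.lift biprod.fst τ') biprod.snd : A ⊞ B ⟶ (A ⊞ K) ⊞ B)
      (biprod.fst ≫ biprod.snd -
        (biprod.lift (biprod.fst ≫ biprod.fst) biprod.snd : (A ⊞ K) ⊞ B ⟶ A ⊞ B) ≫ τ') := by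
  set s2 : A ⊞ B ⟶ (A ⊞ K) ⊞ B := biprod.lift (biprod.lift biprod.fst τ') biprod.snd with hs2
  set reco : (A ⊞ K) ⊞ B ⟶ A ⊞ B := biprod.lift (biprod.fst ≫ biprod.fst) biprod.snd with hreco
  have hrec : s2 ≫ reco = 𝟙 (A ⊞ B) := by
    apply biprod.hom_ext <;> simp [hs2, hreco]
  have hzero : s2 ≫ (biprod.fst ≫ biprod.snd - reco ≫ τ') = 0 := by
    rw [Preadditive.comp_sub, ← Category.assoc, ← Category.assoc, hrec, Category.id_comp]
    have : s2 ≫ biprod.fst = biprod.lift biprod.fst τ' := by simp [hs2]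
    rw [this, biprod.lift_snd, sub_self]
  have hmono : Mono s2 := by
    have : Mono (s2 ≫ reco) := by rw [hrec]; infer_instance
    exact mono_of_mono s2 reco
  have hepi : Epi (biprod.fst ≫ biprod.snd - reco ≫ τ' :
      (A ⊞ K) ⊞ B ⟶ K) := by
    have hsplit : ((biprod.inr ≫ biprod.inl : K ⟶ (A ⊞ K) ⊞ B)) ≫
        (biprod.fst ≫ biprod.snd - reco ≫ τ') = 𝟙 K := by
      rw [Preadditive.comp_sub]
      have e1 : (biprod.inr ≫ biprod.inl : K ⟶ (A ⊞ K) ⊞ B) ≫ biprod.fst ≫ biprod.snd = 𝟙 K := by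
        simp
      have e2 : (biprod.inr ≫ biprod.inl : K ⟶ (A ⊞ K) ⊞ B) ≫ reco ≫ τ' = 0 := by
        have : (biprod.inr ≫ biprod.inl : K ⟶ (A ⊞ K) ⊞ B) ≫ reco = 0 := by
          apply biprod.hom_ext <;> simp [hreco]
        rw [← Category.assoc, this, zero_comp]
      rw [e1, e2, sub_zero]
    exact epi_of_epi_fac hsplit
  refine ses_of_ker hzero hmono hepi ?_
  intro T t ht
  refine ⟨t ≫ reco, ?_⟩
  have hts : t ≫ biprod.fst ≫ biprod.snd = t ≫ reco ≫ τ' := by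
    have hsub : t ≫ (biprod.fst ≫ biprod.snd) - t ≫ (reco ≫ τ') = 0 := by
      rw [← Preadditive.comp_sub]; exact ht
    exact sub_eq_zero.1 hsub
  apply biprod.hom_ext
  · rw [Category.assoc, hs2, biprod.lift_fst]
    apply biprod.hom_ext
    · simp [hreco]
    · rw [Category.assoc, biprod.lift_snd, Category.assoc, ← hts, ← Category.assoc]
  · simp [hs2, hreco]

-- ===== setup-level lemmas =====
section Setup
variable {E Cc Ip Zc : 𝒜 → Prop} (S : CotorsionSetup E Cc Ip Zc)
include S

theorem cInE (h : Cc X) : E X := ((S.cp.left_eq X).1 h).1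
theorem iInE (h : Ip X) : E X := ((S.cp.right_eq X).1 h).1
theorem ext1CI (hX : Cc X) (hY : Ip Y) : Ext1IsZero E X Y := ((S.cp.left_eq X).1 hX).2 hY

/-- `Cc` is closed under extensions -/
theorem Cext {X1 X2 : 𝒜} {a : X1 ⟶ X} {b : X ⟶ X2} (hab : IsShortExactSeq a b)
    (h1 : Cc X1) (h2 : Cc X2) (hE : E X) : Cc X := by
  refine (S.cp.left_eq X).2 ⟨hE, ?_⟩
  intro Y hY M f g hM hfg
  -- pull the extension back along a
  have w' : f ≫ g = 0 ≫ a := by rw [hfg.1, zero_comp]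
  have hpb := ses_pullback hfg a w'
  have hEpb : E (pullback g a) := S.extClosedE _ _ hpb (iInE S hY) (cInE S h1)
  obtain ⟨r, hr⟩ := ext1CI S h1 hY _ _ hEpb hpb
  obtain ⟨s1, hs1, -⟩ := section_of_retraction hpb hr
  set t : X1 ⟶ M := s1 ≫ pullback.fst g a with htdef
  have htg : t ≫ g = a := by
    rw [htdef, Category.assoc, pullback.condition, ← Category.assoc, hs1, Category.id_comp]
  have hmt : Mono t := by
    have : Mono (t ≫ g) := by rw [htg]; exact hab.2.mono_f
    exact mono_of_mono t g
  have hts : IsShortExactSeq t (cokernel.π t) := ses_coker_pi hmt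
  obtain ⟨v, hv, hses⟩ := ses_G_chase hfg hab htg hts
  have hEM' : E (cokernel t) :=
    S.extClosedE _ _ hses (iInE S hY) (cInE S h2)
  obtain ⟨r', hr'⟩ := ext1CI S h2 hY _ _ hEM' hses
  exact ⟨cokernel.π t ≫ r', by rw [← Category.assoc]; exact hr'⟩

/-- `Ip` is closed under extensions -/
theorem Iext {Y1 Y2 : 𝒜} {a : Y1 ⟶ Y} {b : Y ⟶ Y2} (hab : IsShortExactSeq a b)
    (h1 : Ip Y1) (h2 : Ip Y2) (hE : E Y) : Ip Y := by
  refine (S.cp.right_eq Y).2 ⟨hE, ?_⟩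
  intro X hX M f g hM hfg
  -- push the extension out along b
  obtain ⟨Q, ι, m, w, hιw, hjm, hmw⟩ := ses_pushout hfg b
  have hEQ : E Q := S.extClosedE _ _ hιw (iInE S h2) (cInE S hX)
  obtain ⟨ρ, hρ⟩ := ext1CI S hX h2 _ _ hEQ hιw
  obtain ⟨s, hs, -⟩ := section_of_retraction hιw hρ
  have hmidses : IsShortExactSeq (a ≫ f) m := ses_pushout_ker hfg hιw hjm hmw hab
  -- pull back along the section s : X ⟶ Q
  have w' : (a ≫ f) ≫ m = 0 ≫ s := by rw [hmidses.1, zero_comp]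
  have hpb := ses_pullback hmidses s w'
  have hEpb : E (pullback m s) := S.extClosedE _ _ hpb (iInE S h1) (cInE S hX)
  obtain ⟨r, hr⟩ := ext1CI S hX h1 _ _ hEpb hpb
  obtain ⟨sx, hsx, -⟩ := section_of_retraction hpb hr
  have hsec : (sx ≫ pullback.fst m s) ≫ g = 𝟙 X := by
    rw [← hmw, ← Category.assoc, Category.assoc sx, pullback.condition, ← Category.assoc,
      hsx, Category.id_comp, hs]
  exact retraction_of_section hfg hsec

/-- Extension lemma: maps to objects of `Ip` extend along cofibrations. -/
theorem ExtLemma {N Wj : 𝒜} {j : X ⟶ N} {c : N ⟶ Wj} (hjc : IsShortExactSeq j c)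
    (hW : Cc Wj) (hK : Ip K) (v : X ⟶ K) : ∃ τ : N ⟶ K, j ≫ τ = v := by
  obtain ⟨Q, ι, m, w, hιw, hjm, hmw⟩ := ses_pushout hjc v
  have hEQ : E Q := S.extClosedE _ _ hιw (iInE S hK) (cInE S hW)
  obtain ⟨ρ, hρ⟩ := ext1CI S hW hK _ _ hEQ hιw
  refine ⟨m ≫ ρ, ?_⟩
  rw [← Category.assoc, hjm, Category.assoc, hρ, Category.comp_id]

/-- split data for an acyclic fibration onto an object of `Cc` -/
theorem splitFib {κ : K ⟶ Y} {p : Y ⟶ Z} (hκp : IsShortExactSeq κ p)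
    (hK : Ip K) (hZ : Cc Z) (hE : E Y) :
    ∃ (α : Y ⟶ Z ⊞ K) (β : Z ⊞ K ⟶ Y),
      α ≫ β = 𝟙 Y ∧ β ≫ α = 𝟙 (Z ⊞ K) ∧ κ ≫ α = biprod.inr ∧ α ≫ biprod.fst = p := by
  obtain ⟨r, hr⟩ := ext1CI S hZ hK _ _ hE hκp
  exact split_iso hκp hr

/-- canonical cofibration/acyclic-fibration factorization of a map in `Cc` -/
theorem canonical {h : X ⟶ Y} (hX : Cc X) (hY : Cc Y) :
    ∃ (K Q : 𝒜) (j : X ⟶ Y ⊞ K) (π : Y ⊞ K ⟶ Q),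
      Ip K ∧ Cc K ∧ Cc (Y ⊞ K) ∧ Cc Q ∧ IsShortExactSeq j π ∧
      j ≫ biprod.fst = h ∧ IsAcyclicFib E Ip (biprod.fst : Y ⊞ K ⟶ Y) := by
  obtain ⟨I0, C0, x, cx, hI0, hC0, hxses⟩ := S.complete.1 X (cInE S hX)
  have hCI0 : Cc I0 := Cext S hxses hX hC0 (iInE S hI0)
  set j : X ⟶ Y ⊞ I0 := biprod.lift h x with hjdef
  have hmj : Mono j := by
    have h1 : Mono (j ≫ biprod.snd) := by
      rw [hjdef, biprod.lift_snd]; exact hxses.2.mono_f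
    exact mono_of_mono j biprod.snd
  have hjses := ses_coker_pi hmj
  obtain ⟨w, hw, hQses⟩ := ses_chase_snd hjses hxses (biprod.lift_snd _ _)
  have hEYK : E (Y ⊞ I0) := S.extClosedE _ _ (ses_inl_snd Y I0) (cInE S hY) (iInE S hI0)
  have hEQ : E (cokernel j) := S.extClosedE _ _ hQses (cInE S hY) (cInE S hC0)
  have hCQ : Cc (cokernel j) := Cext S hQses hY hC0 hEQ
  have hCYK : Cc (Y ⊞ I0) := Cext S (ses_inl_snd Y I0) hY hCI0 hEYK
  exact ⟨I0, cokernel j, j, cokernel.π j, hI0, hCI0, hCYK, hCQ, hjses,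
    biprod.lift_fst _ _, hEYK, cInE S hY, I0, biprod.inr, hI0, ses_inr_fst Y I0⟩

/-- Comparison lemma: if `h` is a weak equivalence, then the cofibration part of any
factorization of `h` as cofibration ≫ acyclic fibration has cokernel in `Zc`.
Requires the kernel 2-out-of-3 property for `Zc ∩ Cc`. -/
theorem lemF
    (ker3 : ∀ ⦃U V T : 𝒜⦄ (f : U ⟶ V) (g : V ⟶ T), IsShortExactSeq f g →
      Cc U → Cc V → Cc T → Zc V → Zc T → Zc U)
    {N Wj : 𝒜} {h : X ⟶ Y} (hW : IsWeakEquiv E Cc Ip Zc h)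
    {j : X ⟶ N} {cj : N ⟶ Wj} {q : N ⟶ Y}
    (hjc : IsShortExactSeq j cj) (hCWj : Cc Wj) (hCN : Cc N)
    (hq : IsAcyclicFib E Ip q) (hcomp : j ≫ q = h) : Zc Wj := by
  obtain ⟨hCX, hCY, M0, i, p, hacof, hafib, hip⟩ := hW
  obtain ⟨-, hCM0, W0, c0, hCW0, hZW0, hic0⟩ := hacof
  obtain ⟨hEM0, -, K0, κ0, hIK0, hκ0p⟩ := hafib
  obtain ⟨hEN, -, K, κ, hIK, hκq⟩ := hq
  have hCK0 : Cc K0 := S.hereditary _ _ hκ0p (iInE S hIK0) hCM0 hCY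
  have hCK : Cc K := S.hereditary _ _ hκq (iInE S hIK) hCN hCY
  obtain ⟨α0, β0, hαβ0, hβα0, hκα0, hα0fst⟩ := splitFib S hκ0p hIK0 hCY hEM0
  obtain ⟨α, β, hαβ, hβα, hκα, hαfst⟩ := splitFib S hκq hIK hCY hEN
  have hi' : IsShortExactSeq (i ≫ α0) (β0 ≫ c0) := ses_midcomp hic0 α0 β0 hαβ0 hβα0
  have hj' : IsShortExactSeq (j ≫ α) (β ≫ cj) := ses_midcomp hjc α β hαβ hβα
  have hifst : (i ≫ α0) ≫ biprod.fst = h := by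
    rw [Category.assoc, hα0fst, hip]
  have hjfst : (j ≫ α) ≫ biprod.fst = h := by
    rw [Category.assoc, hαfst, hcomp]
  obtain ⟨τ, hτ⟩ := ExtLemma S hj' hCWj hIK0 ((i ≫ α0) ≫ biprod.snd)
  obtain ⟨τ', hτ'⟩ := ExtLemma S hi' hCW0 hIK ((j ≫ α) ≫ biprod.snd)
  have hs : IsShortExactSeq (biprod.lift (𝟙 (Y ⊞ K)) τ) (biprod.desc (-τ) (𝟙 K0)) :=
    ses_graph _ τ
  have hs2 := ses_graph2 (K := K) τ'
  have hmJ : Mono ((j ≫ α) ≫ biprod.lift (𝟙 (Y ⊞ K)) τ) :=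
    @mono_comp _ _ _ _ _ _ hj'.2.mono_f _ hs.2.mono_f
  have hJses := ses_coker_pi hmJ
  obtain ⟨w1, w2, hw1, hw2, hN1⟩ := ses_noether hj' hs hJses
  have hJ2 : (j ≫ α) ≫ biprod.lift (𝟙 (Y ⊞ K)) τ =
      (i ≫ α0) ≫ biprod.lift (biprod.lift biprod.fst τ') biprod.snd := by
    have hifst2 : i ≫ α0 ≫ biprod.fst = h := by rw [← Category.assoc]; exact hifst
    have hjfst2 : j ≫ α ≫ biprod.fst = h := by rw [← Category.assoc]; exact hjfst
    have hτ2 : j ≫ α ≫ τ = i ≫ α0 ≫ biprod.snd := by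
      rw [← Category.assoc, ← Category.assoc]; exact hτ
    have hτ3 : i ≫ α0 ≫ τ' = j ≫ α ≫ biprod.snd := by
      rw [← Category.assoc, ← Category.assoc]; exact hτ'
    apply biprod.hom_ext
    · simp only [Category.assoc, biprod.lift_fst, Category.comp_id]
      apply biprod.hom_ext
      · simp only [Category.assoc, biprod.lift_fst]
        rw [hjfst2, hifst2]
      · simp only [Category.assoc, biprod.lift_snd]
        rw [hτ3]
    · simp only [Category.assoc, biprod.lift_snd]
      rw [hτ2]
  have hJses2 : IsShortExactSeq
      ((i ≫ α0) ≫ biprod.lift (biprod.lift biprod.fst τ') biprod.snd)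
      (cokernel.π ((j ≫ α) ≫ biprod.lift (𝟙 (Y ⊞ K)) τ)) := by
    rw [← hJ2]; exact hJses
  obtain ⟨w1', w2', hw1', hw2', hN2⟩ := ses_noether hi' hs2 hJses2
  have hEWJ : E (cokernel ((j ≫ α) ≫ biprod.lift (𝟙 (Y ⊞ K)) τ)) :=
    S.extClosedE _ _ hN1 (cInE S hCWj) (iInE S hIK0)
  have hCWJ := Cext S hN1 hCWj hCK0 hEWJ
  have hZWJ := S.zcExtClosed _ _ hN2 hCW0 hCWJ hCK hZW0 (S.iSubZ hIK)
  exact ker3 _ _ hN1 hCWj hCWJ hCK0 hZWJ (S.iSubZ hIK0)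

/-- every acyclic cofibration is a weak equivalence -/
theorem acofW {M : 𝒜} {j : X ⟶ M} (hj : IsAcyclicCofib Cc Zc j) :
    IsWeakEquiv E Cc Ip Zc j := by
  obtain ⟨hCX, hCM, W, c, hCW, hZW, hjc⟩ := hj
  obtain ⟨K', P', κ', q0, hIK', hCP', hκ'q0⟩ := S.complete.2 M (cInE S hCM)
  have w' : κ' ≫ q0 = 0 ≫ j := by rw [hκ'q0.1, zero_comp]
  have hpb := ses_pullback hκ'q0 j w'
  have hEpb : E (pullback q0 j) := S.extClosedE _ _ hpb (iInE S hIK') (cInE S hCX)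
  obtain ⟨r, hr⟩ := ext1CI S hCX hIK' _ _ hEpb hpb
  obtain ⟨s1, hs1, -⟩ := section_of_retraction hpb hr
  have hiq : (s1 ≫ pullback.fst q0 j) ≫ q0 = j := by
    rw [Category.assoc, pullback.condition, ← Category.assoc, hs1, Category.id_comp]
  have hmi : Mono (s1 ≫ pullback.fst q0 j) := by
    have : Mono ((s1 ≫ pullback.fst q0 j) ≫ q0) := by rw [hiq]; exact hjc.2.mono_f
    exact mono_of_mono _ q0
  have hts := ses_coker_pi hmi
  obtain ⟨v, hv, hVses⟩ := ses_G_chase hκ'q0 hjc hiq hts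
  have hCK' : Cc K' := S.hereditary _ _ hκ'q0 (iInE S hIK') hCP' hCM
  have hEVq : E (cokernel (s1 ≫ pullback.fst q0 j)) :=
    S.extClosedE _ _ hVses (iInE S hIK') (cInE S hCW)
  have hCVq := Cext S hVses hCK' hCW hEVq
  have hZVq := S.zcExtClosed _ _ hVses hCK' hCVq hCW (S.iSubZ hIK') hZW
  exact ⟨hCX, hCM, P', s1 ≫ pullback.fst q0 j, q0,
    ⟨hCX, hCP', _, cokernel.π _, hCVq, hZVq, hts⟩,
    ⟨cInE S hCP', cInE S hCM, K', κ', hIK', hκ'q0⟩, hiq⟩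

/-- every acyclic fibration between objects of `Cc` is a weak equivalence -/
theorem afibW {N M : 𝒜} {q0 : N ⟶ M} (hq : IsAcyclicFib E Ip q0)
    (hCN : Cc N) (hCM : Cc M) : IsWeakEquiv E Cc Ip Zc q0 := by
  obtain ⟨hEN, hEM, K, κ, hIK, hκq⟩ := hq
  have hCK : Cc K := S.hereditary _ _ hκq (iInE S hIK) hCN hCM
  obtain ⟨IK, CK, xK, cK, hIIK, hCCK, hxses⟩ := S.complete.1 K (cInE S hCK)
  have hCIK : Cc IK := Cext S hxses hCK hCCK (iInE S hIIK)
  have hZCK : Zc CK := S.zcCokerClosed _ _ hxses hCK hCIK hCCK (S.iSubZ hIK) (S.iSubZ hIIK)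
  obtain ⟨α, β, hαβ, hβα, hκα, hαfst⟩ := splitFib S hκq hIK hCM hEN
  have hmapses := ses_map_snd hxses M
  have hj'ses : IsShortExactSeq (α ≫ biprod.map (𝟙 M) xK) (biprod.snd ≫ cK) :=
    ses_precomp hmapses α β hαβ hβα
  have hEMIK : E (M ⊞ IK) := S.extClosedE _ _ (ses_inl_snd M IK) hEM (iInE S hIIK)
  have hCMIK : Cc (M ⊞ IK) := Cext S (ses_inl_snd M IK) hCM hCIK hEMIK
  have hcomp : (α ≫ biprod.map (𝟙 M) xK) ≫ biprod.fst = q0 := by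
    rw [Category.assoc, biprod.map_fst, Category.comp_id]
    exact hαfst
  exact ⟨hCN, hCM, M ⊞ IK, α ≫ biprod.map (𝟙 M) xK, biprod.fst,
    ⟨hCN, hCMIK, CK, biprod.snd ≫ cK, hCCK, hZCK, hj'ses⟩,
    ⟨hEMIK, hEM, IK, biprod.inr, hIIK, ses_inr_fst M IK⟩, hcomp⟩

/-- if a cofibration is a weak equivalence, its cokernel is in `Zc`
(uses one cancellation instance of saturation) -/
theorem Hprime
    (sat3 : ∀ {U V T : 𝒜} (f : U ⟶ V) (g : V ⟶ T), IsWeakEquiv E Cc Ip Zc g →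
      IsWeakEquiv E Cc Ip Zc (f ≫ g) → IsWeakEquiv E Cc Ip Zc f)
    {M : 𝒜} {h : X ⟶ M} {c : M ⟶ W} (hhc : IsShortExactSeq h c)
    (hCX : Cc X) (hCM : Cc M) (hCW : Cc W)
    (hWh : IsWeakEquiv E Cc Ip Zc h) : Zc W := by
  obtain ⟨K'', P'', κ'', q0, hIK'', hCP'', hκq0⟩ := S.complete.2 M (cInE S hCM)
  have w' : κ'' ≫ q0 = 0 ≫ h := by rw [hκq0.1, zero_comp]
  have hpb := ses_pullback hκq0 h w'
  have hEpb : E (pullback q0 h) := S.extClosedE _ _ hpb (iInE S hIK'') (cInE S hCX)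
  obtain ⟨r, hr⟩ := ext1CI S hCX hIK'' _ _ hEpb hpb
  obtain ⟨s1, hs1, -⟩ := section_of_retraction hpb hr
  have hiq : (s1 ≫ pullback.fst q0 h) ≫ q0 = h := by
    rw [Category.assoc, pullback.condition, ← Category.assoc, hs1, Category.id_comp]
  have hmi : Mono (s1 ≫ pullback.fst q0 h) := by
    have : Mono ((s1 ≫ pullback.fst q0 h) ≫ q0) := by rw [hiq]; exact hhc.2.mono_f
    exact mono_of_mono _ q0
  have hts := ses_coker_pi hmi
  obtain ⟨v, hv, hVses⟩ := ses_G_chase hκq0 hhc hiq hts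
  have hCK'' : Cc K'' := S.hereditary _ _ hκq0 (iInE S hIK'') hCP'' hCM
  have hEVq : E (cokernel (s1 ≫ pullback.fst q0 h)) :=
    S.extClosedE _ _ hVses (iInE S hIK'') (cInE S hCW)
  have hCVq := Cext S hVses hCK'' hCW hEVq
  have hafib : IsAcyclicFib E Ip q0 := ⟨cInE S hCP'', cInE S hCM, K'', κ'', hIK'', hκq0⟩
  have hWq0 := afibW S hafib hCP'' hCM
  have hWh' : IsWeakEquiv E Cc Ip Zc ((s1 ≫ pullback.fst q0 h) ≫ q0) := by
    rw [hiq]; exact hWh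
  have hWi := sat3 _ q0 hWq0 hWh'
  obtain ⟨-, -, N2, i2, p2, hacof2, hafib2, hi2p2⟩ := hWi
  obtain ⟨-, hCN2, W2, c2, hCW2, hZW2, hi2c2⟩ := hacof2
  obtain ⟨hEN2, -, K2, κ2, hIK2, hκ2p2⟩ := hafib2
  obtain ⟨α2, β2, hαβ2, hβα2, hκα2, hα2fst⟩ := splitFib S hκ2p2 hIK2 hCP'' hEN2
  have hi2' : IsShortExactSeq (i2 ≫ α2) (β2 ≫ c2) := ses_midcomp hi2c2 α2 β2 hαβ2 hβα2
  have hfst2 : (i2 ≫ α2) ≫ biprod.fst = s1 ≫ pullback.fst q0 h := by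
    rw [Category.assoc, hα2fst, hi2p2]
  obtain ⟨w1, hw1c, hKses⟩ := ses_chase_fst hi2' hts hfst2
  have hCK2 : Cc K2 := S.hereditary _ _ hκ2p2 (iInE S hIK2) hCN2 hCP''
  have hZVq := S.zcCokerClosed _ _ hKses hCK2 hCW2 hCVq (S.iSubZ hIK2) hZW2
  exact S.zcCokerClosed _ _ hVses hCK'' hCVq hCW (S.iSubZ hIK'') hZVq

/-- forward direction: saturation implies kernel closure -/
theorem main_fwd
    (sat3 : ∀ {U V T : 𝒜} (f : U ⟶ V) (g : V ⟶ T), IsWeakEquiv E Cc Ip Zc g →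
      IsWeakEquiv E Cc Ip Zc (f ≫ g) → IsWeakEquiv E Cc Ip Zc f)
    {A B C : 𝒜} {φ : A ⟶ B} {ψ : B ⟶ C} (hses : IsShortExactSeq φ ψ)
    (hCA : Cc A) (hCB : Cc B) (hCC : Cc C) (hZB : Zc B) (hZC : Zc C) : Zc A := by
  obtain ⟨K, P, κ, q, hIK, hCP, hκq⟩ := S.complete.2 B (cInE S hCB)
  have w' : κ ≫ q = 0 ≫ φ := by rw [hκq.1, zero_comp]
  have hm := ses_pullback hκq φ w'
  have hfstses := ses_pullback_fst hses hκq.2.epi_g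
  have hCK : Cc K := S.hereditary _ _ hκq (iInE S hIK) hCP hCB
  have hEV : E (pullback q φ) := S.extClosedE _ _ hm (iInE S hIK) (cInE S hCA)
  have hCV := Cext S hm hCK hCA hEV
  have hacof1 : IsAcyclicCofib Cc Zc (pullback.fst q φ) :=
    ⟨hCV, hCP, C, q ≫ ψ, hCC, hZC, hfstses⟩
  have hWfst := acofW S hacof1
  have hacofκ : IsAcyclicCofib Cc Zc κ := ⟨hCK, hCP, B, q, hCB, hZB, hκq⟩
  have hWκ := acofW S hacofκ
  have hWκ2 : IsWeakEquiv E Cc Ip Zc (pullback.lift κ 0 w' ≫ pullback.fst q φ) := by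
    rw [pullback.lift_fst]; exact hWκ
  have hWm := sat3 _ _ hWfst hWκ2
  exact Hprime S sat3 hm hCK hCV hCA hWm

/-- core construction for the backward direction -/
theorem core
    (ker3 : ∀ ⦃U V T : 𝒜⦄ (f : U ⟶ V) (g : V ⟶ T), IsShortExactSeq f g →
      Cc U → Cc V → Cc T → Zc V → Zc T → Zc U)
    {f : X ⟶ Y} {g : Y ⟶ Z} (hCX : Cc X) (hCY : Cc Y) (hCZ : Cc Z) :
    ∃ (Qf QJ Qg : 𝒜) (w1 : Qf ⟶ QJ) (w2 : QJ ⟶ Qg),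
      IsShortExactSeq w1 w2 ∧ Cc Qf ∧ Cc QJ ∧ Cc Qg ∧
      (IsWeakEquiv E Cc Ip Zc f ↔ Zc Qf) ∧ (IsWeakEquiv E Cc Ip Zc g ↔ Zc Qg) ∧
      (IsWeakEquiv E Cc Ip Zc (f ≫ g) ↔ Zc QJ) := by
  obtain ⟨Kf, Qf, jf, πf, hIKf, hCKf, hCYKf, hCQf, hjfses, hjffst, haff⟩ := canonical S hCX hCY
  obtain ⟨Kg, Qg, jg, πg, hIKg, hCKg, hCZKg, hCQg, hjgses, hjgfst, hafg⟩ := canonical S hCY hCZ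
  have hmap := ses_map_fst hjgses Kf
  have hmJ : Mono (jf ≫ biprod.map jg (𝟙 Kf)) := by
    haveI := hjfses.2.mono_f
    haveI := hmap.2.mono_f
    exact mono_comp _ _
  have hJses := ses_coker_pi hmJ
  obtain ⟨w1, w2, hw1, hw2, hN⟩ := ses_noether hjfses hmap hJses
  have hprojses := ses_map_fst (ses_inr_fst Z Kg) Kf
  have hEKgKf : E (Kg ⊞ Kf) :=
    S.extClosedE _ _ (ses_inr_fst Kg Kf) (iInE S hIKf) (iInE S hIKg)
  have hIKgKf : Ip (Kg ⊞ Kf) := Iext S (ses_inr_fst Kg Kf) hIKf hIKg hEKgKf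
  have hE3 : E ((Z ⊞ Kg) ⊞ Kf) := S.extClosedE _ _ hprojses hEKgKf (cInE S hCZ)
  have haf3 : IsAcyclicFib E Ip (biprod.fst ≫ biprod.fst : (Z ⊞ Kg) ⊞ Kf ⟶ Z) :=
    ⟨hE3, cInE S hCZ, Kg ⊞ Kf, biprod.map biprod.inr (𝟙 Kf), hIKgKf, hprojses⟩
  have hC3 : Cc ((Z ⊞ Kg) ⊞ Kf) := Cext S (ses_inr_fst (Z ⊞ Kg) Kf) hCKf hCZKg hE3
  have hEQJ : E (cokernel (jf ≫ biprod.map jg (𝟙 Kf))) :=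
    S.extClosedE _ _ hN (cInE S hCQf) (cInE S hCQg)
  have hCQJ := Cext S hN hCQf hCQg hEQJ
  have hcompJ : (jf ≫ biprod.map jg (𝟙 Kf)) ≫ biprod.fst ≫ biprod.fst = f ≫ g := by
    calc (jf ≫ biprod.map jg (𝟙 Kf)) ≫ biprod.fst ≫ biprod.fst
        = jf ≫ (biprod.map jg (𝟙 Kf) ≫ biprod.fst) ≫ biprod.fst := by
          simp only [Category.assoc]
      _ = jf ≫ (biprod.fst ≫ jg) ≫ biprod.fst := by rw [biprod.map_fst]
      _ = (jf ≫ biprod.fst) ≫ (jg ≫ biprod.fst) := by simp only [Category.assoc]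
      _ = f ≫ g := by rw [hjffst, hjgfst]
  refine ⟨Qf, cokernel (jf ≫ biprod.map jg (𝟙 Kf)), Qg, w1, w2, hN, hCQf, hCQJ, hCQg,
    ⟨?_, ?_⟩, ⟨?_, ?_⟩, ⟨?_, ?_⟩⟩
  · intro hWf; exact lemF S ker3 hWf hjfses hCQf hCYKf haff hjffst
  · intro hZQf
    exact ⟨hCX, hCY, Y ⊞ Kf, jf, biprod.fst,
      ⟨hCX, hCYKf, Qf, πf, hCQf, hZQf, hjfses⟩, haff, hjffst⟩
  · intro hWg; exact lemF S ker3 hWg hjgses hCQg hCZKg hafg hjgfst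
  · intro hZQg
    exact ⟨hCY, hCZ, Z ⊞ Kg, jg, biprod.fst,
      ⟨hCY, hCZKg, Qg, πg, hCQg, hZQg, hjgses⟩, hafg, hjgfst⟩
  · intro hWfg; exact lemF S ker3 hWfg hJses hCQJ hC3 haf3 hcompJ
  · intro hZQJ
    exact ⟨hCX, hCZ, (Z ⊞ Kg) ⊞ Kf, jf ≫ biprod.map jg (𝟙 Kf), biprod.fst ≫ biprod.fst,
      ⟨hCX, hC3, _, cokernel.π _, hCQJ, hZQJ, hJses⟩, haf3, hcompJ⟩

end Setup

end Tool

/-- **Saturation.** In the standing setup, the class of weak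
equivalences satisfies the saturation (2-out-of-3) axiom if and only if
`Zc ∩ Cc` has the 2-out-of-3 property for short exact sequences in `Cc`. -/
theorem saturation_iff_two_out_of_three
    (E Cc Ip Zc : 𝒜 → Prop) (S : CotorsionSetup E Cc Ip Zc) :
    (∀ ⦃X Y Z : 𝒜⦄ (f : X ⟶ Y) (g : Y ⟶ Z),
      (IsWeakEquiv E Cc Ip Zc f → IsWeakEquiv E Cc Ip Zc g →
        IsWeakEquiv E Cc Ip Zc (f ≫ g)) ∧
      (IsWeakEquiv E Cc Ip Zc f → IsWeakEquiv E Cc Ip Zc (f ≫ g) →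
        IsWeakEquiv E Cc Ip Zc g) ∧
      (IsWeakEquiv E Cc Ip Zc g → IsWeakEquiv E Cc Ip Zc (f ≫ g) →
        IsWeakEquiv E Cc Ip Zc f)) ↔
    (∀ ⦃X Y Z : 𝒜⦄ (f : X ⟶ Y) (g : Y ⟶ Z), IsShortExactSeq f g →
      Cc X → Cc Y → Cc Z →
      ((Zc X → Zc Y → Zc Z) ∧ (Zc X → Zc Z → Zc Y) ∧ (Zc Y → Zc Z → Zc X))) := by
  constructor
  · intro sat X Y Z f g hses hCX hCY hCZ
    have sat3 : ∀ {U V T : 𝒜} (f' : U ⟶ V) (g' : V ⟶ T), IsWeakEquiv E Cc Ip Zc g' →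
        IsWeakEquiv E Cc Ip Zc (f' ≫ g') → IsWeakEquiv E Cc Ip Zc f' :=
      fun f' g' => (sat f' g').2.2
    exact ⟨fun hZX hZY => S.zcCokerClosed _ _ hses hCX hCY hCZ hZX hZY,
      fun hZX hZZ => S.zcExtClosed _ _ hses hCX hCY hCZ hZX hZZ,
      fun hZY hZZ => Tool.main_fwd S sat3 hses hCX hCY hCZ hZY hZZ⟩
  · intro h23 X Y Z f g
    have ker3 : ∀ ⦃U V T : 𝒜⦄ (f' : U ⟶ V) (g' : V ⟶ T), IsShortExactSeq f' g' →
        Cc U → Cc V → Cc T → Zc V → Zc T → Zc U :=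
      fun U V T f' g' hs hU hV hT => (h23 f' g' hs hU hV hT).2.2
    refine ⟨?_, ?_, ?_⟩
    · intro hWf hWg
      obtain ⟨Qf, QJ, Qg, w1, w2, hN, hCQf, hCQJ, hCQg, hf, hg, hfg⟩ :=
        Tool.core S ker3 (f := f) (g := g) hWf.1 hWf.2.1 hWg.2.1
      exact hfg.2 (S.zcExtClosed _ _ hN hCQf hCQJ hCQg (hf.1 hWf) (hg.1 hWg))
    · intro hWf hWfg
      obtain ⟨Qf, QJ, Qg, w1, w2, hN, hCQf, hCQJ, hCQg, hf, hg, hfg⟩ :=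
        Tool.core S ker3 (f := f) (g := g) hWf.1 hWf.2.1 hWfg.2.1
      exact hg.2 (S.zcCokerClosed _ _ hN hCQf hCQJ hCQg (hf.1 hWf) (hfg.1 hWfg))
    · intro hWg hWfg
      obtain ⟨Qf, QJ, Qg, w1, w2, hN, hCQf, hCQJ, hCQg, hf, hg, hfg⟩ :=
        Tool.core S ker3 (f := f) (g := g) hWfg.1 hWg.1 hWg.2.1
      exact hf.2 (ker3 _ _ hN hCQf hCQJ hCQg (hfg.1 hWfg) (hg.1 hWg))
end
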